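/- arXiv:2409.09420 — 9 statements merged into one kernel-verified Lean document; each statement's English description precedes it below -/
import Mathlib

section
/- For every real number κ with 0 < κ < 1, the infimum over all d1 ∈ ℕ, d1 ≥ 1, and all d2 ∈ ℕ with d2 > 2 of the quantity I_{q(d1/2, d2/2, κ)}(d1/2, d2/2) — that is, of P(X_{d1,d2} ≤ κ E[X_{d1,d2}]) for an F-random variable X_{d1,d2} — equals 0. -/
/-- The (complete) Beta function `B(a,b) = ∫₀¹ t^(a-1) (1-t)^(b-1) dt`. -/
noncomputable def betaFun (a b : ℝ) : ℝ :=
  ∫ t in (0:ℝ)..1, t ^ (a - 1) * (1 - t) ^ (b - 1)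

/-- The regularized incomplete Beta function
`I_x(a,b) = (∫₀^x t^(a-1) (1-t)^(b-1) dt) / B(a,b)`. -/
noncomputable def regIncBeta (x a b : ℝ) : ℝ :=
  (∫ t in (0:ℝ)..x, t ^ (a - 1) * (1 - t) ^ (b - 1)) / betaFun a b

/-- `q(a,b,κ) = κa/(κa + b - 1)`. -/
noncomputable def qF (a b κ : ℝ) : ℝ := κ * a / (κ * a + b - 1)

lemma regIncBeta_qF_nonneg (a b κ : ℝ) (ha : 0 < a) (hb : 1 < b) (hκ : 0 < κ) :
    0 ≤ regIncBeta (qF a b κ) a b := by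
  have hden : 0 < κ * a + b - 1 := by nlinarith
  have hq0 : 0 ≤ qF a b κ := div_nonneg (by positivity) hden.le
  have hq1 : qF a b κ ≤ 1 := by
    rw [qF, div_le_one hden]; nlinarith
  apply div_nonneg
  · apply intervalIntegral.integral_nonneg hq0
    intro u hu
    exact mul_nonneg (Real.rpow_nonneg hu.1 _)
      (Real.rpow_nonneg (by linarith [le_trans hu.2 hq1]) _)
  · apply intervalIntegral.integral_nonneg zero_le_one
    intro u hu
    exact mul_nonneg (Real.rpow_nonneg hu.1 _) (Real.rpow_nonneg (by linarith [hu.2]) _)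

set_option maxHeartbeats 1000000 in
lemma ratio_bound (κ c δ a : ℝ) (hκ0 : 0 < κ)
    (hc0 : 0 < c) (hδ0 : 0 < δ) (hceq : c = 1/2 - 2*δ)
    (ha : 3/2 ≤ a) (hqc : qF a a κ ≤ c) :
    regIncBeta (qF a a κ) a a ≤ (c*(1-c)/(1/4-δ^2))^(a-1) / δ := by
  have hcc : c < 1/2 := by linarith
  have hδ4 : δ < 1/4 := by linarith
  set m : ℝ := 1/4 - δ^2 with hm_def
  have hδδ : δ*δ < 1/16 := by nlinarith [mul_lt_mul'' hδ4 hδ4 hδ0.le hδ0.le]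
  have hm0 : 0 < m := by rw [hm_def]; nlinarith [hδδ]
  have hcm : c*(1-c) < m := by
    have h3 : m - c*(1-c) = 3*δ^2 := by rw [hm_def, hceq]; ring
    have : (0:ℝ) < δ^2 := by positivity
    linarith
  set r : ℝ := c*(1-c)/m with hr_def
  have hr0 : 0 < r := div_pos (mul_pos hc0 (by linarith)) hm0
  have hp : 0 < a - 1 := by linarith
  set q : ℝ := qF a a κ with hq_def
  have hdq : 0 < κ*a + a - 1 := by nlinarith
  have hq0 : 0 < q := by
    rw [hq_def, qF]
    exact div_pos (mul_pos hκ0 (by linarith)) hdq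
  have hq2 : q ≤ 1/2 := by linarith
  have hqq_cc : q*(1-q) ≤ c*(1-c) := by nlinarith
  set f : ℝ → ℝ := fun t => t ^ (a-1) * (1-t) ^ (a-1) with hf_def
  have hcontf : Continuous f := by
    have h1 : Continuous fun t:ℝ => t ^ (a-1) :=
      Continuous.rpow_const continuous_id (fun x => Or.inr hp.le)
    have h2 : Continuous fun t:ℝ => (1-t) ^ (a-1) :=
      Continuous.rpow_const (by continuity) (fun x => Or.inr hp.le)
    exact h1.mul h2
  have hI : ∀ u v : ℝ, IntervalIntegrable f MeasureTheory.volume u v :=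
    fun u v => hcontf.intervalIntegrable u v
  have hfprod : ∀ t : ℝ, 0 ≤ t → t ≤ 1 → f t = (t*(1-t))^(a-1) := by
    intro t ht h1
    rw [hf_def]
    exact (Real.mul_rpow ht (by linarith)).symm
  -- numerator bound
  have hccnn : (0:ℝ) ≤ c*(1-c) := by nlinarith
  have hnum : (∫ t in (0:ℝ)..q, f t) ≤ (c*(1-c))^(a-1) := by
    calc (∫ t in (0:ℝ)..q, f t)
        ≤ ∫ _t in (0:ℝ)..q, (c*(1-c))^(a-1) := by
          apply intervalIntegral.integral_mono_on hq0.le (hI _ _) intervalIntegrable_const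
          intro t ht
          rw [hfprod t ht.1 (by linarith [ht.2])]
          apply Real.rpow_le_rpow (by nlinarith [ht.1, ht.2]) ?_ hp.le
          nlinarith [ht.1, ht.2]
      _ = q * (c*(1-c))^(a-1) := by
          simp [intervalIntegral.integral_const, smul_eq_mul]
      _ ≤ 1 * (c*(1-c))^(a-1) :=
          mul_le_mul_of_nonneg_right (by linarith) (Real.rpow_nonneg hccnn _)
      _ = (c*(1-c))^(a-1) := one_mul _
  -- denominator bound
  have hden : δ * m^(a-1) ≤ betaFun a a := by
    have e1 : (∫ t in (0:ℝ)..(1/2:ℝ), f t)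
        = (∫ t in (0:ℝ)..(1/2-δ:ℝ), f t) + ∫ t in (1/2-δ:ℝ)..(1/2:ℝ), f t :=
      (intervalIntegral.integral_add_adjacent_intervals (hI _ _) (hI _ _)).symm
    have e2 : (∫ t in (0:ℝ)..(1:ℝ), f t)
        = (∫ t in (0:ℝ)..(1/2:ℝ), f t) + ∫ t in (1/2:ℝ)..(1:ℝ), f t :=
      (intervalIntegral.integral_add_adjacent_intervals (hI _ _) (hI _ _)).symm
    have h1 : (0:ℝ) ≤ ∫ t in (0:ℝ)..(1/2-δ:ℝ), f t := by
      apply intervalIntegral.integral_nonneg (by linarith)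
      intro u hu
      exact mul_nonneg (Real.rpow_nonneg hu.1 _)
        (Real.rpow_nonneg (by linarith [hu.2]) _)
    have h3 : (0:ℝ) ≤ ∫ t in (1/2:ℝ)..(1:ℝ), f t := by
      apply intervalIntegral.integral_nonneg (by linarith)
      intro u hu
      exact mul_nonneg (Real.rpow_nonneg (by linarith [hu.1]) _)
        (Real.rpow_nonneg (by linarith [hu.2]) _)
    have hmid : δ * m^(a-1) ≤ ∫ t in (1/2-δ:ℝ)..(1/2:ℝ), f t := by
      have hconstint : (∫ _t in (1/2-δ:ℝ)..(1/2:ℝ), m^(a-1)) = δ * m^(a-1) := by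
        rw [intervalIntegral.integral_const, smul_eq_mul]; ring
      rw [← hconstint]
      apply intervalIntegral.integral_mono_on (by linarith) intervalIntegrable_const (hI _ _)
      intro t ht
      have ht1 := ht.1
      have ht2 := ht.2
      rw [hfprod t (by linarith) (by linarith)]
      apply Real.rpow_le_rpow hm0.le ?_ hp.le
      have hsq : (1/2 - t)^2 ≤ δ^2 := by nlinarith
      have htt : t*(1-t) = 1/4 - (1/2-t)^2 := by ring
      rw [hm_def, htt]
      linarith
    have hbeq : betaFun a a = ∫ t in (0:ℝ)..(1:ℝ), f t := rfl
    rw [hbeq, e2, e1]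
    linarith
  -- conclude
  have hmp : (0:ℝ) < m^(a-1) := Real.rpow_pos_of_pos hm0 _
  have hD : (0:ℝ) < δ * m^(a-1) := mul_pos hδ0 hmp
  have hmain : regIncBeta q a a ≤ (c*(1-c))^(a-1) / (δ * m^(a-1)) := by
    rw [regIncBeta]
    exact div_le_div₀ (Real.rpow_nonneg hccnn _) hnum hD hden
  have hrm : (c*(1-c))^(a-1) = r^(a-1) * m^(a-1) := by
    rw [← Real.mul_rpow hr0.le hm0.le]
    congr 1
    rw [hr_def]
    field_simp
  have hrhs : (c*(1-c))^(a-1) / (δ * m^(a-1)) = r^(a-1) / δ := by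
    rw [hrm, mul_comm (r^(a-1)) (m^(a-1)), mul_comm δ (m^(a-1)),
      mul_div_mul_left _ _ hmp.ne']
  calc regIncBeta q a a ≤ (c*(1-c))^(a-1) / (δ * m^(a-1)) := hmain
    _ = r^(a-1)/δ := hrhs

set_option maxHeartbeats 1000000 in
lemma key (κ : ℝ) (hκ0 : 0 < κ) (hκ1 : κ < 1) {ε : ℝ} (hε : 0 < ε) :
    ∃ n : ℕ, 3 ≤ n ∧
      regIncBeta (qF ((n:ℝ)/2) ((n:ℝ)/2) κ) ((n:ℝ)/2) ((n:ℝ)/2) < ε := by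
  have hκ1' : (0:ℝ) < κ + 1 := by linarith
  set c : ℝ := (3*κ+1)/(4*κ+4) with hc_def
  have hc0 : 0 < c := by positivity
  have hcc : c < 1/2 := by
    rw [hc_def, div_lt_iff₀ (by linarith)]; linarith
  have hc4 : c * (κ + 1) = (3*κ+1)/4 := by
    rw [hc_def]; field_simp
  set δ : ℝ := (1-κ)/(8*κ+8) with hδ_def
  have hδ0 : 0 < δ := div_pos (by linarith) (by linarith)
  have hceq : c = 1/2 - 2*δ := by
    rw [hδ_def, hc_def]; field_simp; ring
  set m : ℝ := 1/4 - δ^2 with hm_def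
  have hδ4 : δ < 1/4 := by linarith
  have hδδ : δ*δ < 1/16 := by nlinarith [mul_lt_mul'' hδ4 hδ4 hδ0.le hδ0.le]
  have hm0 : 0 < m := by rw [hm_def]; nlinarith [hδδ]
  have hcm : c*(1-c) < m := by
    have h3 : m - c*(1-c) = 3*δ^2 := by rw [hm_def, hceq]; ring
    have : (0:ℝ) < δ^2 := by positivity
    linarith
  set r : ℝ := c*(1-c)/m with hr_def
  have hr0 : 0 < r := div_pos (mul_pos hc0 (by linarith)) hm0
  have hr1 : r < 1 := (div_lt_one hm0).mpr hcm
  obtain ⟨k, hk⟩ := exists_pow_lt_of_lt_one (mul_pos hδ0 hε) hr1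
  set A : ℝ := 4*c/(1-κ) with hA_def
  refine ⟨max 3 (max (⌈2*A⌉₊ + 1) (2*k+2)), le_max_left _ _, ?_⟩
  set n : ℕ := max 3 (max (⌈2*A⌉₊ + 1) (2*k+2)) with hn_def
  have hn3 : 3 ≤ n := le_max_left _ _
  have hn3' : (3:ℝ) ≤ (n:ℝ) := by exact_mod_cast hn3
  have ha32 : (3:ℝ)/2 ≤ (n:ℝ)/2 := by linarith
  set a : ℝ := (n:ℝ)/2 with ha_def
  have hp : 0 < a - 1 := by linarith
  have haA : A ≤ a := by
    have h1 : (⌈2*A⌉₊ + 1 : ℕ) ≤ n := le_trans (le_max_left _ _) (le_max_right _ _)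
    have h2 : (2*A : ℝ) ≤ (⌈2*A⌉₊ : ℝ) := Nat.le_ceil _
    have h3 : ((⌈2*A⌉₊ + 1 : ℕ) : ℝ) ≤ (n:ℝ) := by exact_mod_cast h1
    push_cast at h3
    rw [ha_def]; linarith
  have hak : (k:ℝ) ≤ a - 1 := by
    have h1 : (2*k+2 : ℕ) ≤ n := le_trans (le_max_right _ _) (le_max_right _ _)
    have h3 : ((2*k+2 : ℕ) : ℝ) ≤ (n:ℝ) := by exact_mod_cast h1
    push_cast at h3
    rw [ha_def]; linarith
  have hdq : 0 < κ*a + a - 1 := by nlinarith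
  have hqc : qF a a κ ≤ c := by
    rw [qF, div_le_iff₀ hdq]
    have h4c : 4*c ≤ a*(1-κ) := by
      rw [hA_def] at haA
      exact (div_le_iff₀ (by linarith)).mp haA
    have keyeq : c * (κ*a + a - 1) = a*(3*κ+1)/4 - c := by
      linear_combination a * hc4
    linarith
  have hbound := ratio_bound κ c δ a hκ0 hc0 hδ0 hceq ha32 hqc
  have hfin : (c*(1-c)/(1/4-δ^2))^(a-1) / δ < ε := by
    rw [div_lt_iff₀ hδ0]
    have hre : c*(1-c)/(1/4-δ^2) = r := rfl
    rw [hre]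
    calc r^(a-1) ≤ r^((k:ℕ):ℝ) :=
          Real.rpow_le_rpow_of_exponent_ge hr0 hr1.le hak
      _ = r^k := Real.rpow_natCast r k
      _ < δ*ε := hk
      _ = ε*δ := mul_comm _ _
  exact lt_of_le_of_lt hbound hfin


/-- For `0 < κ < 1`, the infimum over `d1 ≥ 1` and `d2 > 2` of
`P(X_{d1,d2} ≤ κ E[X_{d1,d2}]) = I_{q(d1/2, d2/2, κ)}(d1/2, d2/2)` equals `0`. -/
theorem inf_F_prob_eq_zero_of_lt_one (κ : ℝ) (hκ0 : 0 < κ) (hκ1 : κ < 1) :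
    sInf { y : ℝ | ∃ d1 d2 : ℕ, 1 ≤ d1 ∧ 2 < d2 ∧
      y = regIncBeta (qF ((d1 : ℝ) / 2) ((d2 : ℝ) / 2) κ) ((d1 : ℝ) / 2) ((d2 : ℝ) / 2) }
      = 0 := by
  set S := { y : ℝ | ∃ d1 d2 : ℕ, 1 ≤ d1 ∧ 2 < d2 ∧
      y = regIncBeta (qF ((d1 : ℝ) / 2) ((d2 : ℝ) / 2) κ) ((d1 : ℝ) / 2) ((d2 : ℝ) / 2) }
    with hS_def
  have hlb : ∀ y ∈ S, (0:ℝ) ≤ y := by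
    rintro y ⟨d1, d2, h1, h2, rfl⟩
    have h1' : (1:ℝ) ≤ (d1:ℝ) := by exact_mod_cast h1
    have h2' : (3:ℝ) ≤ (d2:ℝ) := by exact_mod_cast h2
    exact regIncBeta_qF_nonneg _ _ _ (by linarith) (by linarith) hκ0
  have hne : S.Nonempty :=
    ⟨_, 1, 3, le_refl 1, by norm_num, rfl⟩
  have hbdd : BddBelow S := ⟨0, hlb⟩
  refine le_antisymm ?_ (le_csInf hne hlb)
  by_contra h
  push_neg at h
  obtain ⟨n, hn3, hlt⟩ := key κ hκ0 hκ1 h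
  have hmem : regIncBeta (qF ((n:ℝ)/2) ((n:ℝ)/2) κ) ((n:ℝ)/2) ((n:ℝ)/2) ∈ S :=
    ⟨n, n, by omega, by omega, rfl⟩
  exact absurd (csInf_le hbdd hmem) (not_le.mpr hlt)
end

section
/- For every d1 ∈ ℕ, d1 ≥ 1, and every d2 ∈ ℕ with d2 > 2, one has the strict inequality I_{q(d1/2, d2/2, 1)}(d1/2, d2/2) > 1/2; that is, an F-random variable X_{d1,d2} satisfies P(X_{d1,d2} ≤ E[X_{d1,d2}]) > 1/2. -/
open Real Set Filter Topology MeasureTheory intervalIntegral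

lemma two_log_lt {r : ℝ} (hr : 1 < r) : 2 * Real.log r < r - 1/r := by
  have key : StrictMonoOn (fun x : ℝ => x - 1/x - 2 * Real.log x) (Ici 1) := by
    apply strictMonoOn_of_deriv_pos (convex_Ici 1)
    · fun_prop (disch := intro x hx; simp at hx; positivity)
    · intro x hx
      rw [interior_Ici] at hx
      rw [mem_Ioi] at hx
      have hx0 : (0:ℝ) < x := lt_trans one_pos hx
      have : HasDerivAt (fun x : ℝ => x - 1/x - 2 * Real.log x)
          (1 - (-1/x^2) - 2 * (1/x)) x := by
        have h1 : HasDerivAt (fun x : ℝ => 1/x) (-1/x^2) x := by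
          simpa [neg_div, one_div] using (hasDerivAt_inv (ne_of_gt hx0))
        have h2 : HasDerivAt Real.log (1/x) x := by
          simpa [one_div] using Real.hasDerivAt_log (ne_of_gt hx0)
        exact ((hasDerivAt_id x).sub h1).sub ((h2.const_mul 2))
      rw [this.deriv]
      have h1 : 1/x < 1 := by rw [div_lt_one hx0]; linarith [hx]
      have : (1 - 1/x)^2 > 0 := by nlinarith
      have hexp : 1 - (-1/x^2) - 2*(1/x) = (1 - 1/x)^2 := by
        field_simp; ring
      rw [hexp]; exact this
  have := key (self_mem_Ici) (le_of_lt hr) hr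
  simp only [Real.log_one] at this
  rw [one_div]
  norm_num at this
  linarith

lemma g_mono : StrictMonoOn (fun r : ℝ => (r+1) * Real.log r / (r-1)) (Ioi 1) := by
  apply strictMonoOn_of_deriv_pos (convex_Ioi 1)
  · apply ContinuousOn.div
    · fun_prop (disch := intro x hx; simp at hx; positivity)
    · fun_prop
    · intro x hx; simp at hx; intro hc; linarith [sub_eq_zero.mp hc]
  · intro x hx
    rw [interior_Ioi] at hx
    simp only [mem_Ioi] at hx
    have hx0 : (0:ℝ) < x := lt_trans one_pos hx
    have hx1 : x - 1 ≠ 0 := by intro hc; linarith [sub_eq_zero.mp hc]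
    have hd : HasDerivAt (fun r : ℝ => (r+1) * Real.log r / (r-1))
        (((1 * Real.log x + (x+1) * (1/x)) * (x-1) - (x+1) * Real.log x * 1) / (x-1)^2) x := by
      have h1 : HasDerivAt (fun r : ℝ => (r+1) * Real.log r) (1 * Real.log x + (x+1) * (1/x)) x := by
        have := ((hasDerivAt_id x).add_const 1).mul (Real.hasDerivAt_log (ne_of_gt hx0))
        rw [one_div]; exact this
      have h2 : HasDerivAt (fun r : ℝ => r - 1) 1 x := (hasDerivAt_id x).sub_const 1
      exact h1.div h2 hx1
    rw [hd.deriv]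
    have hnum : (1 * Real.log x + (x+1) * (1/x)) * (x-1) - (x+1) * Real.log x * 1
        = (x - 1/x) - 2 * Real.log x := by field_simp; ring
    rw [hnum]
    have := two_log_lt hx
    have hden : (0:ℝ) < (x-1)^2 := by positivity
    apply div_pos (by linarith) hden



lemma Gp {s p : ℝ} (hs : 0 < s) (hsp : s < p) :
    (p+s+2) * Real.log ((1+p)/(1+s)) < (p+s) * Real.log (p/s) := by
  set r := p/s with hr_def
  set r' := (1+p)/(1+s) with hr'_def
  have hp : 0 < p := lt_trans hs hsp
  have h1s : (0:ℝ) < 1 + s := by linarith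
  have hr1 : 1 < r := (one_lt_div hs).mpr hsp
  have hr'1 : 1 < r' := (one_lt_div h1s).mpr (by linarith)
  have hr'r : r' < r := by
    rw [hr'_def, hr_def, div_lt_div_iff₀ h1s hs]
    nlinarith
  have hg := g_mono (mem_Ioi.mpr hr'1) (mem_Ioi.mpr hr1) hr'r
  simp only at hg
  have h2 : s * r = p := by rw [hr_def]; field_simp
  have h2' : (1+s) * r' = 1 + p := by rw [hr'_def]; field_simp
  clear_value r r'
  set L := Real.log r with hL_def
  set L' := Real.log r' with hL'_def
  set G := (r+1) * L / (r-1) with hG_def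
  set G' := (r'+1) * L' / (r'-1) with hG'_def
  have hrne : r - 1 ≠ 0 := by intro hc; rw [sub_eq_zero] at hc; rw [hc] at hr1; exact lt_irrefl _ hr1
  have hr'ne : r' - 1 ≠ 0 := by intro hc; rw [sub_eq_zero] at hc; rw [hc] at hr'1; exact lt_irrefl _ hr'1
  have hG1 : G * (r - 1) = (r+1) * L := div_mul_cancel₀ _ hrne
  have hG'1 : G' * (r' - 1) = (r'+1) * L' := div_mul_cancel₀ _ hr'ne
  clear_value L L' G G'
  have e1 : (p+s) * L = (p - s) * G := by linear_combination (-s) * hG1 + (G - L) * h2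
  have e2 : (p+s+2) * L' = (p - s) * G' := by linear_combination (-(1+s)) * hG'1 + (G' - L') * h2'
  rw [e1, e2]
  have hps : 0 < p - s := by linarith
  exact (mul_lt_mul_iff_right₀ hps).mpr hg

lemma Gtu {u t : ℝ} (hu : 0 < u) (hut : u < t) (ht : t < 1) :
    2*(1-t)*(1-u) * Real.log ((1-u)/(1-t)) < (t+u-2*t*u) * Real.log (t/u) := by
  have ht0 : 0 < t := lt_trans hu hut
  have h1t : 0 < 1 - t := by linarith
  have h1u : 0 < 1 - u := by linarith
  have h1tne : (1:ℝ) - t ≠ 0 := ne_of_gt h1t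
  have h1une : (1:ℝ) - u ≠ 0 := ne_of_gt h1u
  have hune : u ≠ 0 := ne_of_gt hu
  set p := t/(1-t) with hp_def
  set s := u/(1-u) with hs_def
  have hs : 0 < s := div_pos (by linarith) h1u
  have hp0 : 0 < p := div_pos ht0 h1t
  have hsp : s < p := by
    rw [hp_def, hs_def, div_lt_div_iff₀ h1u h1t]
    nlinarith
  have key := Gp hs hsp
  have hp1 : p * (1-t) = t := div_mul_cancel₀ _ h1tne
  have hs1 : s * (1-u) = u := div_mul_cancel₀ _ h1une
  have hp2 : 1 + p = 1/(1-t) := by rw [hp_def]; field_simp; ring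
  have hs2 : 1 + s = 1/(1-u) := by rw [hs_def]; field_simp; ring
  have hlp : Real.log p = Real.log t - Real.log (1-t) := by
    rw [hp_def]; exact Real.log_div (ne_of_gt ht0) h1tne
  have hls : Real.log s = Real.log u - Real.log (1-u) := by
    rw [hs_def]; exact Real.log_div hune h1une
  clear_value p s
  have e1 : (1+p)/(1+s) = (1-u)/(1-t) := by
    rw [hp2, hs2, div_div_div_comm, one_div_one, one_div_div]
  have e3 : Real.log (p/s) = Real.log (t/u) + Real.log ((1-u)/(1-t)) := by
    rw [Real.log_div (ne_of_gt hp0) (ne_of_gt hs),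
        Real.log_div (ne_of_gt ht0) hune,
        Real.log_div h1une h1tne, hlp, hls]
    ring
  rw [e1, e3] at key
  set L := Real.log (t/u)
  set L' := Real.log ((1-u)/(1-t))
  clear_value L L'
  have hD : (0:ℝ) < (1-t)*(1-u) := by positivity
  have k2 := (mul_lt_mul_iff_left₀ hD).mpr key
  have e4 : (p+s)*((1-t)*(1-u)) = t+u-2*t*u := by
    linear_combination (1-u)*hp1 + (1-t)*hs1
  have e5 : (p+s+2)*((1-t)*(1-u)) = 2-t-u := by
    linear_combination (1-u)*hp1 + (1-t)*hs1
  have r1 : ((p+s+2) * L') * ((1-t)*(1-u)) = (2-t-u)*L' := by linear_combination L' * e5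
  have r2 : ((p+s)*(L+L'))*((1-t)*(1-u)) = (t+u-2*t*u)*(L+L') := by
    linear_combination (L+L')*e4
  rw [r1, r2] at k2
  have r3 : 2*(1-t)*(1-u)*L' = (2-t-u)*L' - (t+u-2*t*u)*L' := by ring
  rw [r3]; linarith

lemma key_ineq {a b u t : ℝ} (ha : 0 < a) (hb : 1 < b) (hu : 0 < u) (hut : u < t) (ht : t < 1)
    (hcon : a * Real.log u + (b-1) * Real.log (1-u) = a * Real.log t + (b-1) * Real.log (1-t)) :
    (a - (a+b-1)*u) * (1-t) < ((a+b-1)*t - a) * (1-u) := by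
  have h1t : 0 < 1 - t := by linarith
  have h1u : 0 < 1 - u := by linarith
  have hL : Real.log (t/u) = Real.log t - Real.log u := Real.log_div (by linarith) (ne_of_gt hu)
  have hL' : Real.log ((1-u)/(1-t)) = Real.log (1-u) - Real.log (1-t) :=
    Real.log_div (ne_of_gt h1u) (ne_of_gt h1t)
  have hL'pos : 0 < Real.log ((1-u)/(1-t)) := Real.log_pos ((one_lt_div h1t).mpr (by linarith))
  have hc2 : a * Real.log (t/u) = (b-1) * Real.log ((1-u)/(1-t)) := by
    rw [hL, hL']; linarith
  have hG := Gtu hu hut ht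
  set L := Real.log (t/u)
  set L' := Real.log ((1-u)/(1-t))
  clear_value L L'
  have h5 : a * (2*(1-t)*(1-u) * L') < a * ((t+u-2*t*u) * L) := (mul_lt_mul_iff_right₀ ha).mpr hG
  have h6 : a * ((t+u-2*t*u) * L) = ((b-1)*(t+u-2*t*u)) * L' := by
    linear_combination (t+u-2*t*u) * hc2
  rw [h6] at h5
  have h7 : (2*a*((1-t)*(1-u))) * L' < ((b-1)*(t+u-2*t*u)) * L' := by
    have he : a * (2*(1-t)*(1-u) * L') = (2*a*((1-t)*(1-u))) * L' := by ring
    linarith [he ▸ h5]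
  have h8 : 2*a*((1-t)*(1-u)) < (b-1)*(t+u-2*t*u) := (mul_lt_mul_iff_left₀ hL'pos).mp h7
  nlinarith [h8]

namespace FDist

noncomputable def f (a b t : ℝ) : ℝ := t ^ (a-1) * (1-t) ^ (b-1)
noncomputable def h (a b t : ℝ) : ℝ := t ^ a * (1-t) ^ (b-1)
noncomputable def d (a b t : ℝ) : ℝ := t ^ (a-1) * (1-t) ^ (b-2) * (a - (a+b-1)*t)
noncomputable def q (a b : ℝ) : ℝ := a / (a+b-1)

variable {a b : ℝ}

lemma hq0 (ha : 0 < a) (hb : 1 < b) : 0 < q a b := div_pos ha (by linarith)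
lemma hq1 (ha : 0 < a) (hb : 1 < b) : q a b < 1 :=
  (div_lt_one (by linarith)).mpr (by linarith)

lemma h_zero (ha : 0 < a) : h a b 0 = 0 := by
  unfold h
  rw [Real.zero_rpow (ne_of_gt ha)]
  ring

lemma h_one (hb : 1 < b) : h a b 1 = 0 := by
  unfold h
  rw [show (1:ℝ) - 1 = 0 by ring, Real.zero_rpow (by intro hc; rw [sub_eq_zero] at hc; rw [← hc] at hb; exact lt_irrefl _ hb)]
  ring

lemma h_pos {t : ℝ} (h0 : 0 < t) (h1 : t < 1) : 0 < h a b t := by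
  have : 0 < 1 - t := by linarith
  unfold h; positivity

lemma f_pos {t : ℝ} (h0 : 0 < t) (h1 : t < 1) : 0 < f a b t := by
  have : 0 < 1 - t := by linarith
  unfold f; positivity

lemma h_nonneg {t : ℝ} (h0 : 0 ≤ t) (h1 : t ≤ 1) : 0 ≤ h a b t := by
  have : 0 ≤ 1 - t := by linarith
  unfold h; positivity

lemma h_cont (ha : 0 < a) (hb : 1 < b) : Continuous (h a b) := by
  apply Continuous.mul
  · exact continuous_id.rpow_const (fun x => Or.inr (le_of_lt ha))
  · exact (continuous_const.sub continuous_id).rpow_const (fun x => Or.inr (by linarith))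

lemma f_contAt {t : ℝ} (h0 : 0 < t) (h1 : t < 1) : ContinuousAt (f a b) t := by
  have h1t : (0:ℝ) < 1 - t := by linarith
  apply ContinuousAt.mul
  · exact Real.continuousAt_rpow_const _ _ (Or.inl (ne_of_gt h0))
  · exact (Real.continuousAt_rpow_const _ _ (Or.inl (ne_of_gt h1t))).comp
      ((continuous_const.sub continuous_id).continuousAt)

lemma h_deriv {t : ℝ} (h0 : 0 < t) (h1 : t < 1) : HasDerivAt (h a b) (d a b t) t := by
  have h1t : 0 < 1 - t := by linarith
  have d1 : HasDerivAt (fun x : ℝ => x ^ a) (a * t ^ (a-1)) t :=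
    Real.hasDerivAt_rpow_const (Or.inl (ne_of_gt h0))
  have d2i : HasDerivAt (fun x : ℝ => 1 - x) (-1) t := by
    exact (hasDerivAt_id' t).const_sub 1
  have d2o : HasDerivAt (fun y : ℝ => y ^ (b-1)) ((b-1) * (1-t) ^ (b-1-1)) (1-t) :=
    Real.hasDerivAt_rpow_const (Or.inl (ne_of_gt h1t))
  have d2 : HasDerivAt (fun x : ℝ => (1-x) ^ (b-1)) ((b-1) * (1-t) ^ (b-1-1) * (-1)) t :=
    d2o.comp t d2i
  have dm := d1.mul d2
  have e1 : t ^ a = t ^ (a-1) * t := by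
    rw [show a = (a-1) + 1 by ring, Real.rpow_add h0, Real.rpow_one]; ring_nf
  have e2 : (1-t) ^ (b-1) = (1-t) ^ (b-2) * (1-t) := by
    rw [show b-1 = (b-2) + 1 by ring, Real.rpow_add h1t, Real.rpow_one]
  have heq : a * t ^ (a-1) * (1-t)^(b-1) + t^a * ((b-1) * (1-t)^(b-1-1) * (-1)) = d a b t := by
    rw [e2, show b-1-1 = b-2 by ring, e1]
    unfold d
    ring
  rw [heq] at dm
  exact dm

lemma d_pos (ha : 0 < a) (hb : 1 < b) {t : ℝ} (h0 : 0 < t) (h1 : t < q a b) : 0 < d a b t := by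
  have h1t : 0 < 1 - t := by linarith [lt_trans h1 (hq1 ha hb)]
  unfold q at h1
  have h2 := (lt_div_iff₀ (show (0:ℝ) < a+b-1 by linarith)).mp h1
  have : 0 < a - (a+b-1)*t := by nlinarith
  unfold d; positivity

lemma d_neg (ha : 0 < a) (hb : 1 < b) {t : ℝ} (h0 : q a b < t) (h1 : t < 1) : d a b t < 0 := by
  have ht0 : 0 < t := lt_trans (hq0 ha hb) h0
  have h1t : 0 < 1 - t := by linarith
  unfold q at h0
  have h2 := (div_lt_iff₀ (show (0:ℝ) < a+b-1 by linarith)).mp h0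
  have hneg : a - (a+b-1)*t < 0 := by nlinarith
  unfold d
  have hpos : 0 < t ^ (a-1) * (1-t)^(b-2) := by positivity
  nlinarith [hpos, hneg]

lemma h_mono (ha : 0 < a) (hb : 1 < b) : StrictMonoOn (h a b) (Icc 0 (q a b)) := by
  apply strictMonoOn_of_deriv_pos (convex_Icc _ _) ((h_cont ha hb).continuousOn)
  intro x hx
  rw [interior_Icc, mem_Ioo] at hx
  rw [(h_deriv hx.1 (lt_trans hx.2 (hq1 ha hb))).deriv]
  exact d_pos ha hb hx.1 hx.2

lemma h_anti (ha : 0 < a) (hb : 1 < b) : StrictAntiOn (h a b) (Icc (q a b) 1) := by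
  apply strictAntiOn_of_deriv_neg (convex_Icc _ _) ((h_cont ha hb).continuousOn)
  intro x hx
  rw [interior_Icc, mem_Ioo] at hx
  rw [(h_deriv (lt_trans (hq0 ha hb) hx.1) hx.2).deriv]
  exact d_neg ha hb hx.1 hx.2

noncomputable def H (a b : ℝ) (u : ℝ) : ℝ :=
  h a b (min (q a b) (max 0 u)) + max 0 (u - q a b) + min 0 u

lemma clamp_mem (ha : 0 < a) (hb : 1 < b) (u : ℝ) :
    min (q a b) (max 0 u) ∈ Icc 0 (q a b) :=
  ⟨le_min (le_of_lt (hq0 ha hb)) (le_max_left _ _), min_le_left _ _⟩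

lemma H_eq_on (ha : 0 < a) (hb : 1 < b) {u : ℝ} (hu : u ∈ Icc 0 (q a b)) :
    H a b u = h a b u := by
  unfold H
  rw [max_eq_right hu.1, min_eq_right hu.2, max_eq_left (by linarith [hu.2]),
      min_eq_left hu.1]
  ring

lemma H_mono (ha : 0 < a) (hb : 1 < b) : StrictMono (H a b) := by
  have hq0' := hq0 ha hb
  intro x y hxy
  unfold H
  have hclm : min (q a b) (max 0 x) ≤ min (q a b) (max 0 y) :=
    min_le_min le_rfl (max_le_max le_rfl (le_of_lt hxy))
  have hm1 : h a b (min (q a b) (max 0 x)) ≤ h a b (min (q a b) (max 0 y)) :=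
    (h_mono ha hb).monotoneOn (clamp_mem ha hb x) (clamp_mem ha hb y) hclm
  have hm2 : max 0 (x - q a b) ≤ max 0 (y - q a b) :=
    max_le_max le_rfl (by linarith)
  have hm3 : min 0 x ≤ min 0 y := min_le_min le_rfl (le_of_lt hxy)
  rcases le_or_gt y 0 with hy | hy
  · have : min 0 x < min 0 y := by
      rw [min_eq_right (le_of_lt (lt_of_lt_of_le hxy hy)), min_eq_right hy]
      exact hxy
    linarith
  rcases le_or_gt (q a b) x with hx | hx
  · have : max 0 (x - q a b) < max 0 (y - q a b) := by
      rw [max_eq_right (by linarith), max_eq_right (by linarith)]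
      linarith
    linarith
  · have hcx : min (q a b) (max 0 x) < min (q a b) (max 0 y) := by
      rcases le_or_gt x 0 with hx0 | hx0
      · rw [max_eq_left hx0, min_eq_right (le_of_lt hq0')]
        exact lt_min hq0' (lt_max_of_lt_right hy)
      · rw [max_eq_right (le_of_lt hx0), min_eq_right (le_of_lt hx)]
        exact lt_min hx (lt_of_lt_of_le hxy (le_max_right 0 y))
    have : h a b (min (q a b) (max 0 x)) < h a b (min (q a b) (max 0 y)) :=
      (h_mono ha hb) (clamp_mem ha hb x) (clamp_mem ha hb y) hcx
    linarith

lemma H_cont (ha : 0 < a) (hb : 1 < b) : Continuous (H a b) := by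
  unfold H
  apply Continuous.add
  apply Continuous.add
  · exact (h_cont ha hb).comp (continuous_const.min (continuous_const.max continuous_id))
  · exact continuous_const.max (continuous_id.sub continuous_const)
  · exact continuous_const.min continuous_id

lemma H_surj (ha : 0 < a) (hb : 1 < b) : Function.Surjective (H a b) := by
  apply Continuous.surjective (H_cont ha hb)
  · apply tendsto_atTop_mono (f := fun u : ℝ => u - q a b)
    · intro u
      unfold H
      have h1 : 0 ≤ h a b (min (q a b) (max 0 u)) :=
        h_nonneg ((clamp_mem ha hb u).1) (le_trans (clamp_mem ha hb u).2 (le_of_lt (hq1 ha hb)))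
      have h2 : u - q a b ≤ max 0 (u - q a b) := le_max_right _ _
      have h3 : min 0 (u - q a b) ≤ min 0 u :=
        min_le_min le_rfl (by linarith [hq0 ha hb])
      have h4 : max 0 (u - q a b) + min 0 (u - q a b) = 0 + (u - q a b) := max_add_min _ _
      linarith
    · exact tendsto_atTop_add_const_right _ _ tendsto_id
  · apply tendsto_atBot_mono (f := fun u : ℝ => u + h a b (q a b))
    · intro u
      unfold H
      have h1 : h a b (min (q a b) (max 0 u)) ≤ h a b (q a b) := by
        rcases eq_or_lt_of_le (clamp_mem ha hb u).2 with he | hl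
        · rw [he]
        · exact le_of_lt ((h_mono ha hb) (clamp_mem ha hb u) (right_mem_Icc.mpr (le_of_lt (hq0 ha hb))) hl)
      have h2 : max 0 (u - q a b) ≤ max 0 u :=
        max_le_max le_rfl (by linarith [hq0 ha hb])
      have h4 : max 0 u + min 0 u = 0 + u := max_add_min _ _
      linarith
    · exact tendsto_atBot_add_const_right _ _ tendsto_id

end FDist

namespace FDist
variable {a b : ℝ}


lemma f_int (ha : 0 < a) (hb : 1 < b) (x y : ℝ) : IntervalIntegrable (f a b) volume x y := by
  have h1 : IntervalIntegrable (fun t : ℝ => t ^ (a-1)) volume x y :=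
    intervalIntegral.intervalIntegrable_rpow' (by linarith)
  exact h1.mul_continuousOn
    (((continuous_const.sub continuous_id).rpow_const (fun z => Or.inr (by linarith))).continuousOn)

noncomputable def F (a b x : ℝ) : ℝ := ∫ t in (0:ℝ)..x, f a b t

lemma F_zero : F a b 0 = 0 := intervalIntegral.integral_same

lemma F_cont (ha : 0 < a) (hb : 1 < b) : ContinuousOn (F a b) (Icc 0 1) := by
  have := intervalIntegral.continuousOn_primitive_interval' (f_int ha hb 0 1) left_mem_uIcc
  rwa [uIcc_of_le (by norm_num : (0:ℝ) ≤ 1)] at this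

lemma F_deriv (ha : 0 < a) (hb : 1 < b) {x : ℝ} (h0 : 0 < x) (h1 : x < 1) :
    HasDerivAt (F a b) (f a b x) x := by
  apply intervalIntegral.integral_hasDerivAt_right (f_int ha hb 0 x)
  · have hco : ContinuousOn (f a b) (Ioo 0 1) := fun z hz => (f_contAt hz.1 hz.2).continuousWithinAt
    exact AEStronglyMeasurable.stronglyMeasurableAtFilter_of_mem
      (hco.aestronglyMeasurable measurableSet_Ioo) (Ioo_mem_nhds h0 h1)
  · exact f_contAt h0 h1

noncomputable def e (ha : 0 < a) (hb : 1 < b) : ℝ ≃o ℝ :=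
  StrictMono.orderIsoOfSurjective _ (H_mono ha hb) (H_surj ha hb)

lemma l_H (ha : 0 < a) (hb : 1 < b) (x : ℝ) : (e ha hb).symm (H a b x) = x :=
  StrictMono.orderIsoOfSurjective_symm_apply_self _ _ _ x

lemma H_l (ha : 0 < a) (hb : 1 < b) (y : ℝ) : H a b ((e ha hb).symm y) = y :=
  StrictMono.orderIsoOfSurjective_self_symm_apply _ _ _ y

lemma l_cont (ha : 0 < a) (hb : 1 < b) : Continuous (e ha hb).symm :=
  OrderIso.continuous _

lemma l_zero (ha : 0 < a) (hb : 1 < b) : (e ha hb).symm 0 = 0 := by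
  have h0 : H a b 0 = 0 := by
    rw [H_eq_on ha hb (left_mem_Icc.mpr (le_of_lt (hq0 ha hb))), h_zero ha]
  conv_lhs => rw [← h0]
  exact l_H ha hb 0

lemma l_M (ha : 0 < a) (hb : 1 < b) : (e ha hb).symm (h a b (q a b)) = q a b := by
  have hM : H a b (q a b) = h a b (q a b) :=
    H_eq_on ha hb (right_mem_Icc.mpr (le_of_lt (hq0 ha hb)))
  conv_lhs => rw [← hM]
  exact l_H ha hb _

lemma l_mem (ha : 0 < a) (hb : 1 < b) {y : ℝ} (h0 : 0 < y) (h1 : y < h a b (q a b)) :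
    (e ha hb).symm y ∈ Ioo 0 (q a b) := by
  constructor
  · have := (e ha hb).symm.strictMono (show (0:ℝ) < y from h0)
    rwa [l_zero ha hb] at this
  · have := (e ha hb).symm.strictMono h1
    rwa [l_M ha hb] at this

lemma h_l (ha : 0 < a) (hb : 1 < b) {y : ℝ} (h0 : 0 < y) (h1 : y < h a b (q a b)) :
    h a b ((e ha hb).symm y) = y := by
  have hm := l_mem ha hb h0 h1
  rw [← H_eq_on ha hb (Ioo_subset_Icc_self hm)]
  exact H_l ha hb y

lemma l_deriv (ha : 0 < a) (hb : 1 < b) {y : ℝ} (h0 : 0 < y) (h1 : y < h a b (q a b)) :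
    HasDerivAt (e ha hb).symm (d a b ((e ha hb).symm y))⁻¹ y := by
  have hm := l_mem ha hb h0 h1
  apply HasDerivAt.of_local_left_inverse ((l_cont ha hb).continuousAt)
    (h_deriv hm.1 (lt_trans hm.2 (hq1 ha hb))) (ne_of_gt (d_pos ha hb hm.1 hm.2))
  filter_upwards [Ioo_mem_nhds h0 h1] with y' hy'
  exact h_l ha hb hy'.1 hy'.2

end FDist


namespace FDist
variable {a b : ℝ}

lemma key_ineq' {u t : ℝ} (ha : 0 < a) (hb : 1 < b) (hu : 0 < u) (hut : u < t) (ht : t < 1)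
    (hcon : a * Real.log u + (b-1) * Real.log (1-u) = a * Real.log t + (b-1) * Real.log (1-t)) :
    (a - (a+b-1)*u) * (1-t) < ((a+b-1)*t - a) * (1-u) :=
  key_ineq ha hb hu hut ht hcon

/-- log of the constraint h u = h t -/
lemma log_constraint (ha : 0 < a) (hb : 1 < b) {u t : ℝ} (hu0 : 0 < u) (hu1 : u < 1)
    (ht0 : 0 < t) (ht1 : t < 1) (heq : h a b u = h a b t) :
    a * Real.log u + (b-1) * Real.log (1-u) = a * Real.log t + (b-1) * Real.log (1-t) := by
  have h1u : (0:ℝ) < 1 - u := by linarith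
  have h1t : (0:ℝ) < 1 - t := by linarith
  have hl := congrArg Real.log heq
  unfold h at hl
  rw [Real.log_mul (by positivity) (by positivity),
      Real.log_mul (by positivity) (by positivity),
      Real.log_rpow hu0, Real.log_rpow h1u, Real.log_rpow ht0, Real.log_rpow h1t] at hl
  linarith [hl]

/-- the descending comparison function -/
noncomputable def W (ha : 0 < a) (hb : 1 < b) (t : ℝ) : ℝ :=
  F a b ((e ha hb).symm (h a b t)) + F a b t

lemma l_mapsTo (ha : 0 < a) (hb : 1 < b) :
    MapsTo (fun t => (e ha hb).symm (h a b t)) (Icc (q a b) 1) (Icc 0 1) := by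
  intro t htm
  have hq0' := hq0 ha hb
  have hq1' := hq1 ha hb
  have h1 : 0 ≤ h a b t := h_nonneg (by linarith [htm.1]) htm.2
  have h2 : h a b t ≤ h a b (q a b) :=
    ((h_anti ha hb).antitoneOn (left_mem_Icc.mpr (by linarith)) htm htm.1)
  have m1 : (e ha hb).symm (h a b t) ≤ q a b := by
    have := (e ha hb).symm.monotone h2
    rwa [l_M ha hb] at this
  have m0 : 0 ≤ (e ha hb).symm (h a b t) := by
    have := (e ha hb).symm.monotone h1
    rwa [l_zero ha hb] at this
  exact ⟨m0, by linarith⟩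

lemma W_cont (ha : 0 < a) (hb : 1 < b) : ContinuousOn (W ha hb) (Icc (q a b) 1) := by
  unfold W
  apply ContinuousOn.add
  · exact (F_cont ha hb).comp
      (((l_cont ha hb).comp (h_cont ha hb)).continuousOn) (l_mapsTo ha hb)
  · exact (F_cont ha hb).mono (Icc_subset_Icc (le_of_lt (hq0 ha hb)) le_rfl)

lemma W_hasDeriv (ha : 0 < a) (hb : 1 < b) {t : ℝ} (h0 : q a b < t) (h1 : t < 1) :
    HasDerivAt (W ha hb)
      (f a b ((e ha hb).symm (h a b t)) * ((d a b ((e ha hb).symm (h a b t)))⁻¹ * d a b t)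
        + f a b t) t := by
  have hq0' := hq0 ha hb
  have ht0 : 0 < t := lt_trans hq0' h0
  have hht0 : 0 < h a b t := h_pos ht0 h1
  have hhtM : h a b t < h a b (q a b) :=
    (h_anti ha hb) (left_mem_Icc.mpr (by linarith [hq1 ha hb]))
      ⟨le_of_lt h0, le_of_lt h1⟩ h0
  have hl := l_deriv ha hb hht0 hhtM
  have lh := hl.comp t (h_deriv ht0 h1)
  have hum := l_mem ha hb hht0 hhtM
  have hF := F_deriv ha hb hum.1 (lt_trans hum.2 (hq1 ha hb))
  have c1 := hF.comp t lh
  have c2 := c1.add (F_deriv ha hb ht0 h1)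
  exact c2

lemma W_deriv_neg (ha : 0 < a) (hb : 1 < b) {t : ℝ} (h0 : q a b < t) (h1 : t < 1) :
    f a b ((e ha hb).symm (h a b t)) * ((d a b ((e ha hb).symm (h a b t)))⁻¹ * d a b t)
        + f a b t < 0 := by
  have hq0' := hq0 ha hb
  have hq1' := hq1 ha hb
  have ht0 : 0 < t := lt_trans hq0' h0
  have h1t : (0:ℝ) < 1 - t := by linarith
  have hht0 : 0 < h a b t := h_pos ht0 h1
  have hhtM : h a b t < h a b (q a b) :=
    (h_anti ha hb) (left_mem_Icc.mpr (by linarith)) ⟨le_of_lt h0, le_of_lt h1⟩ h0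
  set u := (e ha hb).symm (h a b t) with hu_def
  have hum := l_mem ha hb hht0 hhtM
  have hu0 : 0 < u := hum.1
  have huq : u < q a b := hum.2
  have hu1 : u < 1 := lt_trans huq hq1'
  have h1u : (0:ℝ) < 1 - u := by linarith
  have hut : u < t := lt_trans huq h0
  have hueq : h a b u = h a b t := h_l ha hb hht0 hhtM
  have hcon := log_constraint ha hb hu0 hu1 ht0 h1 hueq
  have hkey := key_ineq' ha hb hu0 hut h1 hcon
  have du_pos : 0 < d a b u := d_pos ha hb hu0 huq
  have dt_neg : d a b t < 0 := d_neg ha hb h0 h1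
  have ft_pos : 0 < f a b t := f_pos ht0 h1
  -- X := f u * (-d t),  Y := f t * d u,  show Y < X
  have hsplit_u : (1-u) ^ (b-1) = (1-u) ^ (b-2) * (1-u) := by
    rw [show b-1 = (b-2) + 1 by ring, Real.rpow_add h1u, Real.rpow_one]
  have hsplit_t : (1-t) ^ (b-1) = (1-t) ^ (b-2) * (1-t) := by
    rw [show b-1 = (b-2) + 1 by ring, Real.rpow_add h1t, Real.rpow_one]
  set C := u ^ (a-1) * (1-u) ^ (b-2) * (t ^ (a-1) * (1-t) ^ (b-2)) with hC_def
  have hC : 0 < C := by rw [hC_def]; positivity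
  have hX : f a b u * (-(d a b t)) = C * (((a+b-1)*t - a) * (1-u)) := by
    unfold f d
    rw [hsplit_u, hC_def]
    ring
  have hY : f a b t * d a b u = C * ((a - (a+b-1)*u) * (1-t)) := by
    unfold f d
    rw [hsplit_t, hC_def]
    ring
  have hXY : f a b t * d a b u < f a b u * (-(d a b t)) := by
    rw [hX, hY]
    exact (mul_lt_mul_iff_right₀ hC).mpr hkey
  -- conclude
  have hrw : f a b u * ((d a b u)⁻¹ * d a b t) = (f a b u * d a b t) / d a b u := by
    field_simp
  rw [hrw]
  rw [div_add' _ _ _ (ne_of_gt du_pos)]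
  apply div_neg_of_neg_of_pos _ du_pos
  nlinarith [hXY]

lemma W_anti (ha : 0 < a) (hb : 1 < b) : StrictAntiOn (W ha hb) (Icc (q a b) 1) := by
  apply strictAntiOn_of_deriv_neg (convex_Icc _ _) (W_cont ha hb)
  intro x hx
  rw [interior_Icc, mem_Ioo] at hx
  rw [(W_hasDeriv ha hb hx.1 hx.2).deriv]
  exact W_deriv_neg ha hb hx.1 hx.2

theorem main_real (ha : 0 < a) (hb : 1 < b) : F a b 1 < 2 * F a b (q a b) := by
  have hq0' := hq0 ha hb
  have hq1' := hq1 ha hb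
  have hWq : W ha hb (q a b) = 2 * F a b (q a b) := by
    unfold W
    rw [l_M ha hb]
    ring
  have hW1 : W ha hb 1 = F a b 1 := by
    unfold W
    rw [h_one hb, l_zero ha hb, F_zero]
    ring
  have := (W_anti ha hb) (left_mem_Icc.mpr (le_of_lt hq1'))
    (right_mem_Icc.mpr (le_of_lt hq1')) hq1'
  rw [hWq, hW1] at this
  exact this

end FDist


/-- For all `d1 ≥ 1`, `d2 > 2`,
`P(X_{d1,d2} ≤ E[X_{d1,d2}]) = I_{q(d1/2, d2/2, 1)}(d1/2, d2/2) > 1/2`. -/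
theorem F_prob_gt_half (d1 d2 : ℕ) (hd1 : 1 ≤ d1) (hd2 : 2 < d2) :
    1 / 2 <
      regIncBeta (qF ((d1 : ℝ) / 2) ((d2 : ℝ) / 2) 1) ((d1 : ℝ) / 2) ((d2 : ℝ) / 2) := by
  set a : ℝ := (d1 : ℝ) / 2 with ha_def
  set b : ℝ := (d2 : ℝ) / 2 with hb_def
  have hd1' : (1:ℝ) ≤ (d1:ℝ) := by exact_mod_cast hd1
  have hd2' : (2:ℝ) < (d2:ℝ) := by exact_mod_cast hd2
  have ha : 0 < a := by rw [ha_def]; linarith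
  have hb : 1 < b := by rw [hb_def]; linarith
  have hqF : qF a b 1 = FDist.q a b := by
    unfold qF FDist.q; norm_num
  have hBF : betaFun a b = FDist.F a b 1 := rfl
  have hIF : (∫ t in (0:ℝ)..(FDist.q a b), t ^ (a-1) * (1-t) ^ (b-1)) =
      FDist.F a b (FDist.q a b) := rfl
  have hB : 0 < betaFun a b := by
    rw [hBF]
    unfold FDist.F
    apply intervalIntegral.intervalIntegral_pos_of_pos_on (FDist.f_int ha hb 0 1)
    · exact fun x hx => FDist.f_pos hx.1 hx.2
    · norm_num
  have hmain := FDist.main_real ha hb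
  unfold regIncBeta
  rw [hqF, hIF, lt_div_iff₀ (by rw [hBF] at hB; exact hB)]
  rw [hBF]
  linarith
end

section
/- For every real number κ ≥ 1 and all d1 ∈ ℕ, d1 ≥ 1, and d2 ∈ ℕ with d2 > 2, one has the strict inequality I_{q(d1/2, d2/2, κ)}(d1/2, d2/2) > 1/2; that is, an F-random variable X_{d1,d2} satisfies P(X_{d1,d2} ≤ κ E[X_{d1,d2}]) > 1/2. -/
set_option linter.unusedSectionVars false

open MeasureTheory Set intervalIntegral Real

namespace FHalf

/-! ### Generic integral helpers -/

lemma integral_nonneg_Ioo {f : ℝ → ℝ} {c d : ℝ} (hcd : c ≤ d)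
    (h : ∀ x ∈ Set.Ioo c d, 0 ≤ f x) : 0 ≤ ∫ x in c..d, f x := by
  rw [intervalIntegral.integral_of_le hcd, MeasureTheory.integral_Ioc_eq_integral_Ioo]
  exact MeasureTheory.setIntegral_nonneg measurableSet_Ioo h

lemma integral_nonpos_Ioo {f : ℝ → ℝ} {c d : ℝ} (hcd : c ≤ d)
    (h : ∀ x ∈ Set.Ioo c d, f x ≤ 0) : (∫ x in c..d, f x) ≤ 0 := by
  rw [intervalIntegral.integral_of_le hcd, MeasureTheory.integral_Ioc_eq_integral_Ioo]
  exact MeasureTheory.setIntegral_nonpos measurableSet_Ioo h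

lemma integral_congr_Ioo {f g : ℝ → ℝ} {c d : ℝ} (hcd : c ≤ d)
    (h : ∀ x ∈ Set.Ioo c d, f x = g x) :
    (∫ x in c..d, f x) = ∫ x in c..d, g x := by
  rw [intervalIntegral.integral_of_le hcd, intervalIntegral.integral_of_le hcd,
    MeasureTheory.integral_Ioc_eq_integral_Ioo, MeasureTheory.integral_Ioc_eq_integral_Ioo]
  exact MeasureTheory.setIntegral_congr_fun measurableSet_Ioo h

/-! ### Definitions -/

noncomputable def RR (a b : ℝ) : ℝ := a / (b - 1)
noncomputable def qq (a b : ℝ) : ℝ := a / (a + b - 1)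
noncomputable def DD (a b : ℝ) (v : ℝ) : ℝ := (RR a b)^2 * (1 - v) + v
noncomputable def sig (a b : ℝ) (v : ℝ) : ℝ := (RR a b)^2 * (1 - v) / DD a b v
noncomputable def ff (a b : ℝ) (t : ℝ) : ℝ := t ^ (a - 1) * (1 - t) ^ (b - 1)

variable {a b : ℝ}

lemma hR (ha : 0 < a) (hb : 1 < b) : 0 < RR a b := div_pos ha (by linarith)

lemma hab1 (ha : 0 < a) (hb : 1 < b) : 0 < a + b - 1 := by linarith

lemma hq0 (ha : 0 < a) (hb : 1 < b) : 0 < qq a b := div_pos ha (hab1 ha hb)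

lemma hq1 (ha : 0 < a) (hb : 1 < b) : qq a b < 1 := by
  rw [qq, div_lt_one (hab1 ha hb)]; linarith

lemma hRq (ha : 0 < a) (hb : 1 < b) : (1 + RR a b) * qq a b = RR a b := by
  have h1 : a + b - 1 ≠ 0 := ne_of_gt (hab1 ha hb)
  have h2 : b - 1 ≠ 0 := by intro h; apply h1; linarith [h]
  rw [RR, qq]; field_simp; ring

lemma hDpos (ha : 0 < a) (hb : 1 < b) {v : ℝ} (hv0 : 0 ≤ v) (hv1 : v ≤ 1) :
    0 < DD a b v := by
  rcases lt_or_eq_of_le hv1 with h | h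
  · have h3 := hR ha hb
    have : 0 < (RR a b)^2 * (1 - v) := mul_pos (pow_pos h3 2) (by linarith)
    rw [DD]; linarith
  · rw [DD, h]; norm_num

lemma hDq (ha : 0 < a) (hb : 1 < b) : DD a b (qq a b) = RR a b := by
  have h1 : a + b - 1 ≠ 0 := ne_of_gt (hab1 ha hb)
  have h2 : b - 1 ≠ 0 := by intro h; apply h1; linarith [h]
  rw [DD, RR, qq]; field_simp; ring
section Sigma
variable (ha : 0 < a) (hb : 1 < b)
include ha hb

lemma one_sub_sig {v : ℝ} (hv0 : 0 ≤ v) (hv1 : v ≤ 1) :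
    1 - sig a b v = v / DD a b v := by
  have hD := hDpos ha hb hv0 hv1
  rw [sig, DD] at *
  field_simp
  ring

lemma sig_sub_q {v : ℝ} (hv0 : 0 ≤ v) (hv1 : v ≤ 1) :
    sig a b v - qq a b = RR a b * (qq a b - v) / DD a b v := by
  have hD := (hDpos ha hb hv0 hv1).ne'
  have hq := hRq ha hb
  rw [sig, DD] at *
  field_simp
  linear_combination (-(RR a b*(1-v)+v)) * hq

lemma sig_pos {v : ℝ} (hv0 : 0 ≤ v) (hv1 : v < 1) : 0 < sig a b v := by
  have hD := hDpos ha hb hv0 hv1.le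
  have := hR ha hb
  exact div_pos (mul_pos (pow_pos this 2) (by linarith)) hD

lemma sig_lt_one {v : ℝ} (hv0 : 0 < v) (hv1 : v ≤ 1) : sig a b v < 1 := by
  have hD := hDpos ha hb hv0.le hv1
  have h := one_sub_sig ha hb hv0.le hv1
  nlinarith [div_pos hv0 hD]

lemma DD_sig {v : ℝ} (hv0 : 0 ≤ v) (hv1 : v ≤ 1) :
    DD a b (sig a b v) = (RR a b)^2 / DD a b v := by
  have hD := (hDpos ha hb hv0 hv1).ne'
  rw [DD, sig, DD] at *
  field_simp
  ring

lemma sig_invol {v : ℝ} (hv0 : 0 < v) (hv1 : v < 1) : sig a b (sig a b v) = v := by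
  have hD := (hDpos ha hb hv0.le hv1.le).ne'
  have hR2 : (RR a b)^2 ≠ 0 := (pow_pos (hR ha hb) 2).ne'
  rw [sig, DD_sig ha hb hv0.le hv1.le, one_sub_sig ha hb hv0.le hv1.le]
  field_simp
  exact div_self (hR ha hb).ne'

lemma sig_mem_upper {v : ℝ} (hv : v ∈ Set.Ioo 0 (qq a b)) :
    sig a b v ∈ Set.Ioo (qq a b) 1 := by
  have hq1' := hq1 ha hb
  have hv1 : v < 1 := lt_trans hv.2 hq1'
  have hD := hDpos ha hb hv.1.le hv1.le
  constructor
  · have h := sig_sub_q ha hb hv.1.le hv1.le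
    have : 0 < RR a b * (qq a b - v) / DD a b v :=
      div_pos (mul_pos (hR ha hb) (by linarith [hv.2])) hD
    linarith
  · exact sig_lt_one ha hb hv.1 hv1.le

lemma sig_mem_lower {t : ℝ} (ht : t ∈ Set.Ioo (qq a b) 1) :
    sig a b t ∈ Set.Ioo 0 (qq a b) := by
  have hq0' := hq0 ha hb
  have ht0 : 0 < t := lt_trans hq0' ht.1
  have hD := hDpos ha hb ht0.le ht.2.le
  constructor
  · exact sig_pos ha hb ht0.le ht.2
  · have h := sig_sub_q ha hb ht0.le ht.2.le
    have : RR a b * (qq a b - t) / DD a b t < 0 :=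
      div_neg_of_neg_of_pos (mul_neg_of_pos_of_neg (hR ha hb) (by linarith [ht.1])) hD
    linarith

lemma sig_image : sig a b '' Set.Ioo 0 (qq a b) = Set.Ioo (qq a b) 1 := by
  apply Set.Subset.antisymm
  · rintro t ⟨v, hv, rfl⟩; exact sig_mem_upper ha hb hv
  · intro t ht
    refine ⟨sig a b t, sig_mem_lower ha hb ht, ?_⟩
    exact sig_invol ha hb (lt_trans (hq0 ha hb) ht.1) ht.2

lemma sig_injOn : Set.InjOn (sig a b) (Set.Ioo 0 (qq a b)) := by
  intro u hu v hv h
  have hu' : u ∈ Set.Ioo (0:ℝ) 1 := ⟨hu.1, lt_trans hu.2 (hq1 ha hb)⟩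
  have hv' : v ∈ Set.Ioo (0:ℝ) 1 := ⟨hv.1, lt_trans hv.2 (hq1 ha hb)⟩
  have := congrArg (sig a b) h
  rwa [sig_invol ha hb hu'.1 hu'.2, sig_invol ha hb hv'.1 hv'.2] at this

lemma sig_hasDerivAt {v : ℝ} (hv0 : 0 ≤ v) (hv1 : v ≤ 1) :
    HasDerivAt (sig a b) (-(RR a b)^2 / (DD a b v)^2) v := by
  have hD := hDpos ha hb hv0 hv1
  have h1 : HasDerivAt (fun v : ℝ => (RR a b)^2 * (1 - v)) (-(RR a b)^2) v := by
    simpa using (((hasDerivAt_id v).const_sub 1).const_mul ((RR a b)^2))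
  have h2 : HasDerivAt (DD a b) ((-(RR a b)^2) + 1) v := by
    exact h1.add (hasDerivAt_id' v)
  have := h1.div h2 hD.ne'
  refine this.congr_deriv ?_
  symm
  rw [DD]
  field_simp
  ring
end Sigma

/-! ### The comparison functions and their exp forms -/

noncomputable def JJ (a b : ℝ) (v : ℝ) : ℝ :=
  (RR a b) ^ (2*a) * (v ^ (b-1) * ((1-v) ^ (a-1) * (DD a b v) ^ (-(a+b))))
noncomputable def J2 (a b : ℝ) (v : ℝ) : ℝ :=
  (RR a b) ^ (2*a) * (v ^ (b-2) * ((1-v) ^ (a-1) * (DD a b v) ^ (-(a+b))))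
noncomputable def f2 (a b : ℝ) (v : ℝ) : ℝ := v ^ (a-1) * (1-v) ^ (b-2)
noncomputable def mfun (a b : ℝ) (t : ℝ) : ℝ :=
  (RR a b * (1-t) - t) * (t ^ (a-1) * (1-t) ^ (b-2))
noncomputable def Gfun (a b : ℝ) (t : ℝ) : ℝ := t ^ a * (1-t) ^ (b-1)
noncomputable def Phi (a b : ℝ) (v : ℝ) : ℝ :=
  (a-b) * (Real.log v - Real.log (1-v)) + (a+b) * Real.log (DD a b v)
    - 2*a*Real.log (RR a b)
noncomputable def Psi (a b : ℝ) (v : ℝ) : ℝ :=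
  (a-b) * DD a b v + (a+b) * (1 - (RR a b)^2) * (v*(1-v))

section ExpForm
variable (ha : 0 < a) (hb : 1 < b)
include ha hb

lemma expform_ff {v : ℝ} (hv : v ∈ Set.Ioo (0:ℝ) 1) :
    ff a b v = Real.exp ((a-1) * Real.log v + (b-1) * Real.log (1-v)) := by
  rw [ff, Real.rpow_def_of_pos hv.1, Real.rpow_def_of_pos (by linarith [hv.2]),
    ← Real.exp_add]
  ring_nf

lemma expform_f2 {v : ℝ} (hv : v ∈ Set.Ioo (0:ℝ) 1) :
    f2 a b v = Real.exp ((a-1) * Real.log v + (b-2) * Real.log (1-v)) := by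
  rw [f2, Real.rpow_def_of_pos hv.1, Real.rpow_def_of_pos (by linarith [hv.2]),
    ← Real.exp_add]
  ring_nf

lemma expform_JJ {v : ℝ} (hv : v ∈ Set.Ioo (0:ℝ) 1) :
    JJ a b v = Real.exp (2*a*Real.log (RR a b) + (b-1) * Real.log v
      + (a-1) * Real.log (1-v) - (a+b) * Real.log (DD a b v)) := by
  rw [JJ, Real.rpow_def_of_pos (hR ha hb), Real.rpow_def_of_pos hv.1,
    Real.rpow_def_of_pos (by linarith [hv.2] : (0:ℝ) < 1 - v),
    Real.rpow_def_of_pos (hDpos ha hb hv.1.le hv.2.le),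
    ← Real.exp_add, ← Real.exp_add, ← Real.exp_add]
  ring_nf

lemma expform_J2 {v : ℝ} (hv : v ∈ Set.Ioo (0:ℝ) 1) :
    J2 a b v = Real.exp (2*a*Real.log (RR a b) + (b-2) * Real.log v
      + (a-1) * Real.log (1-v) - (a+b) * Real.log (DD a b v)) := by
  rw [J2, Real.rpow_def_of_pos (hR ha hb), Real.rpow_def_of_pos hv.1,
    Real.rpow_def_of_pos (by linarith [hv.2] : (0:ℝ) < 1 - v),
    Real.rpow_def_of_pos (hDpos ha hb hv.1.le hv.2.le),
    ← Real.exp_add, ← Real.exp_add, ← Real.exp_add]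
  ring_nf

lemma ff_pos {v : ℝ} (hv : v ∈ Set.Ioo (0:ℝ) 1) : 0 < ff a b v := by
  rw [expform_ff ha hb hv]; exact Real.exp_pos _

lemma JJ_pos {v : ℝ} (hv : v ∈ Set.Ioo (0:ℝ) 1) : 0 < JJ a b v := by
  rw [expform_JJ ha hb hv]; exact Real.exp_pos _

lemma J2_pos {v : ℝ} (hv : v ∈ Set.Ioo (0:ℝ) 1) : 0 < J2 a b v := by
  rw [expform_J2 ha hb hv]; exact Real.exp_pos _

lemma ff_eq_f2 {v : ℝ} (hv : v ∈ Set.Ioo (0:ℝ) 1) :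
    ff a b v = (1-v) * f2 a b v := by
  rw [expform_ff ha hb hv, expform_f2 ha hb hv,
    ← Real.exp_log (show (0:ℝ) < 1 - v by linarith [hv.2]), ← Real.exp_add]
  congr 1
  · rw [Real.log_exp]; ring
  
lemma JJ_eq_J2 {v : ℝ} (hv : v ∈ Set.Ioo (0:ℝ) 1) :
    JJ a b v = v * J2 a b v := by
  rw [expform_JJ ha hb hv, expform_J2 ha hb hv,
    ← Real.exp_log hv.1, ← Real.exp_add]
  congr 1
  rw [Real.log_exp]; ring

lemma ff_eq_JJ_exp_Phi {v : ℝ} (hv : v ∈ Set.Ioo (0:ℝ) 1) :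
    ff a b v = JJ a b v * Real.exp (Phi a b v) := by
  rw [expform_ff ha hb hv, expform_JJ ha hb hv, Phi, ← Real.exp_add]
  congr 1; ring

end ExpForm

section Transform
variable (ha : 0 < a) (hb : 1 < b)
include ha hb

lemma log_sig {v : ℝ} (hv : v ∈ Set.Ioo (0:ℝ) 1) :
    Real.log (sig a b v) = 2 * Real.log (RR a b) + Real.log (1-v)
      - Real.log (DD a b v) := by
  have hD := hDpos ha hb hv.1.le hv.2.le
  have h1 : (0:ℝ) < 1 - v := by linarith [hv.2]
  have hRp := hR ha hb
  rw [sig, Real.log_div (by positivity) hD.ne', Real.log_mul (by positivity) h1.ne',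
    Real.log_pow]
  push_cast; ring

lemma log_one_sub_sig {v : ℝ} (hv : v ∈ Set.Ioo (0:ℝ) 1) :
    Real.log (1 - sig a b v) = Real.log v - Real.log (DD a b v) := by
  have hD := hDpos ha hb hv.1.le hv.2.le
  rw [one_sub_sig ha hb hv.1.le hv.2.le, Real.log_div hv.1.ne' hD.ne']

lemma RD_exp {v : ℝ} (hv : v ∈ Set.Ioo (0:ℝ) 1) :
    (RR a b)^2 / (DD a b v)^2
      = Real.exp (2*Real.log (RR a b) - 2*Real.log (DD a b v)) := by
  have hD := hDpos ha hb hv.1.le hv.2.le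
  have hRp := hR ha hb
  rw [Real.exp_sub, show (2:ℝ)*Real.log (RR a b) = Real.log ((RR a b)^2) by
      rw [Real.log_pow]; push_cast; ring,
    show (2:ℝ)*Real.log (DD a b v) = Real.log ((DD a b v)^2) by
      rw [Real.log_pow]; push_cast; ring,
    Real.exp_log (by positivity), Real.exp_log (by positivity)]

lemma sig_mem01 {v : ℝ} (hv : v ∈ Set.Ioo 0 (qq a b)) :
    sig a b v ∈ Set.Ioo (0:ℝ) 1 := by
  have h := sig_mem_upper ha hb hv
  exact ⟨lt_trans (hq0 ha hb) h.1, h.2⟩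

lemma mem01 {v : ℝ} (hv : v ∈ Set.Ioo 0 (qq a b)) : v ∈ Set.Ioo (0:ℝ) 1 :=
  ⟨hv.1, lt_trans hv.2 (hq1 ha hb)⟩

/-- r3 : the substituted integrand of `ff` is `JJ`. -/
lemma sub_ff_eq_JJ {v : ℝ} (hv : v ∈ Set.Ioo 0 (qq a b)) :
    (RR a b)^2 / (DD a b v)^2 * ff a b (sig a b v) = JJ a b v := by
  have hv1 := mem01 ha hb hv
  rw [expform_ff ha hb (sig_mem01 ha hb hv), log_sig ha hb hv1,
    log_one_sub_sig ha hb hv1, RD_exp ha hb hv1, ← Real.exp_add,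
    expform_JJ ha hb hv1]
  congr 1; ring

/-- first factor of `mfun` at `sig v`. -/
lemma mfun_factor_sig {v : ℝ} (hv : v ∈ Set.Ioo 0 (qq a b)) :
    RR a b * (1 - sig a b v) - sig a b v
      = -((1 + RR a b) * RR a b * (qq a b - v) / DD a b v) := by
  have hv1 := mem01 ha hb hv
  have hD := (hDpos ha hb hv1.1.le hv1.2.le).ne'
  have hq := hRq ha hb
  rw [one_sub_sig ha hb hv1.1.le hv1.2.le, sig]
  field_simp
  linear_combination ((RR a b * (1-v) + v) * RR a b + (1-v) * RR a b * (1 - RR a b)) * hq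

/-- r4 : the substituted integrand of `mfun`. -/
lemma sub_mfun_eq {v : ℝ} (hv : v ∈ Set.Ioo 0 (qq a b)) :
    (RR a b)^2 / (DD a b v)^2 * mfun a b (sig a b v)
      = -((1 + RR a b) * RR a b) * ((qq a b - v) * J2 a b v) := by
  have hv1 := mem01 ha hb hv
  have hσ := sig_mem01 ha hb hv
  have hD := hDpos ha hb hv1.1.le hv1.2.le
  have hRp := hR ha hb
  rw [mfun, mfun_factor_sig ha hb hv,
    Real.rpow_def_of_pos hσ.1, Real.rpow_def_of_pos (by linarith [hσ.2] : (0:ℝ) < 1 - sig a b v),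
    log_sig ha hb hv1, log_one_sub_sig ha hb hv1, ← Real.exp_add,
    expform_J2 ha hb hv1]
  rw [show (RR a b)^2 / (DD a b v)^2 * (-((1 + RR a b) * RR a b * (qq a b - v) / DD a b v)
        * Real.exp ((2 * Real.log (RR a b) + Real.log (1 - v) - Real.log (DD a b v)) * (a - 1)
          + (Real.log v - Real.log (DD a b v)) * (b - 2)))
      = -((1 + RR a b) * RR a b) * ((qq a b - v) *
          ((RR a b)^2 / (DD a b v)^2 * (Real.exp ((2 * Real.log (RR a b) + Real.log (1 - v)
            - Real.log (DD a b v)) * (a - 1) + (Real.log v - Real.log (DD a b v)) * (b - 2))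
            / DD a b v))) from by ring]
  congr 2
  rw [div_eq_mul_inv _ (DD a b v), ← Real.exp_log (show (0:ℝ) < (DD a b v)⁻¹ by positivity),
    RD_exp ha hb hv1, ← Real.exp_add, ← Real.exp_add, Real.log_inv]
  congr 1; ring

/-- r5. -/
lemma mfun_eq_f2 {v : ℝ} (hv : v ∈ Set.Ioo 0 (qq a b)) :
    mfun a b v = (1 + RR a b) * ((qq a b - v) * f2 a b v) := by
  have hq := hRq ha hb
  rw [mfun, f2]
  have h : RR a b * (1-v) - v = (1 + RR a b) * (qq a b - v) := by
    linear_combination -hq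
  rw [h]; ring

/-- r6 : pointwise decomposition of the weighted difference. -/
lemma wN_decomp {v : ℝ} (hv : v ∈ Set.Ioo 0 (qq a b)) :
    (qq a b - v)/(1-v) * (ff a b v - JJ a b v)
      = (qq a b - v) * (f2 a b v - RR a b * J2 a b v)
        + (1 + RR a b) * (qq a b - v)^2 / (1-v) * J2 a b v := by
  have hv1 := mem01 ha hb hv
  have h1 : (0:ℝ) < 1 - v := by linarith [hv1.2]
  have hq := hRq ha hb
  rw [ff_eq_f2 ha hb hv1, JJ_eq_J2 ha hb hv1]
  field_simp
  linear_combination (-(J2 a b v) * (qq a b - v)) * hq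

end Transform

section Integrability
variable (ha : 0 < a) (hb : 1 < b)
include ha hb

lemma uIcc_0q : Set.uIcc (0:ℝ) (qq a b) = Set.Icc 0 (qq a b) :=
  Set.uIcc_of_le (hq0 ha hb).le

lemma contOn_one_sub {p : ℝ} :
    ContinuousOn (fun v : ℝ => (1-v) ^ p) (Set.Icc 0 (qq a b)) := by
  apply ContinuousOn.rpow_const (by fun_prop)
  intro x hx
  exact Or.inl (by have := hq1 ha hb; have := hx.2; intro h; nlinarith [hx.2])

lemma contOn_DD {p : ℝ} :
    ContinuousOn (fun v : ℝ => (DD a b v) ^ p) (Set.Icc 0 (qq a b)) := by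
  apply ContinuousOn.rpow_const
  · have : Continuous (DD a b) := by unfold DD; fun_prop
    exact this.continuousOn
  · intro x hx
    exact Or.inl (hDpos ha hb hx.1 (hx.2.trans (hq1 ha hb).le)).ne'

lemma int_ff_0q : IntervalIntegrable (ff a b) volume 0 (qq a b) := by
  have h1 : IntervalIntegrable (fun v : ℝ => v ^ (a-1)) volume 0 (qq a b) :=
    intervalIntegral.intervalIntegrable_rpow' (by linarith)
  have := h1.mul_continuousOn (g := fun v : ℝ => (1-v) ^ (b-1))
    (by rw [uIcc_0q ha hb]; exact contOn_one_sub ha hb)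
  exact this

lemma int_f2_0q : IntervalIntegrable (f2 a b) volume 0 (qq a b) := by
  have h1 : IntervalIntegrable (fun v : ℝ => v ^ (a-1)) volume 0 (qq a b) :=
    intervalIntegral.intervalIntegrable_rpow' (by linarith)
  exact h1.mul_continuousOn (by rw [uIcc_0q ha hb]; exact contOn_one_sub ha hb)

lemma int_JJ_0q : IntervalIntegrable (JJ a b) volume 0 (qq a b) := by
  apply ContinuousOn.intervalIntegrable
  rw [uIcc_0q ha hb]
  apply ContinuousOn.mul continuousOn_const
  apply ContinuousOn.mul
  · apply ContinuousOn.rpow_const (by fun_prop)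
    intro x hx; exact Or.inr (by linarith)
  · exact (contOn_one_sub ha hb).mul (contOn_DD ha hb)

lemma int_J2_0q : IntervalIntegrable (J2 a b) volume 0 (qq a b) := by
  have h1 : IntervalIntegrable (fun v : ℝ => v ^ (b-2)) volume 0 (qq a b) :=
    intervalIntegral.intervalIntegrable_rpow' (by linarith)
  have h2 := h1.mul_continuousOn (g := fun v : ℝ => (1-v) ^ (a-1) * (DD a b v) ^ (-(a+b)))
    (by rw [uIcc_0q ha hb]; exact (contOn_one_sub ha hb).mul (contOn_DD ha hb))
  have h3 := h2.const_mul ((RR a b) ^ (2*a))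
  exact h3

lemma int_mfun_0q : IntervalIntegrable (mfun a b) volume 0 (qq a b) := by
  have h1 := (int_f2_0q ha hb).continuousOn_mul
    (g := fun t : ℝ => RR a b * (1-t) - t) (by fun_prop)
  exact h1

lemma int_mfun_q1 : IntervalIntegrable (mfun a b) volume (qq a b) 1 := by
  have h0 : IntervalIntegrable (fun x : ℝ => x ^ (b-2)) volume 0 (1 - qq a b) :=
    intervalIntegral.intervalIntegrable_rpow' (by linarith)
  have h1 := h0.comp_sub_left 1
  simp only [sub_zero, sub_sub_cancel] at h1
  -- h1 : IntervalIntegrable (fun x => (1-x)^(b-2)) volume 1 (qq a b)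
  have h2 := h1.symm
  have hcont : ContinuousOn (fun t : ℝ => (RR a b * (1-t) - t) * t ^ (a-1))
      (Set.uIcc (qq a b) 1) := by
    rw [Set.uIcc_of_le (hq1 ha hb).le]
    apply ContinuousOn.mul (by fun_prop)
    apply ContinuousOn.rpow_const (by fun_prop)
    intro x hx
    exact Or.inl (by have := hq0 ha hb; intro h; rw [h] at hx; linarith [hx.1])
  have h3 := h2.continuousOn_mul (g := fun t : ℝ => t ^ (a-1)) (by
    rw [Set.uIcc_of_le (hq1 ha hb).le]
    apply ContinuousOn.rpow_const (by fun_prop)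
    intro x hx
    exact Or.inl (by have := hq0 ha hb; intro h; rw [h] at hx; linarith [hx.1]))
  exact h3.continuousOn_mul (g := fun t : ℝ => RR a b * (1-t) - t) (by fun_prop)

lemma int_ff_q1 : IntervalIntegrable (ff a b) volume (qq a b) 1 := by
  apply ContinuousOn.intervalIntegrable
  rw [Set.uIcc_of_le (hq1 ha hb).le]
  show ContinuousOn (fun t : ℝ => t ^ (a-1) * (1-t) ^ (b-1)) _
  apply ContinuousOn.mul
  · apply ContinuousOn.rpow_const (by fun_prop)
    intro x hx
    exact Or.inl (by have := hq0 ha hb; intro h; rw [h] at hx; linarith [hx.1])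
  · apply ContinuousOn.rpow_const (by fun_prop)
    intro x hx; exact Or.inr (by linarith)

end Integrability

section FTC
variable (ha : 0 < a) (hb : 1 < b)
include ha hb

lemma hRb : RR a b * (b - 1) = a := by
  rw [RR]; exact div_mul_cancel₀ a (by intro h; nlinarith)

lemma hasDerivAt_G {t : ℝ} (ht : t ∈ Set.Ioo (0:ℝ) 1) :
    HasDerivAt (Gfun a b) ((b-1) * mfun a b t) t := by
  have h1 : HasDerivAt (fun t : ℝ => t ^ a) (a * t ^ (a-1)) t :=
    Real.hasDerivAt_rpow_const (Or.inl ht.1.ne')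
  have h0 : HasDerivAt (fun t : ℝ => 1 - t) (-1) t := by
    simpa using (hasDerivAt_id t).const_sub 1
  have h2 : HasDerivAt (fun t : ℝ => (1-t) ^ (b-1)) (-1 * (b-1) * (1-t) ^ (b-1-1)) t :=
    h0.rpow_const (Or.inl (by have := ht.2; intro h; nlinarith [ht.2]))
  have h3 := h1.mul h2
  have e1 : t ^ a = t ^ (a-1) * t := by
    nth_rewrite 1 [show a = (a-1)+1 by ring]
    rw [Real.rpow_add_one ht.1.ne']
  have e2 : (1-t) ^ (b-1) = (1-t) ^ (b-2) * (1-t) := by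
    nth_rewrite 1 [show b-1 = (b-2)+1 by ring]
    rw [Real.rpow_add_one (by intro h; nlinarith [ht.2])]
  have e3 : (1-t) ^ (b-1-1) = (1-t) ^ (b-2) := by congr 1; ring
  refine h3.congr_deriv ?_
  symm
  rw [e1, e2, e3, mfun]
  have hr := hRb ha hb
  linear_combination (t ^ (a-1) * (1-t) ^ (b-2) * (1-t)) * hr

lemma contOn_G : ContinuousOn (Gfun a b) (Set.Icc 0 1) := by
  apply ContinuousOn.mul
  · exact ContinuousOn.rpow_const (by fun_prop) (fun x hx => Or.inr ha.le)
  · exact ContinuousOn.rpow_const (by fun_prop) (fun x hx => Or.inr (by linarith))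

lemma int_m_total :
    (∫ t in (0:ℝ)..(qq a b), mfun a b t) + ∫ t in (qq a b)..1, mfun a b t = 0 := by
  have hq0' := (hq0 ha hb).le
  have hq1' := (hq1 ha hb).le
  have hsub1 : Set.Icc (0:ℝ) (qq a b) ⊆ Set.Icc 0 1 :=
    Set.Icc_subset_Icc le_rfl hq1'
  have hsub2 : Set.Icc (qq a b) 1 ⊆ Set.Icc 0 1 := Set.Icc_subset_Icc hq0' le_rfl
  have F1 := intervalIntegral.integral_eq_sub_of_hasDerivAt_of_le hq0'
    ((contOn_G ha hb).mono hsub1)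
    (fun x hx => hasDerivAt_G ha hb ⟨hx.1, lt_of_lt_of_le hx.2 hq1'⟩)
    (((int_mfun_0q ha hb)).const_mul (b-1))
  have F2 := intervalIntegral.integral_eq_sub_of_hasDerivAt_of_le hq1'
    ((contOn_G ha hb).mono hsub2)
    (fun x hx => hasDerivAt_G ha hb ⟨lt_of_le_of_lt hq0' hx.1, hx.2⟩)
    (((int_mfun_q1 ha hb)).const_mul (b-1))
  have hG0 : Gfun a b 0 = 0 := by
    rw [Gfun, Real.zero_rpow ha.ne']; ring
  have hG1 : Gfun a b 1 = 0 := by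
    have hb1 : b - 1 ≠ 0 := by intro h; nlinarith
    simp [Gfun, Real.zero_rpow hb1]
  rw [intervalIntegral.integral_const_mul] at F1 F2
  have hb1 : b - 1 ≠ 0 := by intro h; nlinarith
  have := F1
  have hsum : (b-1) * ((∫ t in (0:ℝ)..(qq a b), mfun a b t)
      + ∫ t in (qq a b)..1, mfun a b t) = 0 := by
    rw [mul_add, F1, F2, hG0, hG1]; ring
  exact (mul_eq_zero.mp hsum).resolve_left hb1

end FTC

section COV
variable (ha : 0 < a) (hb : 1 < b)
include ha hb

lemma cov_general (g : ℝ → ℝ) :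
    ∫ t in Set.Ioo (qq a b) 1, g t
      = ∫ v in Set.Ioo 0 (qq a b), |(-(RR a b)^2 / (DD a b v)^2)| * g (sig a b v) := by
  rw [← sig_image ha hb]
  have h := MeasureTheory.integral_image_eq_integral_abs_deriv_smul
    (measurableSet_Ioo : MeasurableSet (Set.Ioo 0 (qq a b)))
    (f' := fun v => -(RR a b)^2 / (DD a b v)^2)
    (fun x hx => (sig_hasDerivAt ha hb hx.1.le
      (le_of_lt (lt_trans hx.2 (hq1 ha hb)))).hasDerivWithinAt)
    (sig_injOn ha hb) g
  simpa [smul_eq_mul, neg_div] using h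

lemma abs_deriv_eq {v : ℝ} (hv : v ∈ Set.Ioo 0 (qq a b)) :
    |(-(RR a b)^2 / (DD a b v)^2)| = (RR a b)^2 / (DD a b v)^2 := by
  have hD := hDpos ha hb hv.1.le (le_of_lt (lt_trans hv.2 (hq1 ha hb)))
  have hRp := hR ha hb
  rw [abs_div, abs_neg, abs_of_pos (by positivity : (0:ℝ) < (RR a b)^2),
    abs_of_pos (by positivity : (0:ℝ) < (DD a b v)^2)]

lemma transfer_ff :
    (∫ t in (qq a b)..1, ff a b t) = ∫ v in (0:ℝ)..(qq a b), JJ a b v := by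
  rw [intervalIntegral.integral_of_le (hq1 ha hb).le,
    intervalIntegral.integral_of_le (hq0 ha hb).le,
    MeasureTheory.integral_Ioc_eq_integral_Ioo,
    MeasureTheory.integral_Ioc_eq_integral_Ioo,
    cov_general ha hb (ff a b)]
  apply MeasureTheory.setIntegral_congr_fun measurableSet_Ioo
  intro v hv
  dsimp only
  rw [show |-RR a b ^ 2 / DD a b v ^ 2| = (RR a b)^2 / (DD a b v)^2 from abs_deriv_eq ha hb hv]
  exact sub_ff_eq_JJ ha hb hv

lemma transfer_m :
    (∫ t in (qq a b)..1, mfun a b t)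
      = ∫ v in (0:ℝ)..(qq a b), -((1 + RR a b) * RR a b) * ((qq a b - v) * J2 a b v) := by
  rw [intervalIntegral.integral_of_le (hq1 ha hb).le,
    intervalIntegral.integral_of_le (hq0 ha hb).le,
    MeasureTheory.integral_Ioc_eq_integral_Ioo,
    MeasureTheory.integral_Ioc_eq_integral_Ioo,
    cov_general ha hb (mfun a b)]
  apply MeasureTheory.setIntegral_congr_fun measurableSet_Ioo
  intro v hv
  dsimp only
  rw [show |-RR a b ^ 2 / DD a b v ^ 2| = (RR a b)^2 / (DD a b v)^2 from abs_deriv_eq ha hb hv]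
  exact sub_mfun_eq ha hb hv

/-- The key vanishing integral `∫ K = 0`. -/
lemma int_K_zero :
    (∫ v in (0:ℝ)..(qq a b), (qq a b - v) * (f2 a b v - RR a b * J2 a b v)) = 0 := by
  have hRp := hR ha hb
  have h1R : (0:ℝ) < 1 + RR a b := by linarith
  -- ∫ mfun over (0,q) equals (1+R) ∫ (q-v) f2
  have e1 : (∫ t in (0:ℝ)..(qq a b), mfun a b t)
      = (1 + RR a b) * ∫ v in (0:ℝ)..(qq a b), (qq a b - v) * f2 a b v := by
    rw [← intervalIntegral.integral_const_mul]
    exact integral_congr_Ioo (hq0 ha hb).le (fun v hv => mfun_eq_f2 ha hb hv)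
  have e2 : (∫ t in (qq a b)..1, mfun a b t)
      = -((1 + RR a b) * RR a b) * ∫ v in (0:ℝ)..(qq a b), (qq a b - v) * J2 a b v := by
    rw [transfer_m ha hb, intervalIntegral.integral_const_mul]
  have e3 := int_m_total ha hb
  rw [e1, e2] at e3
  have hf2int : IntervalIntegrable (fun v => (qq a b - v) * f2 a b v) volume 0 (qq a b) := by
    have := (int_f2_0q ha hb).continuousOn_mul (g := fun v : ℝ => qq a b - v) (by fun_prop)
    exact this
  have hJ2int : IntervalIntegrable (fun v => (qq a b - v) * J2 a b v) volume 0 (qq a b) := by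
    have := (int_J2_0q ha hb).continuousOn_mul (g := fun v : ℝ => qq a b - v) (by fun_prop)
    exact this
  have esub : (∫ v in (0:ℝ)..(qq a b), (qq a b - v) * (f2 a b v - RR a b * J2 a b v))
      = (∫ v in (0:ℝ)..(qq a b), (qq a b - v) * f2 a b v)
        - RR a b * ∫ v in (0:ℝ)..(qq a b), (qq a b - v) * J2 a b v := by
    rw [← intervalIntegral.integral_const_mul, ← intervalIntegral.integral_sub hf2int
      (hJ2int.const_mul (RR a b))]
    apply integral_congr_Ioo (hq0 ha hb).le
    intro v hv; ring
  rw [esub]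
  have : (∫ v in (0:ℝ)..(qq a b), (qq a b - v) * f2 a b v)
      = RR a b * ∫ v in (0:ℝ)..(qq a b), (qq a b - v) * J2 a b v := by
    have h := e3
    field_simp at h
    nlinarith [h]
  rw [this]; ring

end COV

section Weighted
variable (ha : 0 < a) (hb : 1 < b)
include ha hb

lemma contOn_weight : ContinuousOn (fun v : ℝ => (qq a b - v)/(1-v))
    (Set.Icc 0 (qq a b)) := by
  apply ContinuousOn.div (by fun_prop) (by fun_prop)
  intro x hx
  have := hq1 ha hb
  have := hx.2
  intro h; nlinarith [hx.2]

lemma contOn_Eweight : ContinuousOn (fun v : ℝ => (1 + RR a b) * (qq a b - v)^2/(1-v))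
    (Set.Icc 0 (qq a b)) := by
  apply ContinuousOn.div (by fun_prop) (by fun_prop)
  intro x hx
  have := hq1 ha hb
  intro h; nlinarith [hx.2]

lemma int_E_0q : IntervalIntegrable
    (fun v => (1 + RR a b) * (qq a b - v)^2/(1-v) * J2 a b v) volume 0 (qq a b) := by
  have := (int_J2_0q ha hb).continuousOn_mul
    (g := fun v : ℝ => (1 + RR a b) * (qq a b - v)^2/(1-v))
    (by rw [uIcc_0q ha hb]; exact contOn_Eweight ha hb)
  exact this

lemma int_N_0q : IntervalIntegrable (fun v => ff a b v - JJ a b v) volume 0 (qq a b) :=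
  (int_ff_0q ha hb).sub (int_JJ_0q ha hb)

lemma int_wN_0q : IntervalIntegrable
    (fun v => (qq a b - v)/(1-v) * (ff a b v - JJ a b v)) volume 0 (qq a b) := by
  have := (int_N_0q ha hb).continuousOn_mul
    (g := fun v : ℝ => (qq a b - v)/(1-v))
    (by rw [uIcc_0q ha hb]; exact contOn_weight ha hb)
  exact this

lemma int_K_0q : IntervalIntegrable
    (fun v => (qq a b - v) * (f2 a b v - RR a b * J2 a b v)) volume 0 (qq a b) := by
  have := ((int_f2_0q ha hb).sub ((int_J2_0q ha hb).const_mul (RR a b))).continuousOn_mul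
    (g := fun v : ℝ => qq a b - v) (by fun_prop)
  exact this

lemma int_wN_eq_P :
    (∫ v in (0:ℝ)..(qq a b), (qq a b - v)/(1-v) * (ff a b v - JJ a b v))
      = ∫ v in (0:ℝ)..(qq a b), (1 + RR a b) * (qq a b - v)^2/(1-v) * J2 a b v := by
  have step1 : (∫ v in (0:ℝ)..(qq a b), (qq a b - v)/(1-v) * (ff a b v - JJ a b v))
      = ∫ v in (0:ℝ)..(qq a b), ((qq a b - v) * (f2 a b v - RR a b * J2 a b v)
          + (1 + RR a b) * (qq a b - v)^2/(1-v) * J2 a b v) := by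
    apply integral_congr_Ioo (hq0 ha hb).le
    intro v hv
    exact wN_decomp ha hb hv
  rw [step1, intervalIntegral.integral_add (int_K_0q ha hb) (int_E_0q ha hb),
    int_K_zero ha hb, zero_add]

lemma P_pos :
    0 < ∫ v in (0:ℝ)..(qq a b), (1 + RR a b) * (qq a b - v)^2/(1-v) * J2 a b v := by
  apply intervalIntegral.intervalIntegral_pos_of_pos_on (int_E_0q ha hb) _ (hq0 ha hb)
  intro v hv
  have hv1 := mem01 ha hb hv
  have hJ2 := J2_pos ha hb hv1
  have hRp := hR ha hb
  have h1 : 0 < 1 - v := by linarith [hv1.2]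
  have h2 : 0 < (qq a b - v)^2 := by
    have : qq a b - v ≠ 0 := by have := hv.2; intro h; nlinarith [hv.2]
    positivity
  positivity

end Weighted

section PhiPsi
variable (ha : 0 < a) (hb : 1 < b)
include ha hb

noncomputable def Phi' (a b : ℝ) (v : ℝ) : ℝ :=
  (a-b) * (1/v + 1/(1-v)) + (a+b) * ((1 - (RR a b)^2)/DD a b v)

lemma Phi_hasDeriv {v : ℝ} (hv : v ∈ Set.Ioo (0:ℝ) 1) :
    HasDerivAt (Phi a b) (Phi' a b v) v := by
  have h1v : (0:ℝ) < 1 - v := by linarith [hv.2]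
  have hD := hDpos ha hb hv.1.le hv.2.le
  have h1 : HasDerivAt (fun v : ℝ => Real.log v) (1/v) v := by
    simpa [one_div] using Real.hasDerivAt_log hv.1.ne'
  have h0 : HasDerivAt (fun v : ℝ => 1 - v) (-1) v := by
    simpa using (hasDerivAt_id v).const_sub 1
  have h2 : HasDerivAt (fun v : ℝ => Real.log (1-v)) (-1/(1-v)) v := h0.log h1v.ne'
  have hDd : HasDerivAt (DD a b) (-(RR a b)^2 + 1) v := by
    have := ((hasDerivAt_id v).const_sub 1).const_mul ((RR a b)^2)
    exact (this.add (hasDerivAt_id' v)).congr_deriv (by ring)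
  have h3 : HasDerivAt (fun v : ℝ => Real.log (DD a b v))
      ((-(RR a b)^2 + 1)/DD a b v) v := hDd.log hD.ne'
  have h4 := (((h1.sub h2).const_mul (a-b)).add (h3.const_mul (a+b))).sub_const
    (2*a*Real.log (RR a b))
  have : Phi a b = fun v : ℝ => (a-b) * (Real.log v - Real.log (1-v))
      + (a+b) * Real.log (DD a b v) - 2*a*Real.log (RR a b) := rfl
  rw [this]
  refine h4.congr_deriv ?_
  symm
  rw [Phi']
  ring

lemma Psi_eq_deriv {v : ℝ} (hv : v ∈ Set.Ioo (0:ℝ) 1) :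
    Psi a b v = Phi' a b v * (v * (1-v) * DD a b v) := by
  have h1v : (0:ℝ) < 1 - v := by linarith [hv.2]
  have hD := hDpos ha hb hv.1.le hv.2.le
  have hv0 : v ≠ 0 := hv.1.ne'
  have h1v' : (1:ℝ) - v ≠ 0 := h1v.ne'
  have hD' : DD a b v ≠ 0 := hD.ne'
  rw [Psi, Phi']
  field_simp
  ring

lemma mul_pos_aux {v : ℝ} (hv : v ∈ Set.Ioo (0:ℝ) 1) :
    0 < v * (1-v) * DD a b v := by
  have h1v : (0:ℝ) < 1 - v := by linarith [hv.2]
  have hD := hDpos ha hb hv.1.le hv.2.le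
  exact mul_pos (mul_pos hv.1 h1v) hD

lemma q_div : qq a b / (1 - qq a b) = RR a b := by
  have hs : a + b - 1 ≠ 0 := (hab1 ha hb).ne'
  have hb1 : b - 1 ≠ 0 := by intro h; nlinarith
  have h1 : (1:ℝ) - qq a b ≠ 0 := by have := hq1 ha hb; intro h; linarith
  rw [div_eq_iff h1]
  linear_combination hRq ha hb

lemma Phi_q_zero : Phi a b (qq a b) = 0 := by
  have h0 := hq0 ha hb
  have h1 := hq1 ha hb
  have hlog : Real.log (qq a b) - Real.log (1 - qq a b) = Real.log (RR a b) := by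
    rw [← Real.log_div h0.ne' (by linarith : (1:ℝ) - qq a b ≠ 0), q_div ha hb]
  rw [Phi, hDq ha hb, hlog]; ring

lemma Psi_q_neg : Psi a b (qq a b) < 0 := by
  have hs := hab1 ha hb
  have hb1 : b - 1 ≠ 0 := by intro h; nlinarith
  have hRp := hR ha hb
  have hE : (a+b-1)^2 * Psi a b (qq a b) = -(2*a*RR a b) * (a+b-1) := by
    rw [Psi, hDq ha hb, qq, RR]
    field_simp
    ring
  nlinarith [mul_pos (mul_pos ha hRp) hs, sq_nonneg (a+b-1)]

/-- The crucial one-sided sign propagation for `Psi`. -/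
lemma Psi_prop {η ξ : ℝ} (hη : 0 < η) (hηξ : η ≤ ξ) (hξq : ξ ≤ qq a b)
    (hΨ : 0 < Psi a b ξ) : 0 < Psi a b η := by
  have hRp := hR ha hb
  have hr := hRb ha hb
  have hq1' := hq1 ha hb
  have hQneg := Psi_q_neg ha hb
  rcases le_or_gt (RR a b) 1 with hRle | hRgt
  · exfalso
    have hξ1 : ξ < 1 := lt_of_le_of_lt hξq hq1'
    have hDξ : 0 < DD a b ξ := hDpos ha hb (le_trans hη.le hηξ) hξ1.le
    have hkey : (1 + RR a b)^2 * Psi a b ξ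
        = -(2 * RR a b * (1 + RR a b) * DD a b ξ)
          - (a+b) * (1 - (RR a b)^2) * (RR a b - (1 + RR a b) * ξ)^2 := by
      rw [Psi, DD] at *
      linear_combination (-(2*((RR a b)^2*(1-ξ)+ξ))*(1+RR a b)) * hr
    nlinarith [sq_nonneg (RR a b - (1 + RR a b) * ξ),
      mul_pos (mul_pos (mul_pos (by norm_num : (0:ℝ) < 2) hRp)
        (by linarith : (0:ℝ) < 1 + RR a b)) hDξ,
      mul_nonneg (mul_nonneg (by linarith : (0:ℝ) ≤ a+b)
        (by nlinarith : (0:ℝ) ≤ 1 - (RR a b)^2)) (sq_nonneg (RR a b - (1 + RR a b) * ξ)),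
      sq_nonneg (1 + RR a b)]
  · -- R > 1 : Psi is convex
    have hcvx : (qq a b - ξ) * Psi a b η
        = (qq a b - η) * Psi a b ξ - (ξ - η) * Psi a b (qq a b)
          + (a+b) * ((RR a b)^2 - 1) * ((qq a b - ξ) * ((ξ - η) * (qq a b - η))) := by
      rw [Psi, Psi, Psi, DD, DD, DD]
      ring
    rcases eq_or_lt_of_le hξq with hEq | hlt
    · rw [hEq] at hΨ; linarith
    rcases eq_or_lt_of_le hηξ with hEq2 | hlt2
    · rwa [hEq2]
    have h1 : 0 < qq a b - ξ := by linarith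
    have h2 : 0 < qq a b - η := by linarith
    have h3 : 0 < ξ - η := by linarith
    have h5 : (0:ℝ) < (RR a b)^2 - 1 := by nlinarith
    have h4 : (0:ℝ) ≤ (a+b) * ((RR a b)^2 - 1) :=
      mul_nonneg (by linarith) h5.le
    nlinarith [mul_pos h2 hΨ, mul_pos h3 (neg_pos.mpr hQneg),
      mul_nonneg h4 (le_of_lt (mul_pos h1 (mul_pos h3 h2)))]

/-- Single–crossing: once `ff ≥ JJ`, it stays so up to `qq`. -/
lemma single_cross {v₁ v₂ : ℝ} (h1 : v₁ ∈ Set.Ioo 0 (qq a b))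
    (h2 : v₂ ∈ Set.Ioo 0 (qq a b)) (h12 : v₁ ≤ v₂)
    (hN : JJ a b v₁ ≤ ff a b v₁) : JJ a b v₂ ≤ ff a b v₂ := by
  rcases eq_or_lt_of_le h12 with rfl | hlt
  · exact hN
  by_contra hcon
  push_neg at hcon
  have hv11 := mem01 ha hb h1
  have hv21 := mem01 ha hb h2
  have hJ1 := JJ_pos ha hb hv11
  have hJ2 := JJ_pos ha hb hv21
  -- translate to Phi
  have hPhi1 : 0 ≤ Phi a b v₁ := by
    rw [ff_eq_JJ_exp_Phi ha hb hv11] at hN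
    rw [← Real.one_le_exp_iff]
    exact (le_mul_iff_one_le_right hJ1).mp hN
  have hPhi2 : Phi a b v₂ < 0 := by
    rw [ff_eq_JJ_exp_Phi ha hb hv21] at hcon
    rw [← Real.exp_lt_one_iff]
    nlinarith
  -- continuity of Phi on subintervals of (0,1)
  have hq1' := hq1 ha hb
  have hcont : ∀ c d : ℝ, 0 < c → d < 1 → ContinuousOn (Phi a b) (Set.Icc c d) := by
    intro c d hc hd x hx
    exact (Phi_hasDeriv ha hb ⟨lt_of_lt_of_le hc hx.1,
      lt_of_le_of_lt hx.2 hd⟩).continuousAt.continuousWithinAt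
  -- MVT on [v₁, v₂]
  obtain ⟨η, hηmem, hη⟩ := exists_hasDerivAt_eq_slope (Phi a b) (Phi' a b) hlt
    (hcont v₁ v₂ h1.1 hv21.2)
    (fun x hx => Phi_hasDeriv ha hb ⟨lt_trans h1.1 hx.1, lt_trans hx.2 hv21.2⟩)
  -- MVT on [v₂, qq]
  obtain ⟨ξ, hξmem, hξ⟩ := exists_hasDerivAt_eq_slope (Phi a b) (Phi' a b) h2.2
    (hcont v₂ (qq a b) h2.1 hq1')
    (fun x hx => Phi_hasDeriv ha hb ⟨lt_trans h2.1 hx.1, lt_trans hx.2 hq1'⟩)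
  have hηIoo : η ∈ Set.Ioo (0:ℝ) 1 :=
    ⟨lt_trans h1.1 hηmem.1, lt_trans (lt_trans hηmem.2 h2.2) hq1'⟩
  have hξIoo : ξ ∈ Set.Ioo (0:ℝ) 1 :=
    ⟨lt_trans h2.1 hξmem.1, lt_trans hξmem.2 hq1'⟩
  have hslope1 : Phi' a b η < 0 := by
    rw [hη]
    apply div_neg_of_neg_of_pos <;> linarith
  have hslope2 : 0 < Phi' a b ξ := by
    rw [hξ, Phi_q_zero ha hb]
    apply div_pos <;> linarith [h2.2]
  have hPsiξ : 0 < Psi a b ξ := by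
    rw [Psi_eq_deriv ha hb hξIoo]
    exact mul_pos hslope2 (mul_pos_aux ha hb hξIoo)
  have hPsiη : 0 < Psi a b η :=
    Psi_prop ha hb hηIoo.1 (by linarith [hηmem.2, hξmem.1]) (le_of_lt hξmem.2) hPsiξ
  have : Phi' a b η * (η * (1-η) * DD a b η) ≤ 0 :=
    mul_nonpos_of_nonpos_of_nonneg hslope1.le (mul_pos_aux ha hb hηIoo).le
  rw [← Psi_eq_deriv ha hb hηIoo] at this
  linarith

end PhiPsi

section Core
variable (ha : 0 < a) (hb : 1 < b)
include ha hb

/-- weight is antitone. -/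
lemma w_mono {x y : ℝ} (hx : 0 ≤ x) (hxy : x ≤ y) (hy : y < 1) :
    (qq a b - y)/(1-y) ≤ (qq a b - x)/(1-x) := by
  have h1 : (0:ℝ) < 1 - y := by linarith
  have h2 : (0:ℝ) < 1 - x := by linarith
  rw [div_le_div_iff₀ h1 h2]
  nlinarith [hq1 ha hb]

/-- The main strict inequality `∫₀^q f > ∫_q^1 f` in the form `∫ JJ < ∫ ff`. -/
lemma core : (∫ v in (0:ℝ)..(qq a b), JJ a b v) < ∫ v in (0:ℝ)..(qq a b), ff a b v := by
  have hq0' := hq0 ha hb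
  have hq1' := hq1 ha hb
  set q := qq a b with hqdef
  set N : ℝ → ℝ := fun v => ff a b v - JJ a b v with hNdef
  set w : ℝ → ℝ := fun v => (q - v)/(1-v) with hwdef
  have hP := P_pos ha hb
  have hwNP := int_wN_eq_P ha hb
  set P := ∫ v in (0:ℝ)..q, (1 + RR a b) * (q - v)^2/(1-v) * J2 a b v with hPdef
  -- it suffices to show 0 < ∫ N
  have hsplit : (∫ v in (0:ℝ)..q, N v)
      = (∫ v in (0:ℝ)..q, ff a b v) - ∫ v in (0:ℝ)..q, JJ a b v :=
    intervalIntegral.integral_sub (int_ff_0q ha hb) (int_JJ_0q ha hb)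
  suffices hA : 0 < ∫ v in (0:ℝ)..q, N v by linarith [hsplit ▸ hA]
  by_cases hall : ∀ v ∈ Set.Ioo 0 q, JJ a b v ≤ ff a b v
  · -- N ≥ 0 everywhere: compare with weight bounded by q
    have step : (∫ v in (0:ℝ)..q, (q * N v - w v * N v)) ≥ 0 := by
      apply integral_nonneg_Ioo hq0'.le
      intro v hv
      have hv1 : v < 1 := lt_trans hv.2 hq1'
      have hN0 : 0 ≤ N v := by simp only [hNdef]; linarith [hall v hv]
      have hw : w v ≤ q := by
        rw [hwdef]
        rw [div_le_iff₀ (by linarith : (0:ℝ) < 1 - v)]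
        nlinarith [hv.1]
      nlinarith
    have heq : (∫ v in (0:ℝ)..q, (q * N v - w v * N v))
        = q * (∫ v in (0:ℝ)..q, N v) - ∫ v in (0:ℝ)..q, w v * N v := by
      rw [← intervalIntegral.integral_const_mul,
        ← intervalIntegral.integral_sub ((int_N_0q ha hb).const_mul q) (int_wN_0q ha hb)]
    have hwN : (∫ v in (0:ℝ)..q, w v * N v) = P := hwNP
    have : 0 < q * (∫ v in (0:ℝ)..q, N v) := by
      rw [heq, hwN] at step; linarith
    nlinarith [this]
  · push_neg at hall
    obtain ⟨v₀, hv₀mem, hv₀⟩ := hall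
    set T := {v : ℝ | v ∈ Set.Ioo 0 q ∧ ff a b v < JJ a b v} with hTdef
    have hTne : T.Nonempty := ⟨v₀, hv₀mem, hv₀⟩
    have hTbdd : BddAbove T := ⟨q, fun t ht => ht.1.2.le⟩
    set vs := sSup T with hvs
    have hvs_le : vs ≤ q := csSup_le hTne (fun t ht => ht.1.2.le)
    have hvs_pos : 0 < vs := lt_of_lt_of_le hv₀mem.1 (le_csSup hTbdd ⟨hv₀mem, hv₀⟩)
    -- every v < vs in Ioo has N v < 0
    have hneg : ∀ v ∈ Set.Ioo 0 q, v < vs → ff a b v < JJ a b v := by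
      intro v hv hvvs
      obtain ⟨t, htT, hvt⟩ := exists_lt_of_lt_csSup hTne hvvs
      by_contra hcon
      push_neg at hcon
      exact absurd (single_cross ha hb hv htT.1 hvt.le hcon) (not_le.mpr htT.2)
    -- every v > vs in Ioo has N v ≥ 0
    have hpos : ∀ v ∈ Set.Ioo 0 q, vs < v → JJ a b v ≤ ff a b v := by
      intro v hv hvsv
      by_contra hcon
      push_neg at hcon
      exact absurd (le_csSup hTbdd ⟨hv, hcon⟩) (not_le.mpr hvsv)
    rcases eq_or_lt_of_le hvs_le with hEq | hvslt
    · -- vs = q : N < 0 on all of Ioo, contradiction with P > 0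
      exfalso
      have : (∫ v in (0:ℝ)..q, w v * N v) ≤ 0 := by
        apply integral_nonpos_Ioo hq0'.le
        intro v hv
        have hv1 : v < 1 := lt_trans hv.2 hq1'
        have hNneg : N v < 0 := by
          simp only [hNdef]
          have := hneg v hv (hEq ▸ hv.2)
          linarith
        have hwpos : 0 < w v := div_pos (by linarith [hv.2]) (by linarith)
        nlinarith
      rw [hwNP] at this
      linarith
    · -- vs < q
      set c := (q - vs)/(1 - vs) with hcdef
      have hvs1 : vs < 1 := lt_trans hvslt hq1'
      have hcpos : 0 < c := div_pos (by linarith) (by linarith)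
      have hptwise : ∀ v ∈ Set.Ioo 0 q, (w v - c) * N v ≤ 0 := by
        intro v hv
        have hv1 : v < 1 := lt_trans hv.2 hq1'
        rcases lt_trichotomy v vs with hlt | hEq2 | hgt
        · have hNneg : N v < 0 := by
            simp only [hNdef]; linarith [hneg v hv hlt]
          have hwge : c ≤ w v := w_mono ha hb hv.1.le hlt.le hvs1
          nlinarith
        · rw [hwdef, hcdef, hEq2]
          simp
        · have hNpos : 0 ≤ N v := by
            simp only [hNdef]; linarith [hpos v hv hgt]
          have hwle : w v ≤ c := w_mono ha hb hvs_pos.le hgt.le hv1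
          nlinarith
      have step : (∫ v in (0:ℝ)..q, (w v * N v - c * N v)) ≤ 0 := by
        apply integral_nonpos_Ioo hq0'.le
        intro v hv
        have := hptwise v hv
        nlinarith
      have heq : (∫ v in (0:ℝ)..q, (w v * N v - c * N v))
          = P - c * (∫ v in (0:ℝ)..q, N v) := by
        rw [intervalIntegral.integral_sub (int_wN_0q ha hb) ((int_N_0q ha hb).const_mul c),
          hwNP, intervalIntegral.integral_const_mul]
      rw [heq] at step
      have : P ≤ c * (∫ v in (0:ℝ)..q, N v) := by linarith
      nlinarith

end Core

section Final
variable (ha : 0 < a) (hb : 1 < b)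
include ha hb

lemma ffq_pos : 0 < ∫ v in (0:ℝ)..(qq a b), ff a b v := by
  apply intervalIntegral.intervalIntegral_pos_of_pos_on (int_ff_0q ha hb) _ (hq0 ha hb)
  intro v hv
  exact ff_pos ha hb (mem01 ha hb hv)

lemma JJq_nonneg : 0 ≤ ∫ v in (0:ℝ)..(qq a b), JJ a b v := by
  apply integral_nonneg_Ioo (hq0 ha hb).le
  intro v hv
  exact (JJ_pos ha hb (mem01 ha hb hv)).le

lemma betaFun_split : betaFun a b
    = (∫ v in (0:ℝ)..(qq a b), ff a b v) + ∫ v in (qq a b)..1, ff a b v := by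
  rw [betaFun]
  exact (intervalIntegral.integral_add_adjacent_intervals
    (int_ff_0q ha hb) (int_ff_q1 ha hb)).symm

lemma betaFun_pos : 0 < betaFun a b := by
  rw [betaFun_split ha hb, transfer_ff ha hb]
  linarith [ffq_pos ha hb, JJq_nonneg ha hb]

lemma main_aux : betaFun a b < 2 * ∫ v in (0:ℝ)..(qq a b), ff a b v := by
  rw [betaFun_split ha hb, transfer_ff ha hb]
  linarith [core ha hb]

lemma int_ff_q_x {x : ℝ} (hqx : qq a b ≤ x) (hx1 : x < 1) :
    IntervalIntegrable (ff a b) volume (qq a b) x := by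
  apply ContinuousOn.intervalIntegrable
  rw [Set.uIcc_of_le hqx]
  have hq0' := hq0 ha hb
  show ContinuousOn (fun t : ℝ => t ^ (a-1) * (1-t) ^ (b-1)) _
  apply ContinuousOn.mul
  · apply ContinuousOn.rpow_const (by fun_prop)
    intro t ht
    exact Or.inl (by intro h; rw [h] at ht; linarith [ht.1])
  · apply ContinuousOn.rpow_const (by fun_prop)
    intro t ht
    refine Or.inl ?_
    intro h
    have ht1 : t = 1 := by linarith
    rw [ht1] at ht
    linarith [ht.2]

lemma main_general {κ : ℝ} (hκ : 1 ≤ κ) : 1/2 < regIncBeta (qF a b κ) a b := by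
  set x := qF a b κ with hxdef
  have hden : 0 < κ * a + b - 1 := by nlinarith
  have hqx : qq a b ≤ x := by
    rw [hxdef, qF, qq, div_le_div_iff₀ (hab1 ha hb) hden]
    nlinarith [mul_nonneg (mul_nonneg ha.le (by linarith : (0:ℝ) ≤ κ - 1))
      (by linarith : (0:ℝ) ≤ b - 1)]
  have hx1 : x < 1 := by
    rw [hxdef, qF, div_lt_one hden]; linarith
  have hsplit : (∫ t in (0:ℝ)..x, ff a b t)
      = (∫ t in (0:ℝ)..(qq a b), ff a b t) + ∫ t in (qq a b)..x, ff a b t :=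
    (intervalIntegral.integral_add_adjacent_intervals
      (int_ff_0q ha hb) (int_ff_q_x ha hb hqx hx1)).symm
  have htail : 0 ≤ ∫ t in (qq a b)..x, ff a b t := by
    apply integral_nonneg_Ioo hqx
    intro t ht
    have ht0 : 0 < t := lt_trans (hq0 ha hb) ht.1
    have ht1 : t < 1 := lt_trans ht.2 hx1
    exact (ff_pos ha hb ⟨ht0, ht1⟩).le
  have hB := betaFun_pos ha hb
  rw [regIncBeta, lt_div_iff₀ hB]
  have h2 := main_aux ha hb
  have : (∫ t in (0:ℝ)..x, t ^ (a-1) * (1-t) ^ (b-1)) = ∫ t in (0:ℝ)..x, ff a b t := rfl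
  rw [this, hsplit]
  linarith

end Final
end FHalf

/-- For `κ ≥ 1` and all `d1 ≥ 1`, `d2 > 2`,
`P(X_{d1,d2} ≤ κ E[X_{d1,d2}]) = I_{q(d1/2, d2/2, κ)}(d1/2, d2/2) > 1/2`. -/
theorem F_prob_gt_half_of_one_le (κ : ℝ) (hκ : 1 ≤ κ) (d1 d2 : ℕ)
    (hd1 : 1 ≤ d1) (hd2 : 2 < d2) :
    1 / 2 <
      regIncBeta (qF ((d1 : ℝ) / 2) ((d2 : ℝ) / 2) κ) ((d1 : ℝ) / 2) ((d2 : ℝ) / 2) := by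
  have ha : 0 < (d1 : ℝ) / 2 := by
    have : (1:ℝ) ≤ (d1:ℝ) := by exact_mod_cast hd1
    linarith
  have hb : 1 < (d2 : ℝ) / 2 := by
    have : (3:ℝ) ≤ (d2:ℝ) := by exact_mod_cast hd2
    linarith
  have := FHalf.main_general ha hb hκ
  simpa using this
end

section
/- For every real κ with 0 < κ ≤ 1, every real a ≥ 1/2, and every real b > 1, one has the strict inequality I_{q(a, b+1, κ)}(a, b+1) < I_{q(a, b, κ)}(a, b). -/
open Real MeasureTheory Set intervalIntegral

lemma intBeta (p q x y : ℝ) (hp : -1 < p) (hq : 0 ≤ q) :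
    IntervalIntegrable (fun t => t ^ p * (1 - t) ^ q) volume x y := by
  have hc : Continuous (fun t : ℝ => (1 - t) ^ q) := by
    rw [continuous_iff_continuousAt]
    intro t
    exact (Real.continuousAt_rpow_const _ _ (Or.inr hq)).comp
      ((continuous_const.sub continuous_id).continuousAt)
  have := (intervalIntegrable_rpow' (a := x) (b := y) hp).continuousOn_mul
    (hc.continuousOn (s := uIcc x y))
  exact this.congr (fun t _ => mul_comm _ _)

lemma betaPos (p q x : ℝ) (hp : -1 < p) (hq : 0 ≤ q) (hx0 : 0 < x) (hx1 : x ≤ 1) :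
    0 < ∫ t in (0:ℝ)..x, t ^ p * (1 - t) ^ q := by
  apply intervalIntegral_pos_of_pos_on (intBeta p q 0 x hp hq) _ hx0
  intro t ht
  have h1 : 0 < t := ht.1
  have h2 : 0 < 1 - t := by have := ht.2; nlinarith
  positivity

lemma starId (a b x : ℝ) (ha : 0 < a) (hb : 1 ≤ b) (hx0 : 0 ≤ x) (hx1 : x ≤ 1) :
    (a + b) * (∫ t in (0:ℝ)..x, t ^ (a-1) * (1-t) ^ b)
      = b * (∫ t in (0:ℝ)..x, t ^ (a-1) * (1-t) ^ (b-1)) + x ^ a * (1-x) ^ b := by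
  have hb0 : (0:ℝ) < b := lt_of_lt_of_le one_pos hb
  have hpa : (-1:ℝ) < a - 1 := by linarith
  have hint1 := intBeta (a-1) b 0 x hpa hb0.le
  have hint2 := intBeta (a-1) (b-1) 0 x hpa (by linarith)
  -- FTC for F t = t^a * (1-t)^b
  have hcont : ContinuousOn (fun t : ℝ => t ^ a * (1-t) ^ b) (Icc 0 x) := by
    apply Continuous.continuousOn
    have c1 : Continuous (fun t : ℝ => t ^ a) := by
      rw [continuous_iff_continuousAt]
      exact fun t => Real.continuousAt_rpow_const _ _ (Or.inr ha.le)
    have c2 : Continuous (fun t : ℝ => (1 - t) ^ b) := by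
      rw [continuous_iff_continuousAt]
      exact fun t => (Real.continuousAt_rpow_const _ _ (Or.inr hb0.le)).comp
        ((continuous_const.sub continuous_id).continuousAt)
    exact c1.mul c2
  have hderiv : ∀ t ∈ Ioo (0:ℝ) x, HasDerivAt (fun t : ℝ => t ^ a * (1-t) ^ b)
      ((a+b) * (t ^ (a-1) * (1-t) ^ b) - b * (t ^ (a-1) * (1-t) ^ (b-1))) t := by
    intro t ht
    have ht0 : 0 < t := ht.1
    have ht1 : t < 1 := lt_of_lt_of_le ht.2 hx1
    have h1t : (0:ℝ) < 1 - t := by linarith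
    have d1 : HasDerivAt (fun t : ℝ => t ^ a) (a * t ^ (a-1)) t :=
      Real.hasDerivAt_rpow_const (Or.inl ht0.ne')
    have d2 : HasDerivAt (fun t : ℝ => (1 - t) ^ b) (-1 * b * (1-t) ^ (b-1)) t := by
      have dlin : HasDerivAt (fun t : ℝ => 1 - t) (-1) t := by
        simpa using (hasDerivAt_id t).const_sub 1
      exact dlin.rpow_const (Or.inl h1t.ne')
    have := d1.mul d2
    refine this.congr_deriv ?_
    have e1 : t ^ a = t ^ (a-1) * t := by
      rw [← Real.rpow_add_one ht0.ne' (a-1)]; ring_nf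
    have e2 : (1-t) ^ b = (1-t) ^ (b-1) * (1-t) := by
      rw [← Real.rpow_add_one h1t.ne' (b-1)]; ring_nf
    rw [e1, e2]; ring
  have key := integral_eq_sub_of_hasDerivAt_of_le hx0 hcont hderiv
    (((hint1.const_mul (a+b))).sub (hint2.const_mul b))
  rw [intervalIntegral.integral_sub (hint1.const_mul (a+b)) (hint2.const_mul b),
    intervalIntegral.integral_const_mul, intervalIntegral.integral_const_mul] at key
  have h0 : (0:ℝ) ^ a * (1-(0:ℝ)) ^ b = 0 := by
    rw [Real.zero_rpow ha.ne']; ring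
  rw [h0] at key
  linarith

lemma pointwiseMin (a b q' q t : ℝ) (ha : 1/2 ≤ a) (hb : 1 ≤ b)
    (hq'0 : 0 < q') (hq'q : q' < q) (hq1 : q < 1) (ht : t ∈ Icc q' q) :
    min (q' ^ (a-1) * (1-q') ^ (b-1)) (q ^ (a-1) * (1-q) ^ (b-1))
      ≤ t ^ (a-1) * (1-t) ^ (b-1) := by
  have ht0 : 0 < t := lt_of_lt_of_le hq'0 ht.1
  have ht1 : t < 1 := lt_of_le_of_lt ht.2 hq1
  have h1t : (0:ℝ) < 1 - t := by linarith
  have h1q : (0:ℝ) < 1 - q := by linarith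
  have h1q' : (0:ℝ) < 1 - q' := by linarith
  rcases le_or_gt a 1 with hA | hA
  · -- integrand decreasing: f q ≤ f t
    refine le_trans (min_le_right _ _) ?_
    have e1 : q ^ (a-1) ≤ t ^ (a-1) :=
      Real.rpow_le_rpow_of_nonpos ht0 ht.2 (by linarith)
    have e2 : (1-q) ^ (b-1) ≤ (1-t) ^ (b-1) :=
      Real.rpow_le_rpow h1q.le (by linarith [ht.2]) (by linarith)
    exact mul_le_mul e1 e2 (Real.rpow_nonneg h1q.le _) (Real.rpow_nonneg ht0.le _)
  · -- log-concavity
    set lam := (q - t) / (q - q') with hlam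
    set mu := (t - q') / (q - q') with hmu
    have hd : (0:ℝ) < q - q' := by linarith
    have hlam0 : 0 ≤ lam := div_nonneg (by linarith [ht.2]) hd.le
    have hmu0 : 0 ≤ mu := div_nonneg (by linarith [ht.1]) hd.le
    have hsum : lam + mu = 1 := by rw [hlam, hmu]; field_simp; ring
    have hcomb : lam * q' + mu * q = t := by rw [hlam, hmu]; field_simp; ring
    have hccv := strictConcaveOn_log_Ioi.concaveOn
    have hlog1 : lam * Real.log q' + mu * Real.log q ≤ Real.log t := by
      have := hccv.2 (mem_Ioi.mpr hq'0) (mem_Ioi.mpr (lt_trans hq'0 hq'q))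
        hlam0 hmu0 hsum
      rw [smul_eq_mul, smul_eq_mul, smul_eq_mul, smul_eq_mul] at this
      rwa [hcomb] at this
    have hlog2 : lam * Real.log (1-q') + mu * Real.log (1-q) ≤ Real.log (1-t) := by
      have := hccv.2 (mem_Ioi.mpr h1q') (mem_Ioi.mpr h1q) hlam0 hmu0 hsum
      have hcomb2 : lam * (1-q') + mu * (1-q) = 1 - t := by rw [hlam, hmu]; field_simp; ring
      rw [smul_eq_mul, smul_eq_mul, smul_eq_mul, smul_eq_mul] at this
      rwa [hcomb2] at this
    have fval : ∀ x : ℝ, 0 < x → x < 1 →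
        x ^ (a-1) * (1-x) ^ (b-1)
          = Real.exp (Real.log x * (a-1) + Real.log (1-x) * (b-1)) := by
      intro x h0 h1
      rw [Real.rpow_def_of_pos h0, Real.rpow_def_of_pos (by linarith : (0:ℝ) < 1 - x),
        Real.exp_add]
    rw [fval t ht0 ht1, fval q' hq'0 (by linarith), fval q (lt_trans hq'0 hq'q) hq1]
    rw [← Real.exp_monotone.map_min, Real.exp_le_exp]
    set A := Real.log q' * (a-1) + Real.log (1-q') * (b-1)
    set B := Real.log q * (a-1) + Real.log (1-q) * (b-1)
    have hg : lam * A + mu * B ≤ Real.log t * (a-1) + Real.log (1-t) * (b-1) := by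
      have ha1 : 0 ≤ a - 1 := by linarith
      have hb1 : 0 ≤ b - 1 := by linarith
      have := mul_le_mul_of_nonneg_right hlog1 ha1
      have := mul_le_mul_of_nonneg_right hlog2 hb1
      simp only [A, B]; nlinarith
    refine le_trans ?_ hg
    rcases le_total A B with h | h
    · rw [min_eq_left h]
      have hlam' : lam = 1 - mu := by linarith
      rw [hlam']
      nlinarith [mul_nonneg hmu0 (sub_nonneg.mpr h)]
    · rw [min_eq_right h]
      have hmu' : mu = 1 - lam := by linarith
      rw [hmu']
      nlinarith [mul_nonneg hlam0 (sub_nonneg.mpr h)]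

lemma hmono : StrictMonoOn (fun x : ℝ => x * (Real.log (x+1) - Real.log x)) (Ioi 0) := by
  apply strictMonoOn_of_deriv_pos (convex_Ioi 0)
  · intro x hx
    have hx0 : (0:ℝ) < x := hx
    apply ContinuousAt.continuousWithinAt
    have c1 : ContinuousAt (fun x : ℝ => Real.log (x+1)) x :=
      (Real.continuousAt_log (by positivity)).comp ((continuous_id.add continuous_const).continuousAt)
    have c2 : ContinuousAt Real.log x := Real.continuousAt_log hx0.ne'
    exact continuousAt_id.mul (c1.sub c2)
  · intro x hx
    rw [interior_Ioi] at hx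
    have hx0 : (0:ℝ) < x := hx
    have hx1 : (0:ℝ) < x + 1 := by linarith
    have d1 : HasDerivAt (fun x : ℝ => Real.log (x+1)) (1/(x+1)) x := by
      have := ((hasDerivAt_id x).add_const 1).log hx1.ne'
      simpa using this
    have d2 : HasDerivAt Real.log x⁻¹ x := Real.hasDerivAt_log hx0.ne'
    have H : HasDerivAt (fun x : ℝ => x * (Real.log (x+1) - Real.log x))
        (1 * (Real.log (x+1) - Real.log x) + x * (1/(x+1) - x⁻¹)) x :=
      (hasDerivAt_id x).mul (d1.sub d2)
    rw [H.deriv]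
    have hlog : Real.log (x+1) - Real.log x > 1/(x+1) := by
      have hy : (0:ℝ) < x / (x+1) := by positivity
      have hy1 : x / (x+1) ≠ 1 := by
        intro h
        field_simp at h
        linarith
      have := Real.log_lt_sub_one_of_pos hy hy1
      rw [Real.log_div hx0.ne' hx1.ne'] at this
      have e : x / (x+1) - 1 = -(1/(x+1)) := by field_simp; ring
      rw [e] at this
      linarith
    have e2 : x * (1/(x+1) - x⁻¹) = -(1/(x+1)) := by field_simp; ring
    rw [e2]
    linarith

lemma keyIneq (a b u : ℝ) (hb : 1 < b) (hu : b - 1 < u) (hua : u ≤ a + b - 1) :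
    b ^ (b-1) * u ^ (a+b-1) < (b-1) ^ (b-1) * (u+1) ^ (a+b-1) := by
  have hb1 : (0:ℝ) < b - 1 := by linarith
  have hu0 : (0:ℝ) < u := lt_trans hb1 hu
  have hu1 : (0:ℝ) < u + 1 := by linarith
  have habm : (0:ℝ) < a + b - 1 := by linarith
  have h1 := hmono (mem_Ioi.mpr hb1) (mem_Ioi.mpr hu0) hu
  simp only at h1
  have hgap : Real.log u < Real.log (u+1) := Real.log_lt_log hu0 (by linarith)
  have h2 : u * (Real.log (u+1) - Real.log u) ≤ (a+b-1) * (Real.log (u+1) - Real.log u) :=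
    mul_le_mul_of_nonneg_right hua (by linarith)
  have hbm : (b-1) + 1 = b := by ring
  rw [hbm] at h1
  -- exponentiate
  rw [Real.rpow_def_of_pos (by linarith : (0:ℝ) < b), Real.rpow_def_of_pos hu0,
    Real.rpow_def_of_pos hb1, Real.rpow_def_of_pos hu1, ← Real.exp_add, ← Real.exp_add]
  rw [Real.exp_lt_exp]
  nlinarith

lemma branchQ (a b s : ℝ) (ha : 1/2 ≤ a) (hb : 1 < b) (hs : 0 < s) (hsa : s ≤ a) :
    (s/(s+b)) ^ a * (b/(s+b)) ^ b / b
      < (s/(s+b-1) - s/(s+b)) * ((s/(s+b-1)) ^ (a-1) * ((b-1)/(s+b-1)) ^ (b-1)) := by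
  have hb0 : (0:ℝ) < b := by linarith
  have hb1 : (0:ℝ) < b - 1 := by linarith
  have hu0 : (0:ℝ) < s + b - 1 := by linarith
  have hu1 : (0:ℝ) < s + b := by linarith
  set u := s + b - 1 with hudef
  have hsb : s + b = u + 1 := by rw [hudef]; ring
  rw [hsb]
  have hu1' : (0:ℝ) < u + 1 := by rw [← hsb]; exact hu1
  rw [Real.div_rpow hs.le hu1'.le, Real.div_rpow hb0.le hu1'.le,
    Real.div_rpow hs.le hu0.le, Real.div_rpow hb1.le hu0.le]
  have hdiff : s/u - s/(u+1) = s/(u*(u+1)) := by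
    field_simp
    ring
  have e1 : s ^ a / (u+1) ^ a * (b ^ b / (u+1) ^ b) / b
      = s ^ a * b ^ (b-1) / ((u+1) ^ (a+b-1) * (u+1)) := by
    have hbb : b ^ b = b ^ (b-1) * b := by
      rw [← Real.rpow_add_one hb0.ne']; ring_nf
    have hv : (u+1) ^ a * (u+1) ^ b = (u+1) ^ (a+b-1) * (u+1) := by
      rw [← Real.rpow_add hu1', ← Real.rpow_add_one hu1'.ne']; ring_nf
    rw [hbb]
    rw [div_mul_div_comm, hv]
    field_simp
  have e2 : s/(u*(u+1)) * (s ^ (a-1) / u ^ (a-1) * ((b-1) ^ (b-1) / u ^ (b-1)))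
      = s ^ a * (b-1) ^ (b-1) / (u ^ (a+b-1) * (u+1)) := by
    have hss : s * s ^ (a-1) = s ^ a := by
      rw [mul_comm, ← Real.rpow_add_one hs.ne']; ring_nf
    have huu : u ^ (a-1) * u ^ (b-1) * u = u ^ (a+b-1) := by
      rw [← Real.rpow_add hu0, ← Real.rpow_add_one hu0.ne']; ring_nf
    rw [← huu, ← hss]
    field_simp
  rw [hdiff, e1, e2]
  rw [div_lt_div_iff₀ (by positivity) (by positivity)]
  have key := keyIneq a b u hb (by rw [hudef]; linarith) (by rw [hudef]; linarith)
  have hpos : (0:ℝ) < s ^ a * (u+1) := by positivity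
  nlinarith [mul_lt_mul_of_pos_left key hpos]

lemma branchQ' (a b s : ℝ) (hb : 1 < b) (hs : 0 < s) :
    (s/(s+b)) ^ a * (b/(s+b)) ^ b / b
      < (s/(s+b-1) - s/(s+b)) * ((s/(s+b)) ^ (a-1) * (b/(s+b)) ^ (b-1)) := by
  have hb0 : (0:ℝ) < b := by linarith
  have hu0 : (0:ℝ) < s + b - 1 := by linarith
  have hu1 : (0:ℝ) < s + b := by linarith
  have hq'0 : (0:ℝ) < s/(s+b) := by positivity
  have hob : (0:ℝ) < b/(s+b) := by positivity
  have ea : (s/(s+b)) ^ a = (s/(s+b)) ^ (a-1) * (s/(s+b)) := by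
    rw [← Real.rpow_add_one hq'0.ne']; ring_nf
  have eb : (b/(s+b)) ^ b = (b/(s+b)) ^ (b-1) * (b/(s+b)) := by
    rw [← Real.rpow_add_one hob.ne']; ring_nf
  rw [ea, eb]
  have l1 : s/(s+b) * (b/(s+b)) / b = s/((s+b)*(s+b)) := by
    field_simp
  have l2 : s/(s+b-1) - s/(s+b) = s/((s+b-1)*(s+b)) := by
    field_simp; ring
  have base : s/(s+b) * (b/(s+b)) / b < s/(s+b-1) - s/(s+b) := by
    rw [l1, l2]
    apply div_lt_div_of_pos_left hs (by positivity)
    nlinarith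
  have hPQ : (0:ℝ) < (s/(s+b)) ^ (a-1) * (b/(s+b)) ^ (b-1) := by positivity
  have h := mul_lt_mul_of_pos_right base hPQ
  have e : (s/(s+b)) ^ (a-1) * (s/(s+b)) * ((b/(s+b)) ^ (b-1) * (b/(s+b))) / b
      = s/(s+b) * (b/(s+b)) / b * ((s/(s+b)) ^ (a-1) * (b/(s+b)) ^ (b-1)) := by ring
  rw [e]; exact h

/-- For `0 < κ ≤ 1`, `a ≥ 1/2`, `b > 1`:
`I_{q(a,b+1,κ)}(a, b+1) < I_{q(a,b,κ)}(a, b)`. -/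
theorem regIncBeta_q_strict_decreasing (κ a b : ℝ) (hκ0 : 0 < κ) (hκ1 : κ ≤ 1)
    (ha : 1 / 2 ≤ a) (hb : 1 < b) :
    regIncBeta (qF a (b + 1) κ) a (b + 1) < regIncBeta (qF a b κ) a b := by
  have ha0 : (0:ℝ) < a := by linarith
  have hs : (0:ℝ) < κ * a := mul_pos hκ0 ha0
  have hsa : κ * a ≤ a := by nlinarith
  have hb0 : (0:ℝ) < b := by linarith
  have hu0 : (0:ℝ) < κ * a + b - 1 := by linarith
  have hu1 : (0:ℝ) < κ * a + b := by linarith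
  have hpa : (-1:ℝ) < a - 1 := by linarith
  simp only [regIncBeta, betaFun, qF]
  rw [show b + 1 - 1 = b from by ring, show κ * a + (b+1) - 1 = κ * a + b from by ring]
  set q' : ℝ := κ * a / (κ * a + b) with hq'def
  set q : ℝ := κ * a / (κ * a + b - 1) with hqdef
  have hq'0 : 0 < q' := by positivity
  have hq0 : 0 < q := by positivity
  have hq'q : q' < q := div_lt_div_of_pos_left hs hu0 (by linarith)
  have hq1 : q < 1 := (div_lt_one hu0).mpr (by linarith)
  have hq'1 : q' < 1 := lt_trans hq'q hq1
  have e1q' : 1 - q' = b / (κ * a + b) := by rw [hq'def]; field_simp; ring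
  have e1q : 1 - q = (b - 1) / (κ * a + b - 1) := by rw [hqdef]; field_simp; ring
  -- beta values
  have hB : 0 < ∫ t in (0:ℝ)..1, t ^ (a-1) * (1-t) ^ (b-1) :=
    betaPos (a-1) (b-1) 1 hpa (by linarith) one_pos le_rfl
  have hB' : 0 < ∫ t in (0:ℝ)..1, t ^ (a-1) * (1-t) ^ b :=
    betaPos (a-1) b 1 hpa hb0.le one_pos le_rfl
  set B : ℝ := ∫ t in (0:ℝ)..1, t ^ (a-1) * (1-t) ^ (b-1) with hBdef
  set B' : ℝ := ∫ t in (0:ℝ)..1, t ^ (a-1) * (1-t) ^ b with hB'def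
  set J : ℝ := ∫ t in (0:ℝ)..q, t ^ (a-1) * (1-t) ^ (b-1) with hJdef
  set J' : ℝ := ∫ t in (0:ℝ)..q', t ^ (a-1) * (1-t) ^ b with hJ'def
  set Jq' : ℝ := ∫ t in (0:ℝ)..q', t ^ (a-1) * (1-t) ^ (b-1) with hJq'def
  set I : ℝ := ∫ t in q'..q, t ^ (a-1) * (1-t) ^ (b-1) with hIdef
  have hrel : (a + b) * B' = b * B := by
    have h := starId a b 1 ha0 hb.le zero_le_one le_rfl
    rw [Real.one_rpow, show (1:ℝ) - 1 = 0 from by ring, Real.zero_rpow hb0.ne'] at h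
    rw [hBdef, hB'def]; linarith [h]
  have hstar : (a + b) * J' = b * Jq' + q' ^ a * (1-q') ^ b :=
    starId a b q' ha0 hb.le hq'0.le hq'1.le
  have hsplit : Jq' + I = J :=
    integral_add_adjacent_intervals (intBeta (a-1) (b-1) 0 q' hpa (by linarith))
      (intBeta (a-1) (b-1) q' q hpa (by linarith))
  set m : ℝ := min (q' ^ (a-1) * (1-q') ^ (b-1)) (q ^ (a-1) * (1-q) ^ (b-1)) with hmdef
  have hlow : (q - q') * m ≤ I := by
    have hmono := integral_mono_on (μ := volume) hq'q.le intervalIntegrable_const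
      (intBeta (a-1) (b-1) q' q hpa (by linarith))
      (fun t ht => pointwiseMin a b q' q t ha hb.le hq'0 hq'q hq1 ht)
    rw [intervalIntegral.integral_const, smul_eq_mul] at hmono
    exact hmono
  have hkey : q' ^ a * (1-q') ^ b / b < (q - q') * m := by
    rw [hmdef]
    rcases min_cases (q' ^ (a-1) * (1-q') ^ (b-1)) (q ^ (a-1) * (1-q) ^ (b-1)) with
      ⟨hmin, _⟩ | ⟨hmin, _⟩
    · rw [hmin, hq'def, e1q']
      have := branchQ' a b (κ * a) hb hs
      rw [hq'def] at e1q'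
      convert this using 3 <;> rw [hqdef, hq'def]
    · rw [hmin, hq'def, e1q', hqdef, e1q]
      have := branchQ a b (κ * a) ha hb hs hsa
      convert this using 3 <;> rw [hqdef, hq'def]
  have hIneq : q' ^ a * (1-q') ^ b < b * I := by
    have h1 : q' ^ a * (1-q') ^ b / b < I := lt_of_lt_of_le hkey hlow
    have h2 := mul_lt_mul_of_pos_left h1 hb0
    rwa [mul_div_cancel₀ _ hb0.ne'] at h2
  have hJlt : (a + b) * J' < b * J := by
    rw [hstar, ← hsplit]; nlinarith [hIneq]
  rw [div_lt_div_iff₀ hB' hB]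
  have hab : (0:ℝ) < a + b := by linarith
  have h2 : (a + b) * (J' * B) < (a + b) * (J * B') := by
    calc (a + b) * (J' * B) = (a + b) * J' * B := by ring
    _ < b * J * B := mul_lt_mul_of_pos_right hJlt hB
    _ = J * (b * B) := by ring
    _ = J * ((a + b) * B') := by rw [hrel]
    _ = (a + b) * (J * B') := by ring
  exact lt_of_mul_lt_mul_left h2 hab.le
end

section
/- For every real κ with 0 < κ ≤ 1, every real a ≥ 1/2, and every real b > 1, one has the strict inequality b · ∫_{q(a,b+1,κ)}^{q(a,b,κ)} t^(a-1) (1-t)^(b-1) dt > q(a,b+1,κ)^a · (1 − q(a,b+1,κ))^b. -/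
/-- `x ↦ x * (log (x+1) - log x)` is strictly monotone on `(0, ∞)`. -/
lemma aux_strictMonoOn :
    StrictMonoOn (fun x : ℝ => x * (Real.log (x + 1) - Real.log x)) (Set.Ioi 0) := by
  have hderiv : ∀ x : ℝ, 0 < x → HasDerivAt (fun x : ℝ => x * (Real.log (x + 1) - Real.log x))
      (1 * (Real.log (x + 1) - Real.log x) + x * ((x + 1)⁻¹ - x⁻¹)) x := by
    intro x hx
    have h1 : HasDerivAt (fun y : ℝ => Real.log (y + 1)) ((x + 1)⁻¹) x := by
      have := (Real.hasDerivAt_log (by linarith : x + 1 ≠ 0)).comp x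
        ((hasDerivAt_id x).add_const 1)
      simpa [Function.comp_def] using this
    have h2 : HasDerivAt Real.log x⁻¹ x := Real.hasDerivAt_log hx.ne'
    exact (hasDerivAt_id x).mul (h1.sub h2)
  apply strictMonoOn_of_deriv_pos (convex_Ioi 0)
  · exact fun x hx => ((hderiv x hx).continuousAt).continuousWithinAt
  · intro x hx
    rw [interior_Ioi] at hx
    replace hx : (0:ℝ) < x := hx
    rw [(hderiv x hx).deriv]
    have hx1 : (0:ℝ) < x + 1 := by linarith
    have hlog : Real.log (x / (x + 1)) < x / (x + 1) - 1 :=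
      Real.log_lt_sub_one_of_pos (div_pos hx hx1) (by
        intro h
        rw [div_eq_one_iff_eq hx1.ne'] at h
        linarith)
    rw [Real.log_div hx.ne' hx1.ne'] at hlog
    have he : x / (x + 1) - 1 = -(x + 1)⁻¹ := by
      field_simp
      ring
    rw [he] at hlog
    have hxe : x * ((x + 1)⁻¹ - x⁻¹) = -(x + 1)⁻¹ := by
      field_simp
      ring
    rw [hxe]
    linarith

/-- Key log inequality. -/
lemma aux_key {v u w : ℝ} (hv : 0 < v) (hvu : v < u) (huw : u ≤ w) :
    v * (Real.log (v + 1) - Real.log v) < w * (Real.log (u + 1) - Real.log u) := by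
  have hu : 0 < u := hv.trans hvu
  have h1 : v * (Real.log (v + 1) - Real.log v) < u * (Real.log (u + 1) - Real.log u) :=
    aux_strictMonoOn hv hu hvu
  have h2 : 0 < Real.log (u + 1) - Real.log u := by
    have := Real.log_lt_log hu (by linarith : u < u + 1)
    linarith
  nlinarith

set_option maxHeartbeats 2000000 in
/-- For `0 < κ ≤ 1`, `a ≥ 1/2`, `b > 1`:
`b ∫_{q(a,b+1,κ)}^{q(a,b,κ)} t^(a-1)(1-t)^(b-1) dt > q(a,b+1,κ)^a (1 - q(a,b+1,κ))^b`. -/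
theorem key_integral_inequality (κ a b : ℝ) (hκ0 : 0 < κ) (hκ1 : κ ≤ 1)
    (ha : 1 / 2 ≤ a) (hb : 1 < b) :
    qF a (b + 1) κ ^ a * (1 - qF a (b + 1) κ) ^ b <
      b * ∫ t in (qF a (b + 1) κ)..(qF a b κ), t ^ (a - 1) * (1 - t) ^ (b - 1) := by
  have ha0 : 0 < a := by linarith
  set A := κ * a with hAdef
  have hA : 0 < A := mul_pos hκ0 ha0
  have hAa : A ≤ a := by
    rw [hAdef]; nlinarith
  set S := A + b with hSdef
  have hS0 : 0 < S := by rw [hSdef]; linarith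
  have hSm : 0 < S - 1 := by rw [hSdef]; linarith
  have hb0 : 0 < b - 1 := by linarith
  have hp : qF a (b + 1) κ = A / S := by
    simp only [qF, hSdef, hAdef]
    ring
  have hq : qF a b κ = A / (S - 1) := by
    simp only [qF, hSdef, hAdef]
  rw [hp, hq]
  set p := A / S with hpdef
  set q := A / (S - 1) with hqdef
  have hp0 : 0 < p := div_pos hA hS0
  have hq1 : q < 1 := (div_lt_one hSm).mpr (by rw [hSdef]; linarith)
  have hpq : p < q := div_lt_div_of_pos_left hA hSm (by linarith)
  have hq0 : 0 < q := hp0.trans hpq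
  have hp1 : p < 1 := hpq.trans hq1
  have h1p : 1 - p = b / S := by
    rw [hpdef]
    field_simp [hS0.ne', hSm.ne']
    rw [hSdef]; ring
  have h1q : 1 - q = (b - 1) / (S - 1) := by
    rw [hqdef]
    field_simp [hS0.ne', hSm.ne']
    rw [hSdef]; ring
  have h1p0 : 0 < 1 - p := by linarith
  have h1q0 : 0 < 1 - q := by linarith
  -- pointwise lower bound
  have hbound : ∀ t ∈ Set.Icc p q,
      min (p ^ (a-1) * (1-p) ^ (b-1)) (q ^ (a-1) * (1-q) ^ (b-1))
        ≤ t ^ (a-1) * (1-t) ^ (b-1) := by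
    intro t ht
    obtain ⟨htp, htq⟩ := ht
    have ht0 : 0 < t := lt_of_lt_of_le hp0 htp
    have ht1 : t < 1 := lt_of_le_of_lt htq hq1
    rcases le_or_gt a 1 with hcase | hcase
    · refine le_trans (min_le_right _ _) ?_
      have h1 : q ^ (a-1) ≤ t ^ (a-1) :=
        Real.rpow_le_rpow_of_nonpos ht0 htq (by linarith)
      have h2 : (1-q) ^ (b-1) ≤ (1-t) ^ (b-1) :=
        Real.rpow_le_rpow h1q0.le (by linarith) (by linarith)
      exact mul_le_mul h1 h2 (Real.rpow_nonneg h1q0.le _) (Real.rpow_nonneg ht0.le _)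
    · -- concavity of `g`
      set g : ℝ → ℝ := fun t => (a-1) * Real.log t + (b-1) * Real.log (1-t) with hgdef
      have hc1 : ConcaveOn ℝ (Set.Icc p q) (fun t : ℝ => (a-1) * Real.log t) := by
        have hsub : Set.Icc p q ⊆ Set.Ioi (0:ℝ) := fun x hx => lt_of_lt_of_le hp0 hx.1
        have := ((strictConcaveOn_log_Ioi.concaveOn).subset hsub (convex_Icc p q)).smul
          (by linarith : (0:ℝ) ≤ a - 1)
        simpa [smul_eq_mul] using this
      have hc2 : ConcaveOn ℝ (Set.Icc p q) (fun t : ℝ => (b-1) * Real.log (1-t)) := by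
        refine ⟨convex_Icc p q, ?_⟩
        intro x hx y hy α β hα hβ hαβ
        have hx1 : (0:ℝ) < 1 - x := by
          linarith [lt_of_le_of_lt hx.2 hq1]
        have hy1 : (0:ℝ) < 1 - y := by linarith [lt_of_le_of_lt hy.2 hq1]
        have hlog := (strictConcaveOn_log_Ioi.concaveOn).2 (Set.mem_Ioi.mpr hx1)
          (Set.mem_Ioi.mpr hy1) hα hβ hαβ
        simp only [smul_eq_mul] at hlog ⊢
        have he : 1 - (α * x + β * y) = α * (1 - x) + β * (1 - y) := by
          have : α + β = 1 := hαβ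
          linarith [this]
        rw [he]
        nlinarith [hlog]
      have hgc : ConcaveOn ℝ (Set.Icc p q) g := hc1.add hc2
      have hseg : t ∈ segment ℝ p q := by
        rw [segment_eq_Icc hpq.le]; exact ⟨htp, htq⟩
      have hmin := hgc.ge_on_segment (Set.left_mem_Icc.mpr hpq.le)
        (Set.right_mem_Icc.mpr hpq.le) hseg
      have hrepr : ∀ x : ℝ, 0 < x → x < 1 →
          x ^ (a-1) * (1-x) ^ (b-1) = Real.exp (g x) := by
        intro x hx0 hx1
        rw [Real.rpow_def_of_pos hx0, Real.rpow_def_of_pos (by linarith), ← Real.exp_add, hgdef]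
        congr 1
        ring
      rw [hrepr t ht0 ht1, hrepr p hp0 hp1, hrepr q hq0 hq1]
      rcases le_total (g p) (g q) with h | h
      · exact le_trans (min_le_left _ _)
          (Real.exp_le_exp.mpr (by rwa [min_eq_left h] at hmin))
      · exact le_trans (min_le_right _ _)
          (Real.exp_le_exp.mpr (by rwa [min_eq_right h] at hmin))
  -- integrability and integral lower bound
  have hcont : ContinuousOn (fun t : ℝ => t ^ (a-1) * (1-t) ^ (b-1)) (Set.uIcc p q) := by
    rw [Set.uIcc_of_le hpq.le]
    intro t ht
    have ht0 : 0 < t := lt_of_lt_of_le hp0 ht.1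
    have hca : ContinuousAt (fun t : ℝ => t ^ (a-1) * (1-t) ^ (b-1)) t := by
      apply ContinuousAt.mul
      · exact Real.continuousAt_rpow_const t (a-1) (Or.inl ht0.ne')
      · exact (Real.continuousAt_rpow_const (1-t) (b-1) (Or.inr (by linarith))).comp
          ((continuous_const.sub continuous_id).continuousAt)
    exact hca.continuousWithinAt
  have hint : IntervalIntegrable (fun t : ℝ => t ^ (a-1) * (1-t) ^ (b-1))
      MeasureTheory.volume p q := hcont.intervalIntegrable
  have hIge : (q - p) * min (p ^ (a-1) * (1-p) ^ (b-1)) (q ^ (a-1) * (1-q) ^ (b-1))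
      ≤ ∫ t in p..q, t ^ (a-1) * (1-t) ^ (b-1) := by
    have := intervalIntegral.integral_mono_on hpq.le intervalIntegrable_const hint hbound
    simpa using this
  -- the key strict inequality at the left endpoint
  have hfp : 0 < p ^ (a-1) * (1-p) ^ (b-1) :=
    mul_pos (Real.rpow_pos_of_pos hp0 _) (Real.rpow_pos_of_pos h1p0 _)
  have hr1 : 1 < S / (S - 1) := (one_lt_div hSm).mpr (by linarith)
  have hii : p ^ (a-1) * (1-p) ^ (b-1) < S/(S-1) * (q ^ (a-1) * (1-q) ^ (b-1)) := by
    have hB := aux_key (v := b-1) (u := S-1) (w := a+b-1) hb0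
      (by rw [hSdef]; linarith) (by rw [hSdef]; linarith)
    have e1 : b - 1 + 1 = b := by ring
    have e2 : S - 1 + 1 = S := by ring
    rw [e1, e2] at hB
    rw [h1p, h1q, hpdef, hqdef]
    rw [Real.rpow_def_of_pos (div_pos hA hS0), Real.rpow_def_of_pos (div_pos (by linarith : (0:ℝ) < b) hS0),
        Real.rpow_def_of_pos (div_pos hA hSm), Real.rpow_def_of_pos (div_pos hb0 hSm),
        ← Real.exp_add, ← Real.exp_add]
    have hSr : S / (S-1) = Real.exp (Real.log S - Real.log (S-1)) := by
      rw [← Real.log_div hS0.ne' hSm.ne', Real.exp_log (div_pos hS0 hSm)]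
    rw [hSr, ← Real.exp_add, Real.exp_lt_exp]
    rw [Real.log_div hA.ne' hS0.ne', Real.log_div (by linarith : (b:ℝ) ≠ 0) hS0.ne',
        Real.log_div hA.ne' hSm.ne', Real.log_div hb0.ne' hSm.ne']
    nlinarith [hB]
  have hkey : p ^ (a-1) * (1-p) ^ (b-1)
      < S/(S-1) * min (p ^ (a-1) * (1-p) ^ (b-1)) (q ^ (a-1) * (1-q) ^ (b-1)) := by
    rcases min_cases (p ^ (a-1) * (1-p) ^ (b-1)) (q ^ (a-1) * (1-q) ^ (b-1)) with
      ⟨hmeq, _⟩ | ⟨hmeq, _⟩ <;> rw [hmeq]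
    · exact lt_of_eq_of_lt (one_mul _).symm (mul_lt_mul_of_pos_right hr1 hfp)
    · exact hii
  -- assemble
  have e1 : p ^ a = p ^ (a-1) * p := by
    rw [← Real.rpow_add_one hp0.ne' (a-1)]
    norm_num
  have e2 : (1-p) ^ b = (1-p) ^ (b-1) * (1-p) := by
    rw [← Real.rpow_add_one h1p0.ne' (b-1)]
    norm_num
  calc p ^ a * (1-p) ^ b
      = (p * (1-p)) * (p ^ (a-1) * (1-p) ^ (b-1)) := by rw [e1, e2]; ring
    _ < (p * (1-p)) * (S/(S-1) * min (p ^ (a-1) * (1-p) ^ (b-1)) (q ^ (a-1) * (1-q) ^ (b-1))) :=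
        mul_lt_mul_of_pos_left hkey (mul_pos hp0 h1p0)
    _ = b * ((q - p) * min (p ^ (a-1) * (1-p) ^ (b-1)) (q ^ (a-1) * (1-q) ^ (b-1))) := by
        have hsc : (p * (1-p)) * (S/(S-1)) = b * (q - p) := by
          rw [h1p, hpdef, hqdef]
          field_simp [hS0.ne', hSm.ne']
          ring
        rw [← mul_assoc, hsc, mul_assoc]
    _ ≤ b * ∫ t in p..q, t ^ (a-1) * (1-t) ^ (b-1) :=
        mul_le_mul_of_nonneg_left hIge (by linarith)
end

section
/- For every real κ with 0 < κ ≤ 1 and every real a > 0, the limit as b → ∞ (b real) of I_{q(a,b,κ)}(a,b) equals (∫₀^{κa} t^(a-1) e^(−t) dt) / Γ(a). -/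
open Filter

open MeasureTheory Set

lemma aux_tendsto_pow_exp (c s : ℝ) (hs : 0 ≤ s) :
    Tendsto (fun b : ℝ => (1 - s / (c + b - 1)) ^ (b - 1)) atTop (nhds (Real.exp (-s))) := by
  have hM : Tendsto (fun b : ℝ => c + b - 1) atTop atTop := by
    have h := tendsto_atTop_add_const_right atTop (c - 1) tendsto_id
    refine h.congr fun b => by simp [id]; ring
  have h2 : Tendsto (fun x : ℝ => 1 + -s / x) atTop (nhds 1) := by
    have := (tendsto_const_nhds (α := ℝ) (x := -s) (f := atTop)).div_atTop tendsto_id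
    simpa using tendsto_const_nhds.add this
  have h3 : Tendsto (fun x : ℝ => (1 + -s / x) ^ (-c)) atTop (nhds 1) := by
    have hcont : ContinuousAt (fun y : ℝ => y ^ (-c)) 1 :=
      Real.continuousAt_rpow_const 1 (-c) (Or.inl one_ne_zero)
    simpa [Function.comp_def] using hcont.tendsto.comp h2
  have hF : Tendsto (fun x : ℝ => (1 + -s / x) ^ x * (1 + -s / x) ^ (-c)) atTop
      (nhds (Real.exp (-s))) := by
    simpa using (Real.tendsto_one_add_div_rpow_exp (-s)).mul h3
  refine ((hF.comp hM)).congr' ?_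
  filter_upwards [eventually_ge_atTop (s + 2 - c)] with b hb
  have hMb : s + 1 ≤ c + b - 1 := by linarith
  have hM0 : (0:ℝ) < c + b - 1 := by linarith
  have hbase : 0 < 1 - s / (c + b - 1) := by
    rw [sub_pos, div_lt_one hM0]; linarith
  have : 1 + -s / (c + b - 1) = 1 - s / (c + b - 1) := by ring
  simp only [Function.comp, this]
  rw [← Real.rpow_add hbase]
  congr 1
  ring

lemma aux_rpow_le_exp {s M p : ℝ} (h0 : 0 ≤ s) (h1 : s ≤ M) (hM : 0 < M) (hp : 0 ≤ p) :
    (1 - s / M) ^ p ≤ Real.exp (-(s / M) * p) := by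
  have hu0 : 0 ≤ 1 - s / M := by rw [sub_nonneg, div_le_one hM]; exact h1
  have hle : 1 - s / M ≤ Real.exp (-(s / M)) := by linarith [Real.add_one_le_exp (-(s / M))]
  calc (1 - s / M) ^ p ≤ (Real.exp (-(s / M))) ^ p := Real.rpow_le_rpow hu0 hle hp
    _ = Real.exp (-(s / M) * p) := (Real.exp_mul _ p).symm

lemma aux_subst (a b c M : ℝ) (hM : 0 < M) (hc : 0 ≤ c) :
    (∫ t in (0:ℝ)..(c / M), t ^ (a - 1) * (1 - t) ^ (b - 1))
      = M ^ (-a) * ∫ s in (0:ℝ)..c, s ^ (a - 1) * (1 - s / M) ^ (b - 1) := by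
  have h1 := intervalIntegral.integral_comp_div (a := (0:ℝ)) (b := c)
    (f := fun t => t ^ (a - 1) * (1 - t) ^ (b - 1)) hM.ne'
  rw [zero_div] at h1
  have h2 : (∫ s in (0:ℝ)..c, (s / M) ^ (a - 1) * (1 - s / M) ^ (b - 1))
      = M ^ (-(a-1)) * ∫ s in (0:ℝ)..c, s ^ (a - 1) * (1 - s / M) ^ (b - 1) := by
    rw [← intervalIntegral.integral_const_mul]
    refine intervalIntegral.integral_congr fun s hs => ?_
    rw [Set.uIcc_of_le hc] at hs
    rw [Real.div_rpow hs.1 hM.le, Real.rpow_neg hM.le]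
    ring
  have h3 : (∫ t in (0:ℝ)..(c / M), t ^ (a - 1) * (1 - t) ^ (b - 1))
      = M⁻¹ * ∫ s in (0:ℝ)..c, (s / M) ^ (a - 1) * (1 - s / M) ^ (b - 1) := by
    rw [h1, smul_eq_mul, ← mul_assoc, inv_mul_cancel₀ hM.ne', one_mul]
  rw [h3, h2, ← mul_assoc]
  congr 1
  rw [← Real.rpow_neg_one M, ← Real.rpow_add hM]
  congr 1
  ring

lemma aux_tendsto_num (κ a : ℝ) (hκ0 : 0 < κ) (hκ1 : κ ≤ 1) (ha : 0 < a) :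
    Tendsto (fun b : ℝ => ∫ s in (0:ℝ)..(κ * a), s ^ (a - 1) * (1 - s / (κ * a + b - 1)) ^ (b - 1))
      atTop (nhds (∫ t in (0:ℝ)..(κ * a), t ^ (a - 1) * Real.exp (-t))) := by
  have hc : 0 < κ * a := mul_pos hκ0 ha
  simp only [intervalIntegral.integral_of_le hc.le]
  refine tendsto_integral_filter_of_dominated_convergence (fun s => s ^ (a - 1)) ?_ ?_ ?_ ?_
  · refine Eventually.of_forall fun b => ?_
    exact ((measurable_id.pow_const _).mul
      ((measurable_const.sub (measurable_id.div_const _)).pow_const _)).aestronglyMeasurable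
  · filter_upwards [eventually_ge_atTop (a + 2)] with b hb
    refine (ae_restrict_iff' measurableSet_Ioc).2 (Eventually.of_forall fun s hs => ?_)
    have hs0 : 0 < s := hs.1
    have hsM : s ≤ κ * a + b - 1 := by have := hs.2; linarith
    have hM0 : (0:ℝ) < κ * a + b - 1 := by nlinarith [mul_pos hκ0 ha]
    have h1 : 0 ≤ 1 - s / (κ * a + b - 1) := by
      rw [sub_nonneg, div_le_one hM0]; exact hsM
    have h2 : (1 - s / (κ * a + b - 1)) ^ (b - 1) ≤ 1 := by
      refine Real.rpow_le_one h1 (by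
        have : 0 ≤ s / (κ * a + b - 1) := div_nonneg hs0.le hM0.le
        linarith) (by linarith)
    rw [Real.norm_eq_abs, abs_of_nonneg (mul_nonneg (Real.rpow_nonneg hs0.le _)
      (Real.rpow_nonneg h1 _))]
    calc s ^ (a - 1) * (1 - s / (κ * a + b - 1)) ^ (b - 1)
        ≤ s ^ (a - 1) * 1 := by
          exact mul_le_mul_of_nonneg_left h2 (Real.rpow_nonneg hs0.le _)
      _ = s ^ (a - 1) := mul_one _
  · exact (intervalIntegral.intervalIntegrable_rpow' (by linarith : (-1:ℝ) < a - 1)).1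
  · refine (ae_restrict_iff' measurableSet_Ioc).2 (Eventually.of_forall fun s hs => ?_)
    exact (aux_tendsto_pow_exp (κ * a) s hs.1.le).const_mul _

lemma aux_interval_eq_Ioi (a b c : ℝ) (hc : 0 < c) (hb : 2 ≤ b) :
    (∫ s in (0:ℝ)..(c + b - 1), s ^ (a - 1) * (1 - s / (c + b - 1)) ^ (b - 1))
      = ∫ s in Ioi (0:ℝ), s ^ (a - 1) * (max (1 - s / (c + b - 1)) 0) ^ (b - 1) := by
  have hM : (0:ℝ) < c + b - 1 := by linarith
  rw [intervalIntegral.integral_of_le hM.le]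
  rw [show (∫ s in Ioc (0:ℝ) (c + b - 1), s ^ (a - 1) * (1 - s / (c + b - 1)) ^ (b - 1))
      = ∫ s in Ioc (0:ℝ) (c + b - 1),
          s ^ (a - 1) * (max (1 - s / (c + b - 1)) 0) ^ (b - 1) from
    setIntegral_congr_fun measurableSet_Ioc fun s hs => by
      rw [max_eq_left (by rw [sub_nonneg, div_le_one hM]; exact hs.2)]]
  refine (setIntegral_eq_of_subset_of_ae_diff_eq_zero measurableSet_Ioi.nullMeasurableSet
    (Ioc_subset_Ioi_self) ?_).symm
  refine Eventually.of_forall fun s hs => ?_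
  rcases hs with ⟨hs1, hs2⟩
  have hsM : c + b - 1 < s := by
    by_contra h
    exact hs2 ⟨hs1, not_lt.mp h⟩
  have : max (1 - s / (c + b - 1)) 0 = 0 := by
    rw [max_eq_right]
    rw [sub_nonpos, le_div_iff₀ hM]
    nlinarith
  rw [this, Real.zero_rpow (by linarith : b - 1 ≠ 0), mul_zero]

lemma aux_tendsto_denom (κ a : ℝ) (hκ0 : 0 < κ) (hκ1 : κ ≤ 1) (ha : 0 < a) :
    Tendsto (fun b : ℝ => ∫ s in Ioi (0:ℝ),
        s ^ (a - 1) * (max (1 - s / (κ * a + b - 1)) 0) ^ (b - 1)) atTop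
      (nhds (Real.Gamma a)) := by
  have hG : Real.Gamma a = ∫ s in Ioi (0:ℝ), s ^ (a - 1) * Real.exp (-s) := by
    rw [Real.Gamma_eq_integral ha]
    exact setIntegral_congr_fun measurableSet_Ioi fun s _ => mul_comm _ _
  rw [hG]
  refine tendsto_integral_filter_of_dominated_convergence
    (fun s => s ^ (a - 1) * Real.exp (-(2⁻¹) * s)) ?_ ?_ ?_ ?_
  · refine Eventually.of_forall fun b => ?_
    exact ((measurable_id.pow_const _).mul
      (((measurable_const.sub (measurable_id.div_const _)).max measurable_const).pow_const
        _)).aestronglyMeasurable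
  · filter_upwards [eventually_ge_atTop (a + 2)] with b hb
    refine (ae_restrict_iff' measurableSet_Ioi).2 (Eventually.of_forall fun s hs => ?_)
    have hs0 : (0:ℝ) < s := hs
    have hM0 : (0:ℝ) < κ * a + b - 1 := by nlinarith [mul_pos hκ0 ha]
    have hbound_nonneg : 0 ≤ s ^ (a - 1) * Real.exp (-(2⁻¹) * s) :=
      mul_nonneg (Real.rpow_nonneg hs0.le _) (Real.exp_pos _).le
    rw [Real.norm_eq_abs, abs_of_nonneg (mul_nonneg (Real.rpow_nonneg hs0.le _)
      (Real.rpow_nonneg (le_max_right _ _) _))]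
    rcases le_or_gt s (κ * a + b - 1) with hsM | hsM
    · rw [max_eq_left (by rw [sub_nonneg, div_le_one hM0]; exact hsM)]
      refine mul_le_mul_of_nonneg_left ?_ (Real.rpow_nonneg hs0.le _)
      calc (1 - s / (κ * a + b - 1)) ^ (b - 1)
          ≤ Real.exp (-(s / (κ * a + b - 1)) * (b - 1)) :=
            aux_rpow_le_exp hs0.le hsM hM0 (by linarith)
        _ ≤ Real.exp (-(2⁻¹) * s) := by
            rw [Real.exp_le_exp]
            have hκa : κ * a ≤ b - 1 := by nlinarith
            rw [neg_mul, neg_mul, neg_le_neg_iff, div_mul_eq_mul_div, le_div_iff₀ hM0]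
            nlinarith
    · rw [max_eq_right (by rw [sub_nonpos, le_div_iff₀ hM0]; nlinarith),
        Real.zero_rpow (by linarith : b - 1 ≠ 0), mul_zero]
      exact hbound_nonneg
  · have h := integrableOn_rpow_mul_exp_neg_mul_rpow
      (by linarith : (-1:ℝ) < a - 1) (by norm_num : (0:ℝ) < 1) (by norm_num : (0:ℝ) < 2⁻¹)
    refine h.congr_fun (fun s hs => ?_) measurableSet_Ioi
    simp only [Real.rpow_one]
  · refine (ae_restrict_iff' measurableSet_Ioi).2 (Eventually.of_forall fun s hs => ?_)
    have hs0 : (0:ℝ) < s := hs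
    refine ((aux_tendsto_pow_exp (κ * a) s hs0.le).const_mul (s ^ (a - 1))).congr' ?_
    filter_upwards [eventually_ge_atTop (s + 2 - κ * a)] with b hb
    have hM0 : (0:ℝ) < κ * a + b - 1 := by linarith
    rw [max_eq_left (by rw [sub_nonneg, div_le_one hM0]; linarith)]

/-- For `0 < κ ≤ 1` and `a > 0`, `I_{q(a,b,κ)}(a,b) → (∫₀^{κa} t^(a-1) e^(-t) dt)/Γ(a)`
as `b → ∞`. -/
theorem tendsto_regIncBeta_q_atTop (κ a : ℝ) (hκ0 : 0 < κ) (hκ1 : κ ≤ 1) (ha : 0 < a) :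
    Tendsto (fun b : ℝ => regIncBeta (qF a b κ) a b) atTop
      (nhds ((∫ t in (0:ℝ)..(κ * a), t ^ (a - 1) * Real.exp (-t)) / Real.Gamma a)) := by
  have hc : 0 < κ * a := mul_pos hκ0 ha
  have hdiv : Tendsto (fun b : ℝ =>
      (∫ s in (0:ℝ)..(κ * a), s ^ (a - 1) * (1 - s / (κ * a + b - 1)) ^ (b - 1)) /
      (∫ s in Ioi (0:ℝ), s ^ (a - 1) * (max (1 - s / (κ * a + b - 1)) 0) ^ (b - 1)))
      atTop (nhds ((∫ t in (0:ℝ)..(κ * a), t ^ (a - 1) * Real.exp (-t)) / Real.Gamma a)) :=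
    (aux_tendsto_num κ a hκ0 hκ1 ha).div (aux_tendsto_denom κ a hκ0 hκ1 ha)
      (Real.Gamma_pos_of_pos ha).ne'
  refine hdiv.congr' ?_
  filter_upwards [eventually_ge_atTop (a + 2)] with b hb
  have hM : (0:ℝ) < κ * a + b - 1 := by linarith
  have hq : qF a b κ = κ * a / (κ * a + b - 1) := rfl
  have hnum := aux_subst a b (κ * a) (κ * a + b - 1) hM hc.le
  have hden := aux_subst a b (κ * a + b - 1) (κ * a + b - 1) hM hM.le
  rw [div_self hM.ne'] at hden
  have hbeta : betaFun a b = (κ * a + b - 1) ^ (-a) *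
      ∫ s in Ioi (0:ℝ), s ^ (a - 1) * (max (1 - s / (κ * a + b - 1)) 0) ^ (b - 1) := by
    rw [betaFun, hden, aux_interval_eq_Ioi a b (κ * a) hc (by linarith)]
  rw [regIncBeta, hq, hnum, hbeta,
    mul_div_mul_left _ _ (Real.rpow_pos_of_pos hM (-a)).ne']
end

section
/- For every fixed real a ≥ 1/2 and real b > 1, the function κ ↦ I_{q(a,b,κ)}(a,b) is strictly increasing on (0, ∞); in particular, for every κ > 1 one has I_{q(a,b,κ)}(a,b) > I_{q(a,b,1)}(a,b). -/
open MeasureTheory Set in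
lemma cont_h (b : ℝ) (hb : 1 < b) : Continuous (fun t : ℝ => (1 - t) ^ (b - 1)) := by
  rw [continuous_iff_continuousAt]
  intro t
  exact (Real.continuousAt_rpow_const (1 - t) (b - 1) (Or.inr (by linarith))).comp
    (by fun_prop)

open MeasureTheory Set in
lemma f_intble (a b : ℝ) (ha : 1/2 ≤ a) (hb : 1 < b) (x y : ℝ) :
    IntervalIntegrable (fun t : ℝ => t ^ (a-1) * (1-t) ^ (b-1)) volume x y :=
  (intervalIntegral.intervalIntegrable_rpow' (by linarith)).mul_continuousOn
    (Continuous.continuousOn (cont_h b hb))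

lemma int_pos (a b : ℝ) (ha : 1/2 ≤ a) (hb : 1 < b) (x y : ℝ)
    (hx : 0 ≤ x) (hxy : x < y) (hy : y ≤ 1) :
    0 < ∫ t in x..y, t ^ (a-1) * (1-t) ^ (b-1) := by
  apply intervalIntegral.intervalIntegral_pos_of_pos_on (f_intble a b ha hb x y)
  · intro t ht
    have h1 : 0 < t := lt_of_le_of_lt hx ht.1
    have h2 : 0 < 1 - t := by have := lt_of_lt_of_le ht.2 hy; linarith
    positivity
  · exact hxy

lemma qF_mem (a b κ : ℝ) (ha : 1/2 ≤ a) (hb : 1 < b) (hκ : 0 < κ) :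
    0 < qF a b κ ∧ qF a b κ < 1 := by
  have h1 : 0 < κ * a := by nlinarith
  have h2 : 0 < κ * a + b - 1 := by linarith
  rw [qF]
  exact ⟨div_pos h1 h2, by rw [div_lt_one h2]; linarith⟩

/-- For fixed `a ≥ 1/2` and `b > 1`, `κ ↦ I_{q(a,b,κ)}(a,b)` is strictly increasing on
`(0, ∞)`; in particular for `κ > 1`, `I_{q(a,b,κ)}(a,b) > I_{q(a,b,1)}(a,b)`. -/
theorem regIncBeta_strictMono_in_kappa (a b : ℝ) (ha : 1 / 2 ≤ a) (hb : 1 < b) :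
    StrictMonoOn (fun κ : ℝ => regIncBeta (qF a b κ) a b) (Set.Ioi 0) ∧
      ∀ κ : ℝ, 1 < κ → regIncBeta (qF a b 1) a b < regIncBeta (qF a b κ) a b := by
  have hB : 0 < betaFun a b := int_pos a b (by linarith) hb 0 1 le_rfl one_pos le_rfl
  have key : StrictMonoOn (fun κ : ℝ => regIncBeta (qF a b κ) a b) (Set.Ioi 0) := by
    intro κ₁ hκ₁ κ₂ hκ₂ hlt
    simp only [Set.mem_Ioi] at hκ₁ hκ₂
    obtain ⟨hq1, hq1'⟩ := qF_mem a b κ₁ ha hb hκ₁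
    obtain ⟨hq2, hq2'⟩ := qF_mem a b κ₂ ha hb hκ₂
    have hqlt : qF a b κ₁ < qF a b κ₂ := by
      have h1 : 0 < κ₁ * a + b - 1 := by nlinarith
      have h2 : 0 < κ₂ * a + b - 1 := by nlinarith
      rw [qF, qF, div_lt_div_iff₀ h1 h2]
      nlinarith [mul_pos (show (0:ℝ) < a by linarith) (mul_pos (show (0:ℝ) < b - 1 by linarith) (show (0:ℝ) < κ₂ - κ₁ by linarith))]
    have hsplit : (∫ t in (0:ℝ)..qF a b κ₁, t ^ (a-1) * (1-t) ^ (b-1))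
        + (∫ t in qF a b κ₁..qF a b κ₂, t ^ (a-1) * (1-t) ^ (b-1))
        = ∫ t in (0:ℝ)..qF a b κ₂, t ^ (a-1) * (1-t) ^ (b-1) :=
      intervalIntegral.integral_add_adjacent_intervals
        (f_intble a b ha hb _ _) (f_intble a b ha hb _ _)
    have hpos := int_pos a b ha hb (qF a b κ₁) (qF a b κ₂) hq1.le hqlt hq2'.le
    simp only [regIncBeta]
    rw [div_lt_div_iff_of_pos_right hB]
    linarith
  exact ⟨key, fun κ hκ => key (Set.mem_Ioi.mpr one_pos) (Set.mem_Ioi.mpr (by linarith)) hκ⟩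
end

section
/- For every real κ with 0 < κ < 1, the infimum over all real a > 0 of (∫₀^{κa} t^(a-1) e^(−t) dt) / Γ(a) equals 0. -/
open MeasureTheory Set Real

lemma key_bound (κ a : ℝ) (hκ0 : 0 < κ) (hκ1 : κ < 1) (ha : 0 < a) :
    (∫ t in (0:ℝ)..(κ * a), t ^ (a - 1) * Real.exp (-t)) ≤
      (κ * Real.exp (1 - κ)) ^ a * Real.Gamma a := by
  have hκa : 0 ≤ κ * a := by positivity
  set c := Real.exp ((1 - κ) * a) with hc
  set g : ℝ → ℝ := fun t => c * (t ^ (a - 1) * Real.exp (-(κ⁻¹ * t))) with hg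
  have hgint : IntegrableOn (fun t : ℝ => t ^ (a - 1) * Real.exp (-(κ⁻¹ * t))) (Ioi 0) := by
    have := integrableOn_rpow_mul_exp_neg_mul_rpow (show (-1:ℝ) < a - 1 by linarith)
      one_pos (inv_pos.2 hκ0)
    simpa [rpow_one, neg_mul] using this
  have hgint' : IntegrableOn g (Ioi 0) := (hgint.const_mul c)
  have hfint : IntegrableOn (fun t : ℝ => t ^ (a - 1) * Real.exp (-t)) (Ioc 0 (κ * a)) := by
    have := (Real.GammaIntegral_convergent ha).mono_set (Ioc_subset_Ioi_self : Ioc 0 (κ*a) ⊆ Ioi 0)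
    exact this.congr_fun (fun x hx => mul_comm _ _) measurableSet_Ioc
  have hpt : ∀ t ∈ Ioc 0 (κ * a), t ^ (a - 1) * Real.exp (-t) ≤ g t := by
    intro t ht
    have h1 : Real.exp (-t) ≤ c * Real.exp (-(κ⁻¹ * t)) := by
      rw [hc, ← Real.exp_add, Real.exp_le_exp]
      have h2 : (κ⁻¹ - 1) * t ≤ (κ⁻¹ - 1) * (κ * a) := by
        apply mul_le_mul_of_nonneg_left ht.2
        have h1i : (1:ℝ) ≤ κ⁻¹ := (one_le_inv₀ hκ0).2 hκ1.le
        linarith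
      have h3 : (κ⁻¹ - 1) * (κ * a) = (1 - κ) * a := by field_simp
      nlinarith [h2, h3]
    calc t ^ (a - 1) * Real.exp (-t) ≤ t ^ (a - 1) * (c * Real.exp (-(κ⁻¹ * t))) :=
          mul_le_mul_of_nonneg_left h1 (Real.rpow_nonneg ht.1.le _)
      _ = g t := by ring
  have step1 : (∫ t in (0:ℝ)..(κ * a), t ^ (a - 1) * Real.exp (-t))
      = ∫ t in Ioc 0 (κ * a), t ^ (a - 1) * Real.exp (-t) := by
    rw [intervalIntegral.integral_of_le hκa]
  have step2 : (∫ t in Ioc 0 (κ * a), t ^ (a - 1) * Real.exp (-t)) ≤ ∫ t in Ioc 0 (κ * a), g t :=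
    setIntegral_mono_on hfint (hgint'.mono_set Ioc_subset_Ioi_self) measurableSet_Ioc hpt
  have step3 : (∫ t in Ioc 0 (κ * a), g t) ≤ ∫ t in Ioi 0, g t := by
    apply setIntegral_mono_set hgint'
    · filter_upwards [self_mem_ae_restrict measurableSet_Ioi] with t ht
      have : (0:ℝ) < t := ht
      positivity
    · exact HasSubset.Subset.eventuallyLE Ioc_subset_Ioi_self
  have step4 : (∫ t in Ioi 0, g t) = c * (κ ^ a * Real.Gamma a) := by
    rw [hg]
    rw [integral_const_mul, Real.integral_rpow_mul_exp_neg_mul_Ioi ha (inv_pos.2 hκ0)]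
    congr 2
    rw [one_div, inv_inv]
  have final : c * (κ ^ a * Real.Gamma a) = (κ * Real.exp (1 - κ)) ^ a * Real.Gamma a := by
    rw [Real.mul_rpow hκ0.le (Real.exp_pos _).le, ← Real.exp_mul, hc]
    ring_nf
  linarith [step2, step3, step4.le, final.le, step1.le]

/-- For `0 < κ < 1`, the infimum over `a > 0` of the regularized lower incomplete Gamma
function `(∫₀^{κa} t^(a-1) e^(-t) dt)/Γ(a)` equals `0`. -/
theorem inf_reg_inc_gamma_eq_zero (κ : ℝ) (hκ0 : 0 < κ) (hκ1 : κ < 1) :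
    sInf { y : ℝ | ∃ a : ℝ, 0 < a ∧
      y = (∫ t in (0:ℝ)..(κ * a), t ^ (a - 1) * Real.exp (-t)) / Real.Gamma a } = 0 := by
  set S := { y : ℝ | ∃ a : ℝ, 0 < a ∧
      y = (∫ t in (0:ℝ)..(κ * a), t ^ (a - 1) * Real.exp (-t)) / Real.Gamma a } with hS
  have hmem : ∀ a : ℝ, 0 < a →
      ((∫ t in (0:ℝ)..(κ * a), t ^ (a - 1) * Real.exp (-t)) / Real.Gamma a) ∈ S :=
    fun a ha => ⟨a, ha, rfl⟩
  have hnonneg : ∀ y ∈ S, 0 ≤ y := by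
    rintro y ⟨a, ha, rfl⟩
    apply div_nonneg _ (Real.Gamma_nonneg_of_nonneg ha.le)
    apply intervalIntegral.integral_nonneg (by positivity)
    intro t ht
    have : 0 ≤ t := ht.1
    positivity
  have hne : S.Nonempty := ⟨_, hmem 1 one_pos⟩
  have hbdd : BddBelow S := ⟨0, hnonneg⟩
  set r : ℝ := κ * Real.exp (1 - κ) with hr
  have hr0 : 0 < r := by positivity
  have hr1 : r < 1 := by
    have h := Real.add_one_lt_exp (show κ - 1 ≠ 0 by linarith)
    have h2 : κ < Real.exp (κ - 1) := by linarith
    have h3 : r < Real.exp (κ - 1) * Real.exp (1 - κ) :=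
      mul_lt_mul_of_pos_right h2 (Real.exp_pos _)
    rwa [← Real.exp_add, show κ - 1 + (1 - κ) = 0 by ring, Real.exp_zero] at h3
  have hub : ∀ a : ℝ, 0 < a →
      (∫ t in (0:ℝ)..(κ * a), t ^ (a - 1) * Real.exp (-t)) / Real.Gamma a ≤ r ^ a := by
    intro a ha
    rw [div_le_iff₀ (Real.Gamma_pos_of_pos ha)]
    exact key_bound κ a hκ0 hκ1 ha
  refine le_antisymm ?_ (le_csInf hne hnonneg)
  refine le_of_forall_pos_le_add (fun ε hε => ?_)
  -- find a with r ^ a < ε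
  have hlogr : Real.log r < 0 := Real.log_neg hr0 hr1
  set a : ℝ := max 1 (Real.log ε / Real.log r + 1) with ha
  have ha0 : 0 < a := lt_of_lt_of_le one_pos (le_max_left _ _)
  have hra : r ^ a < ε := by
    rw [← Real.exp_log hr0, ← Real.exp_mul, ← Real.exp_log hε, Real.exp_lt_exp]
    have h1 : Real.log ε / Real.log r + 1 ≤ a := le_max_right _ _
    have h2 : Real.log ε / Real.log r < a := by linarith
    calc Real.log r * a < Real.log r * (Real.log ε / Real.log r) :=
          (mul_lt_mul_left_of_neg hlogr).mpr h2
      _ = Real.log ε := by rw [mul_comm, div_mul_cancel₀ _ hlogr.ne]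
  have : sInf S ≤ r ^ a := csInf_le_of_le hbdd (hmem a ha0) (hub a ha0)
  linarith
end

section
/- The infimum over all real a > 0 of (∫₀^{a} t^(a-1) e^(−t) dt) / Γ(a) equals 1/2. -/
open MeasureTheory Real Set Filter

namespace RIG

/-- lower exponent function -/
noncomputable def gm (a s : ℝ) : ℝ := Real.exp (-(a * (Real.exp (-s) - 1 + s)))
/-- upper exponent function -/
noncomputable def gp (a s : ℝ) : ℝ := Real.exp (-(a * (Real.exp s - 1 - s)))

lemma exp_cubic_bound {s : ℝ} (h : |s| ≤ 1) :
    |Real.exp s - (1 + s + s^2/2)| ≤ (2/9) * |s|^3 := by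
  have := Real.exp_bound h (by norm_num : 0 < 3)
  have e : ∑ m ∈ Finset.range 3, s ^ m / m.factorial = 1 + s + s^2/2 := by
    rw [Finset.sum_range_succ, Finset.sum_range_succ, Finset.sum_range_succ]
    norm_num [Nat.factorial]
  rw [e] at this
  calc |Real.exp s - (1 + s + s^2/2)| ≤ |s|^3 * (4/((3:ℕ).factorial * 3)) := this
    _ = (2/9) * |s|^3 := by norm_num [Nat.factorial]; ring


lemma gm_pos (a s : ℝ) : 0 < gm a s := Real.exp_pos _
lemma gp_pos (a s : ℝ) : 0 < gp a s := Real.exp_pos _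

lemma exp_quad_bound {s : ℝ} (h : |s| ≤ 1) :
    |Real.exp s - (1 + s)| ≤ (3/4) * s^2 := by
  have := Real.exp_bound h (by norm_num : 0 < 2)
  have e : ∑ m ∈ Finset.range 2, s ^ m / m.factorial = 1 + s := by
    rw [Finset.sum_range_succ, Finset.sum_range_succ]
    norm_num [Nat.factorial]
  rw [e] at this
  calc |Real.exp s - (1 + s)| ≤ |s|^2 * (3/((2:ℕ).factorial * 2)) := this
    _ = (3/4) * s^2 := by rw [sq_abs]; norm_num [Nat.factorial]; ring

lemma gp_le_gm {a s : ℝ} (ha : 0 ≤ a) (hs : 0 ≤ s) : gp a s ≤ gm a s := by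
  have h1 : s ≤ Real.sinh s := Real.self_le_sinh_iff.mpr hs
  rw [Real.sinh_eq] at h1
  exact Real.exp_le_exp.mpr (by nlinarith)

lemma gm_sub_gp_le {a s : ℝ} (ha : 0 ≤ a) (h0 : 0 ≤ s) (h1 : s ≤ 1) :
    gm a s - gp a s ≤ a * ((4/9)*s^3) * Real.exp (-((5/18)*(a*s^2))) := by
  have habs : |s| ≤ 1 := by rwa [abs_of_nonneg h0]
  have habs' : |(-s)| ≤ 1 := by rwa [abs_neg]
  have c1 := exp_cubic_bound habs
  have c2 := exp_cubic_bound habs'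
  rw [abs_le] at c1 c2
  rw [abs_neg, abs_of_nonneg h0] at c2
  simp only [abs_of_nonneg h0] at c1 c2
  set Gm : ℝ := Real.exp (-s) - 1 + s with hGm
  set Gp : ℝ := Real.exp s - 1 - s with hGp
  have hdiff : Gp - Gm ≤ (4/9) * s^3 := by simp only [hGm, hGp]; nlinarith
  have hdiff0 : 0 ≤ Gp - Gm := by
    have h1' : s ≤ Real.sinh s := Real.self_le_sinh_iff.mpr h0
    rw [Real.sinh_eq] at h1'
    simp only [hGm, hGp]; nlinarith
  have hlow : (5/18) * s^2 ≤ Gm := by simp only [hGm]; nlinarith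
  have key : gm a s - gp a s ≤ Real.exp (-(a * Gm)) * (a * (Gp - Gm)) := by
    have e1 : gp a s = Real.exp (-(a*Gm)) * Real.exp (-(a*(Gp - Gm))) := by
      rw [gp, ← Real.exp_add]; ring_nf; rw [hGp]; ring_nf
    have e2 : gm a s = Real.exp (-(a*Gm)) := rfl
    rw [e1, e2]
    have h3 : 1 - Real.exp (-(a*(Gp-Gm))) ≤ a*(Gp-Gm) := by
      nlinarith [Real.add_one_le_exp (-(a*(Gp-Gm)))]
    nlinarith [Real.exp_pos (-(a*Gm)), Real.exp_pos (-(a*(Gp-Gm)))]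
  refine key.trans ?_
  have e3 : Real.exp (-(a * Gm)) ≤ Real.exp (-((5/18)*(a*s^2))) := by
    apply Real.exp_le_exp.mpr; nlinarith
  have e4 : 0 ≤ a * (Gp - Gm) := by positivity
  calc Real.exp (-(a * Gm)) * (a * (Gp - Gm))
      ≤ Real.exp (-((5/18)*(a*s^2))) * (a * ((4/9)*s^3)) := by
        apply mul_le_mul e3 (by nlinarith) e4 (Real.exp_pos _).le
    _ = a * ((4/9)*s^3) * Real.exp (-((5/18)*(a*s^2))) := by ring

lemma gm_le {a s : ℝ} (ha : 0 ≤ a) : gm a s ≤ Real.exp a * Real.exp (-(a*s)) := by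
  rw [gm, ← Real.exp_add]
  apply Real.exp_le_exp.mpr
  nlinarith [Real.exp_pos (-s), mul_nonneg ha (Real.exp_pos (-s)).le]

lemma gp_le {a s : ℝ} (ha : 0 ≤ a) : gp a s ≤ Real.exp a * Real.exp (-(a*s)) := by
  rw [gp, ← Real.exp_add]
  apply Real.exp_le_exp.mpr
  have h2 : 2 * s ≤ Real.exp s := by
    have h := Real.add_one_le_exp (s/2)
    have e : Real.exp (s/2) * Real.exp (s/2) = Real.exp s := by
      rw [← Real.exp_add]; ring_nf
    nlinarith [Real.exp_pos s, Real.exp_pos (s/2), sq_nonneg (1 - s/2), sq_nonneg (1 + s/2),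
      mul_le_mul_of_nonneg_left h (Real.exp_pos (s/2)).le]
  nlinarith

lemma gp_ge_third {a s : ℝ} (h0 : 0 ≤ s) (h1 : s ≤ 1) (h2 : a * s^2 ≤ 1) (ha : 0 ≤ a) :
    (1/3 : ℝ) ≤ gp a s := by
  have habs : |s| ≤ 1 := by rwa [abs_of_nonneg h0]
  have hq := exp_quad_bound habs
  rw [abs_le] at hq
  have hple : a * (Real.exp s - 1 - s) ≤ 1 := by nlinarith
  have h5 : Real.exp (-1 : ℝ) ≤ gp a s := Real.exp_le_exp.mpr (by linarith)
  refine le_trans ?_ h5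
  rw [Real.exp_neg]
  have h9 : Real.exp 1 ≤ 3 := le_trans Real.exp_one_lt_d9.le (by norm_num)
  have h10 := inv_anti₀ (Real.exp_pos 1) h9
  have h11 : (3:ℝ)⁻¹ = 1/3 := by norm_num
  linarith

lemma image_left {a : ℝ} (ha : 0 < a) :
    (fun s => a * Real.exp (-s)) '' (Ioi 0) = Ioo 0 a := by
  ext t
  simp only [mem_image, mem_Ioo, mem_Ioi]
  constructor
  · rintro ⟨s, hs, rfl⟩
    refine ⟨by positivity, ?_⟩
    have h1 : Real.exp (-s) < 1 := Real.exp_lt_one_iff.mpr (by linarith)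
    nlinarith
  · rintro ⟨h0, h1⟩
    refine ⟨Real.log (a / t), Real.log_pos ((one_lt_div h0).mpr h1), ?_⟩
    rw [← Real.log_inv, Real.exp_log (by positivity)]
    field_simp
  
lemma image_right {a : ℝ} (ha : 0 < a) :
    (fun s => a * Real.exp s) '' (Ioi 0) = Ioi a := by
  ext t
  simp only [mem_image, mem_Ioi]
  constructor
  · rintro ⟨s, hs, rfl⟩
    have h1 : 1 < Real.exp s := Real.one_lt_exp_iff.mpr hs
    nlinarith
  · intro h1
    have h0 : 0 < t := ha.trans h1
    refine ⟨Real.log (t / a), Real.log_pos ((one_lt_div ha).mpr h1), ?_⟩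
    rw [Real.exp_log (by positivity)]
    field_simp

lemma integrable_gm {a : ℝ} (ha : 0 < a) : IntegrableOn (gm a) (Ioi 0) := by
  apply Integrable.mono' (((exp_neg_integrableOn_Ioi 0 ha)).const_mul (Real.exp a))
  · apply Continuous.aestronglyMeasurable
    unfold gm; fun_prop
  · filter_upwards with x
    rw [Real.norm_eq_abs, abs_of_pos (gm_pos a x)]
    simpa [neg_mul] using gm_le (a := a) (s := x) ha.le

lemma integrable_gp {a : ℝ} (ha : 0 < a) : IntegrableOn (gp a) (Ioi 0) := by
  apply Integrable.mono' (((exp_neg_integrableOn_Ioi 0 ha)).const_mul (Real.exp a))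
  · apply Continuous.aestronglyMeasurable
    unfold gp; fun_prop
  · filter_upwards with x
    rw [Real.norm_eq_abs, abs_of_pos (gp_pos a x)]
    simpa [neg_mul] using gp_le (a := a) (s := x) ha.le

lemma cov_left {a : ℝ} (ha : 0 < a) :
    ∫ t in Ioo 0 a, t ^ (a-1) * Real.exp (-t)
      = (a ^ a * Real.exp (-a)) * ∫ s in Ioi 0, gm a s := by
  have hderiv : ∀ x ∈ Ioi (0:ℝ), HasDerivWithinAt (fun s => a * Real.exp (-s))
      (-(a * Real.exp (-x))) (Ioi 0) x := by
    intro x _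
    have h : HasDerivAt (fun s : ℝ => a * Real.exp (-s)) (a * (Real.exp (-x) * (-1))) x :=
      ((hasDerivAt_neg x).exp).const_mul a
    exact (h.congr_deriv (by ring)).hasDerivWithinAt
  have hinj : InjOn (fun s => a * Real.exp (-s)) (Ioi 0) := by
    intro x _ y _ h
    simp only at h
    have := mul_left_cancel₀ (ne_of_gt ha) h
    have := Real.exp_eq_exp.mp this
    linarith
  have := integral_image_eq_integral_abs_deriv_smul measurableSet_Ioi hderiv hinj
    (fun t => t ^ (a-1) * Real.exp (-t))
  rw [image_left ha] at this
  rw [this, ← MeasureTheory.integral_const_mul]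
  apply setIntegral_congr_fun measurableSet_Ioi
  intro s _
  have hE : (0:ℝ) < Real.exp (-s) := Real.exp_pos _
  have ht : 0 < a * Real.exp (-s) := by positivity
  simp only [smul_eq_mul, abs_neg, abs_of_pos ht]
  have h1 : (a * Real.exp (-s)) * (a * Real.exp (-s)) ^ (a-1) = (a*Real.exp (-s)) ^ a := by
    nth_rewrite 1 [← Real.rpow_one (a * Real.exp (-s))]
    rw [← Real.rpow_add ht]; ring_nf
  have h2 : (a*Real.exp (-s)) ^ a = a ^ a * Real.exp (-s) ^ a := Real.mul_rpow ha.le hE.le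
  have h3 : Real.exp (-s) ^ a = Real.exp (-s * a) := (Real.exp_mul (-s) a).symm
  calc a * Real.exp (-s) * ((a * Real.exp (-s)) ^ (a - 1) * Real.exp (-(a * Real.exp (-s))))
      = (a * Real.exp (-s)) * (a * Real.exp (-s)) ^ (a-1) * Real.exp (-(a * Real.exp (-s))) := by
        ring
    _ = a ^ a * (Real.exp (-s * a) * Real.exp (-(a * Real.exp (-s)))) := by
        rw [h1, h2, h3]; ring
    _ = a ^ a * Real.exp (-a) * gm a s := by
        rw [gm, mul_assoc]
        congr 1
        rw [← Real.exp_add, ← Real.exp_add]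
        congr 1
        ring

lemma cov_right {a : ℝ} (ha : 0 < a) :
    ∫ t in Ioi a, t ^ (a-1) * Real.exp (-t)
      = (a ^ a * Real.exp (-a)) * ∫ s in Ioi 0, gp a s := by
  have hderiv : ∀ x ∈ Ioi (0:ℝ), HasDerivWithinAt (fun s => a * Real.exp s)
      (a * Real.exp x) (Ioi 0) x := by
    intro x _
    exact ((Real.hasDerivAt_exp x).const_mul a).hasDerivWithinAt
  have hinj : InjOn (fun s => a * Real.exp s) (Ioi 0) := by
    intro x _ y _ h
    simp only at h
    have := mul_left_cancel₀ (ne_of_gt ha) h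
    exact Real.exp_eq_exp.mp this
  have := integral_image_eq_integral_abs_deriv_smul measurableSet_Ioi hderiv hinj
    (fun t => t ^ (a-1) * Real.exp (-t))
  rw [image_right ha] at this
  rw [this, ← MeasureTheory.integral_const_mul]
  apply setIntegral_congr_fun measurableSet_Ioi
  intro s _
  have hE : (0:ℝ) < Real.exp s := Real.exp_pos _
  have ht : 0 < a * Real.exp s := by positivity
  simp only [smul_eq_mul, abs_of_pos ht]
  have h1 : (a * Real.exp s) * (a * Real.exp s) ^ (a-1) = (a*Real.exp s) ^ a := by
    nth_rewrite 1 [← Real.rpow_one (a * Real.exp s)]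
    rw [← Real.rpow_add ht]; ring_nf
  have h2 : (a*Real.exp s) ^ a = a ^ a * Real.exp s ^ a := Real.mul_rpow ha.le hE.le
  have h3 : Real.exp s ^ a = Real.exp (s * a) := (Real.exp_mul s a).symm
  calc (a * Real.exp s) * ((a * Real.exp s) ^ (a - 1) * Real.exp (-(a * Real.exp s)))
      = (a * Real.exp s) * (a * Real.exp s) ^ (a-1) * Real.exp (-(a * Real.exp s)) := by ring
    _ = a ^ a * (Real.exp (s * a) * Real.exp (-(a * Real.exp s))) := by
        rw [h1, h2, h3]; ring
    _ = a ^ a * Real.exp (-a) * gp a s := by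
        rw [gp, mul_assoc]
        congr 1
        rw [← Real.exp_add, ← Real.exp_add]
        congr 1
        ring

lemma integral_exp_tail {a : ℝ} (ha : 0 < a) :
    ∫ s in Ioi (1:ℝ), Real.exp a * Real.exp (-(a*s)) = 1/a := by
  have hint : IntegrableOn (fun s : ℝ => Real.exp (-(a*s))) (Ioi 1) := by
    simpa [neg_mul] using exp_neg_integrableOn_Ioi 1 ha
  have hderiv : ∀ x ∈ Ioi (1:ℝ), HasDerivAt (fun x : ℝ => -(Real.exp (-(a*x)))/a)
      (Real.exp (-(a*x))) x := by
    intro x _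
    have h : HasDerivAt (fun x : ℝ => -(a*x)) (-(a*1)) x := ((hasDerivAt_id x).const_mul a).neg
    have h2 := (h.exp.neg).div_const a
    exact h2.congr_deriv (by rw [div_eq_iff ha.ne']; ring)
  have htend : Tendsto (fun x : ℝ => -(Real.exp (-(a*x)))/a) atTop (nhds 0) := by
    have h1 : Tendsto (fun x : ℝ => -(a*x)) atTop atBot := by
      apply tendsto_neg_atTop_atBot.comp
      exact Tendsto.const_mul_atTop ha tendsto_id
    have h2 : Tendsto (fun x : ℝ => Real.exp (-(a*x))) atTop (nhds 0) :=
      Real.tendsto_exp_atBot.comp h1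
    simpa using (h2.neg).div_const a
  have hcont : ContinuousWithinAt (fun x : ℝ => -(Real.exp (-(a*x)))/a) (Ici 1) 1 :=
    Continuous.continuousWithinAt (by fun_prop)
  have key := integral_Ioi_of_hasDerivAt_of_tendsto hcont hderiv hint htend
  rw [MeasureTheory.integral_const_mul, key]
  rw [zero_sub, neg_div, neg_neg, mul_one, ← mul_div_assoc, ← Real.exp_add]
  have e0 : a + -a = 0 := by ring
  rw [e0, Real.exp_zero]

lemma integral_gauss_lin {b : ℝ} (hb : 0 < b) :
    ∫ s in Ioi (0:ℝ), s * Real.exp (-(b*s^2)) = 1/(2*b) := by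
  have hint : IntegrableOn (fun s : ℝ => s * Real.exp (-(b*s^2))) (Ioi 0) := by
    simpa [neg_mul] using (integrable_mul_exp_neg_mul_sq hb).integrableOn
  have hderiv : ∀ x ∈ Ioi (0:ℝ), HasDerivAt (fun x : ℝ => -(Real.exp (-(b*x^2)))/(2*b))
      (x * Real.exp (-(b*x^2))) x := by
    intro x _
    have h : HasDerivAt (fun x : ℝ => b*x^2) (b*(2*x^1)) x :=
      ((hasDerivAt_pow 2 x).const_mul b).congr_deriv (by norm_num)
    have h2 := (h.neg.exp.neg).div_const (2*b)
    exact h2.congr_deriv (by rw [div_eq_iff (by positivity)]; simp only [Pi.neg_apply]; ring)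
  have htend : Tendsto (fun x : ℝ => -(Real.exp (-(b*x^2)))/(2*b)) atTop (nhds 0) := by
    have h1 : Tendsto (fun x : ℝ => -(b*x^2)) atTop atBot := by
      apply tendsto_neg_atTop_atBot.comp
      exact Tendsto.const_mul_atTop hb (tendsto_pow_atTop two_ne_zero)
    have h2 : Tendsto (fun x : ℝ => Real.exp (-(b*x^2))) atTop (nhds 0) :=
      Real.tendsto_exp_atBot.comp h1
    simpa using (h2.neg).div_const (2*b)
  have hcont : ContinuousWithinAt (fun x : ℝ => -(Real.exp (-(b*x^2)))/(2*b)) (Ici 0) 0 :=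
    Continuous.continuousWithinAt (by fun_prop)
  have key := integral_Ioi_of_hasDerivAt_of_tendsto hcont hderiv hint htend
  rw [key]
  have e0 : -(b * (0:ℝ)^2) = 0 := by ring
  rw [e0, Real.exp_zero]
  field_simp
  ring

lemma AB_est {a : ℝ} (ha4 : 4 ≤ a) :
    (∫ s in Ioi 0, gm a s) - (∫ s in Ioi 0, gp a s) ≤ 13/a := by
  have ha : 0 < a := by linarith
  have igm := integrable_gm ha
  have igp := integrable_gp ha
  have isub : IntegrableOn (fun s => gm a s - gp a s) (Ioi 0) := igm.sub igp
  have hb : (0:ℝ) < (5/36)*a := by linarith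
  have igauss : IntegrableOn (fun s : ℝ => s * Real.exp (-((5/36)*a*s^2))) (Ioi 0) := by
    simpa [neg_mul, mul_assoc] using (integrable_mul_exp_neg_mul_sq hb).integrableOn
  have itail : IntegrableOn (fun s : ℝ => Real.exp a * Real.exp (-(a*s))) (Ioi 1) := by
    apply Integrable.const_mul
    exact (by simpa [neg_mul] using exp_neg_integrableOn_Ioi 1 ha : IntegrableOn (fun s : ℝ => Real.exp (-(a*s))) (Ioi 1))
  rw [← MeasureTheory.integral_sub igm igp]
  have hsplit : Ioi (0:ℝ) = Ioc 0 1 ∪ Ioi 1 := (Ioc_union_Ioi_eq_Ioi zero_le_one).symm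
  rw [hsplit, setIntegral_union (Ioc_disjoint_Ioi le_rfl) measurableSet_Ioi
      (isub.mono_set Ioc_subset_Ioi_self) (isub.mono_set (Ioi_subset_Ioi zero_le_one))]
  have part1 : ∫ s in Ioc (0:ℝ) 1, (gm a s - gp a s) ≤ 12/a := by
    have step1 : ∫ s in Ioc (0:ℝ) 1, (gm a s - gp a s)
        ≤ ∫ s in Ioc (0:ℝ) 1, (16/5) * (s * Real.exp (-((5/36)*a*s^2))) := by
      apply setIntegral_mono_on (isub.mono_set Ioc_subset_Ioi_self)
        (MeasureTheory.IntegrableOn.mono_set (igauss.const_mul _) Ioc_subset_Ioi_self)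
        measurableSet_Ioc
      intro x hx
      obtain ⟨hx0, hx1⟩ := hx
      refine (gm_sub_gp_le ha.le hx0.le hx1).trans ?_
      have e1 : Real.exp (-((5/18)*(a*x^2)))
          = Real.exp (-((5/36)*a*x^2)) * Real.exp (-((5/36)*a*x^2)) := by
        rw [← Real.exp_add]; congr 1; ring
      have e2 : (5/36)*a*x^2 * Real.exp (-((5/36)*a*x^2)) ≤ 1 := by
        have h1 := Real.add_one_le_exp ((5/36)*a*x^2)
        have h2 := Real.exp_pos ((5/36)*a*x^2)
        have h3 : Real.exp (-((5/36)*a*x^2)) = (Real.exp ((5/36)*a*x^2))⁻¹ := Real.exp_neg _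
        rw [h3, mul_inv_le_iff₀ h2]
        nlinarith
      have e4 : a * ((4/9)*x^3) * Real.exp (-((5/18)*(a*x^2)))
          = ((16/5) * (x * Real.exp (-((5/36)*a*x^2)))) * ((5/36)*a*x^2 * Real.exp (-((5/36)*a*x^2))) := by
        rw [e1]; ring
      rw [e4]
      apply mul_le_of_le_one_right (by positivity) e2
    have step2 : ∫ s in Ioc (0:ℝ) 1, (16/5) * (s * Real.exp (-((5/36)*a*s^2)))
        ≤ ∫ s in Ioi (0:ℝ), (16/5) * (s * Real.exp (-((5/36)*a*s^2))) := by
      apply setIntegral_mono_set (igauss.const_mul _)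
      · apply (ae_restrict_iff' measurableSet_Ioi).mpr
        apply ae_of_all
        intro x hx
        have : (0:ℝ) < x := hx
        positivity
      · exact HasSubset.Subset.eventuallyLE Ioc_subset_Ioi_self
    have step3 : ∫ s in Ioi (0:ℝ), (16/5) * (s * Real.exp (-((5/36)*a*s^2)))
        = (16/5) * (1/(2*((5/36)*a))) := by
      rw [MeasureTheory.integral_const_mul, integral_gauss_lin hb]
    refine step1.trans (step2.trans ?_)
    rw [step3]
    rw [show (16/5:ℝ) * (1/(2*((5/36)*a))) = 288/(25*a) from by field_simp; ring]
    rw [div_le_div_iff₀ (by positivity) ha]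
    nlinarith
  have part2 : ∫ s in Ioi (1:ℝ), (gm a s - gp a s) ≤ 1/a := by
    have step1 : ∫ s in Ioi (1:ℝ), (gm a s - gp a s)
        ≤ ∫ s in Ioi (1:ℝ), Real.exp a * Real.exp (-(a*s)) := by
      apply setIntegral_mono_on (isub.mono_set (Ioi_subset_Ioi zero_le_one)) itail measurableSet_Ioi
      intro x _
      have := gm_le (a := a) (s := x) ha.le
      have := gp_pos a x
      linarith
    rw [integral_exp_tail ha] at step1
    exact step1
  have : (12:ℝ)/a + 1/a = 13/a := by field_simp; ring
  linarith

lemma B_lb {a : ℝ} (ha4 : 4 ≤ a) : 1/(3*Real.sqrt a) ≤ ∫ s in Ioi 0, gp a s := by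
  have ha : 0 < a := by linarith
  have hsq1 : 1 ≤ Real.sqrt a := by
    rw [show (1:ℝ) = Real.sqrt 1 from Real.sqrt_one.symm]
    exact Real.sqrt_le_sqrt (by linarith)
  have hsq0 : 0 < Real.sqrt a := by linarith
  set u := (Real.sqrt a)⁻¹ with hu
  have hu0 : 0 < u := by positivity
  have hu1 : u ≤ 1 := by
    rw [hu]
    exact inv_le_one_of_one_le₀ hsq1
  have husq : a * u^2 = 1 := by
    rw [hu, inv_pow, Real.sq_sqrt ha.le]
    field_simp
  have step1 : ∫ _ in Ioc (0:ℝ) u, (1/3:ℝ) ≤ ∫ s in Ioc (0:ℝ) u, gp a s := by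
    apply setIntegral_mono_on (integrableOn_const (by rw [Real.volume_Ioc]; exact ENNReal.ofReal_ne_top))
      ((integrable_gp ha).mono_set Ioc_subset_Ioi_self) measurableSet_Ioc
    intro x hx
    obtain ⟨hx0, hxu⟩ := hx
    apply gp_ge_third hx0.le (hxu.trans hu1) ?_ ha.le
    have hxx : x^2 ≤ u^2 := by nlinarith
    calc a * x^2 ≤ a * u^2 := mul_le_mul_of_nonneg_left hxx ha.le
      _ = 1 := husq
  have step2 : ∫ _ in Ioc (0:ℝ) u, (1/3:ℝ) = u/3 := by
    rw [setIntegral_const, measureReal_def, Real.volume_Ioc, smul_eq_mul, ENNReal.toReal_ofReal (by linarith)]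
    ring
  have step3 : ∫ s in Ioc (0:ℝ) u, gp a s ≤ ∫ s in Ioi (0:ℝ), gp a s := by
    apply setIntegral_mono_set (integrable_gp ha)
    · exact Filter.Eventually.of_forall (fun x => (gp_pos a x).le)
    · exact HasSubset.Subset.eventuallyLE Ioc_subset_Ioi_self
  have : 1/(3*Real.sqrt a) = u/3 := by rw [hu]; field_simp
  rw [this]
  linarith [step1, step3]

lemma GammaSplit {a : ℝ} (ha : 0 < a) :
    Real.Gamma a = (∫ t in Ioo 0 a, t^(a-1) * Real.exp (-t))
      + ∫ t in Ioi a, t^(a-1) * Real.exp (-t) := by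
  rw [Real.Gamma_eq_integral ha]
  have hint : IntegrableOn (fun x : ℝ => x^(a-1) * Real.exp (-x)) (Ioi 0) := by
    have h := Real.GammaIntegral_convergent ha
    rwa [show (fun x : ℝ => Real.exp (-x) * x^(a-1)) = fun x : ℝ => x^(a-1) * Real.exp (-x)
      from funext fun x => mul_comm _ _] at h
  rw [show (fun x : ℝ => Real.exp (-x) * x^(a-1)) = fun x : ℝ => x^(a-1) * Real.exp (-x)
      from funext fun x => mul_comm _ _]
  rw [← integral_Ioc_eq_integral_Ioo,
    ← setIntegral_union (Ioc_disjoint_Ioi le_rfl) measurableSet_Ioi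
      (hint.mono_set Ioc_subset_Ioi_self) (hint.mono_set (Ioi_subset_Ioi ha.le)),
    Ioc_union_Ioi_eq_Ioi ha.le]

lemma value_eq {a : ℝ} (ha : 0 < a) :
    (∫ t in (0:ℝ)..a, t ^ (a - 1) * Real.exp (-t)) / Real.Gamma a
      = (∫ s in Ioi 0, gm a s) / ((∫ s in Ioi 0, gm a s) + ∫ s in Ioi 0, gp a s) := by
  rw [intervalIntegral.integral_of_le ha.le, integral_Ioc_eq_integral_Ioo, GammaSplit ha,
    cov_left ha, cov_right ha]
  have hc : 0 < a^a * Real.exp (-a) := by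
    have := Real.rpow_pos_of_pos ha a
    positivity
  rw [← mul_add, mul_div_mul_left _ _ (ne_of_gt hc)]

lemma sum_pos {a : ℝ} (ha : 0 < a) :
    0 < (∫ s in Ioi 0, gm a s) + ∫ s in Ioi 0, gp a s := by
  have hg := Real.Gamma_pos_of_pos ha
  rw [GammaSplit ha, cov_left ha, cov_right ha, ← mul_add] at hg
  have hc : 0 < a^a * Real.exp (-a) := by
    have := Real.rpow_pos_of_pos ha a
    positivity
  nlinarith

lemma lower_half {a : ℝ} (ha : 0 < a) :
    1/2 ≤ (∫ s in Ioi 0, gm a s) / ((∫ s in Ioi 0, gm a s) + ∫ s in Ioi 0, gp a s) := by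
  have hBA : (∫ s in Ioi 0, gp a s) ≤ ∫ s in Ioi 0, gm a s :=
    setIntegral_mono_on (integrable_gp ha) (integrable_gm ha) measurableSet_Ioi
      (fun x hx => gp_le_gm ha.le (le_of_lt hx))
  rw [le_div_iff₀ (sum_pos ha)]
  linarith

end RIG

/-- The infimum over `a > 0` of the regularized lower incomplete Gamma function
`(∫₀^a t^(a-1) e^(-t) dt)/Γ(a)` equals `1/2`. -/
theorem inf_reg_inc_gamma_at_mean_eq_half :
    sInf { y : ℝ | ∃ a : ℝ, 0 < a ∧
      y = (∫ t in (0:ℝ)..a, t ^ (a - 1) * Real.exp (-t)) / Real.Gamma a } = 1 / 2 := by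
  set S := { y : ℝ | ∃ a : ℝ, 0 < a ∧
      y = (∫ t in (0:ℝ)..a, t ^ (a - 1) * Real.exp (-t)) / Real.Gamma a } with hS
  have hlb : ∀ y ∈ S, 1/2 ≤ y := by
    rintro y ⟨a, ha, rfl⟩
    rw [RIG.value_eq ha]
    exact RIG.lower_half ha
  have hne : S.Nonempty :=
    ⟨(∫ t in (0:ℝ)..1, t ^ ((1:ℝ) - 1) * Real.exp (-t)) / Real.Gamma 1, 1, one_pos, rfl⟩
  have hbdd : BddBelow S := ⟨1/2, hlb⟩
  apply le_antisymm
  · apply le_of_forall_pos_le_add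
    intro ε hε
    set a := max 4 ((10/ε)^2) with ha_def
    have ha4 : (4:ℝ) ≤ a := le_max_left _ _
    have ha : 0 < a := by linarith
    have hsqrt : 10/ε ≤ Real.sqrt a := by
      calc 10/ε = Real.sqrt ((10/ε)^2) := (Real.sqrt_sq (by positivity)).symm
        _ ≤ Real.sqrt a := Real.sqrt_le_sqrt (le_max_right _ _)
    have hs0 : 0 < Real.sqrt a := Real.sqrt_pos.mpr ha
    have hAB := RIG.AB_est ha4
    have hB := RIG.B_lb ha4
    have hBA : (∫ s in Set.Ioi 0, RIG.gp a s) ≤ ∫ s in Set.Ioi 0, RIG.gm a s :=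
      MeasureTheory.setIntegral_mono_on (RIG.integrable_gp ha) (RIG.integrable_gm ha)
        measurableSet_Ioi (fun x hx => RIG.gp_le_gm ha.le (le_of_lt hx))
    set A := ∫ s in Set.Ioi 0, RIG.gm a s
    set B := ∫ s in Set.Ioi 0, RIG.gp a s
    have hBpos : 0 < B := lt_of_lt_of_le (by positivity) hB
    have hSpos : 0 < A + B := by linarith
    have hkey : A/(A+B) ≤ 1/2 + ε := by
      rw [div_le_iff₀ hSpos]
      have hmm : a = Real.sqrt a * Real.sqrt a := (Real.mul_self_sqrt ha.le).symm
      have h15 : 10 ≤ Real.sqrt a * ε := by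
        rw [div_le_iff₀ hε] at hsqrt
        linarith
      have h13 : 13/a ≤ 4*ε/(3*Real.sqrt a) := by
        rw [div_le_div_iff₀ ha (by positivity)]
        nlinarith [mul_le_mul_of_nonneg_right h15 hs0.le, hmm, hs0]
      have h14 : 4*ε/(3*Real.sqrt a) ≤ 4*ε*B := by
        have h4 : 4*ε/(3*Real.sqrt a) = (4*ε) * (1/(3*Real.sqrt a)) := by ring
        rw [h4]
        exact mul_le_mul_of_nonneg_left hB (by positivity)
      have hchain : A - B ≤ 4*ε*B := le_trans hAB (h13.trans h14)
      nlinarith [mul_le_mul_of_nonneg_left hBA hε.le]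
    have hmemS : A/(A+B) ∈ S := by
      refine ⟨a, ha, ?_⟩
      rw [RIG.value_eq ha]
    calc sInf S ≤ A/(A+B) := csInf_le hbdd hmemS
      _ ≤ 1/2 + ε := hkey
  · exact le_csInf hne hlb
end
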